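/- arXiv:1302.3498 — 11 statements merged into one kernel-verified Lean document; each statement's English description precedes it below -/
import Mathlib

section
/- Let G = C_n(D) and H = C_m(F) be circulant graphs. Then the lexicographic product G[H] is isomorphic to the circulant C_{nm}(T), where T = ⋃_{j=0}^{m−1} (D + jn) ∪ nF, with D + jn = { d + jn : d ∈ D } and nF = { n·f : f ∈ F }. -/
open SimpleGraph Finset

/-- The circulant graph `C_n(D)` on vertex set `ZMod n` with distance set
`D ⊆ {1, …, n-1}`: distinct vertices `i, j` are adjacent iff `(i - j) mod n ∈ D`. -/
def circulant (n : ℕ) (D : Finset ℕ) : SimpleGraph (ZMod n) :=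
  SimpleGraph.fromRel (fun i j => (i - j).val ∈ D)

/-- A graph is a CIS graph if every maximal clique and every maximal stable set
(equivalently, every maximal clique of the complement) intersect. -/
def SimpleGraph.IsCIS {V : Type*} (G : SimpleGraph V) : Prop :=
  ∀ C S : Set V, Maximal G.IsClique C → Maximal Gᶜ.IsClique S → (C ∩ S).Nonempty

/-- The distance set `{d ∈ {1,…,n-1} : a ∣ d ∧ a*b ∤ d}` of a pair `(a, b)`. -/
def pairedD (n a b : ℕ) : Finset ℕ :=
  (Finset.Icc 1 (n - 1)).filter (fun d => a ∣ d ∧ ¬ (a * b) ∣ d)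

/-- The `k`-paired circulant `C(n; a_1,b_1; …; a_k,b_k)` (index type `ι`). -/
def pairedCirculant (n : ℕ) {ι : Type*} [Fintype ι] (a b : ι → ℕ) : SimpleGraph (ZMod n) :=
  circulant n (Finset.univ.biUnion (fun i => pairedD n (a i) (b i)))

/-- The lexicographic product of two simple graphs. -/
def lexProd {α β : Type*} (G : SimpleGraph α) (H : SimpleGraph β) : SimpleGraph (α × β) where
  Adj p q := G.Adj p.1 q.1 ∨ (p.1 = q.1 ∧ H.Adj p.2 q.2)
  symm := by
    constructor
    intro p q h
    rcases h with h | ⟨h1, h2⟩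
    · exact Or.inl h.symm
    · exact Or.inr ⟨h1.symm, h2.symm⟩
  loopless := by
    constructor
    intro p h
    rcases h with h | ⟨_, h⟩
    · exact G.irrefl h
    · exact H.irrefl h


section helpers
variable {n m : ℕ} [NeZero n] [NeZero m]

lemma phiVal (u : ZMod n) (x : ZMod m) :
    ((u.val + n * x.val : ℕ) : ZMod (n * m)).val = u.val + n * x.val := by
  apply ZMod.val_natCast_of_lt
  have h1 : u.val < n := ZMod.val_lt u
  have h2 : x.val < m := ZMod.val_lt x
  have h3 : n * (x.val + 1) ≤ n * m := Nat.mul_le_mul_left n h2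
  have h4 : n * (x.val + 1) = n * x.val + n := by ring
  omega

lemma subModN (u v : ZMod n) (x y : ZMod m) :
    (((u.val + n * x.val : ℕ) : ZMod (n * m)) - ((v.val + n * y.val : ℕ) : ZMod (n * m))).val % n
      = (u - v).val := by
  have hdvd : n ∣ n * m := ⟨m, rfl⟩
  set p : ZMod (n*m) := ((u.val + n * x.val : ℕ) : ZMod (n * m)) with hp
  set q : ZMod (n*m) := ((v.val + n * y.val : ℕ) : ZMod (n * m)) with hq
  have key : (((p - q).val : ℕ) : ZMod n) = u - v := by
    have h1 : (((p - q).val : ℕ) : ZMod n) = ZMod.castHom hdvd (ZMod n) (p - q) := by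
      rw [ZMod.castHom_apply, ← ZMod.natCast_val]
    rw [h1, map_sub]
    have hpu : ZMod.castHom hdvd (ZMod n) p = u := by
      rw [hp, map_natCast]
      push_cast
      simp [ZMod.natCast_val, ZMod.natCast_self]
    have hqv : ZMod.castHom hdvd (ZMod n) q = v := by
      rw [hq, map_natCast]
      push_cast
      simp [ZMod.natCast_val, ZMod.natCast_self]
    rw [hpu, hqv]
  have := congrArg ZMod.val key
  rwa [ZMod.val_natCast] at this

lemma subEqMul (u : ZMod n) (x y : ZMod m) :
    ((u.val + n * x.val : ℕ) : ZMod (n * m)) - ((u.val + n * y.val : ℕ) : ZMod (n * m))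
      = ((n * (x - y).val : ℕ) : ZMod (n * m)) := by
  have hd : (m : ℤ) ∣ (((x - y).val : ℤ) - ((x.val : ℤ) - (y.val : ℤ))) := by
    have h0 : (((((x - y).val : ℤ) - ((x.val : ℤ) - (y.val : ℤ))) : ℤ) : ZMod m) = 0 := by
      push_cast
      simp [ZMod.natCast_val]
    exact (ZMod.intCast_zmod_eq_zero_iff_dvd _ _).mp h0
  obtain ⟨k, hk⟩ := hd
  have hnm : ((n : ZMod (n * m)) * (m : ZMod (n * m))) = 0 := by
    rw [← Nat.cast_mul]; exact ZMod.natCast_self _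
  have hstep : ((n * (x - y).val : ℕ) : ℤ) =
      (n : ℤ) * x.val - (n : ℤ) * y.val + (n : ℤ) * m * k := by
    push_cast
    linear_combination (n : ℤ) * hk
  have hc := congrArg (fun z : ℤ => (z : ZMod (n * m))) hstep
  push_cast at hc ⊢
  linear_combination (-1 : ZMod (n * m)) * hc - (k : ZMod (n * m)) * hnm
end helpers

/-- The lexicographic product of `C_n(D)` and `C_m(F)` is isomorphic to the
circulant `C_{nm}(T)` with `T = ⋃_{j=0}^{m-1} (D + jn) ∪ nF`. -/
theorem stmt_3 (n m : ℕ) (hn : 0 < n) (hm : 0 < m) (D F : Finset ℕ)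
    (hD : D ⊆ Finset.Icc 1 (n - 1)) (hDsym : ∀ d ∈ D, n - d ∈ D)
    (hF : F ⊆ Finset.Icc 1 (m - 1)) (hFsym : ∀ f ∈ F, m - f ∈ F) :
    Nonempty (lexProd (circulant n D) (circulant m F) ≃g
      circulant (n * m)
        ((Finset.range m).biUnion (fun j => D.image (· + j * n)) ∪ F.image (n * ·))) := by
  classical
  haveI : NeZero n := ⟨hn.ne'⟩
  haveI : NeZero m := ⟨hm.ne'⟩
  set T : Finset ℕ :=
    ((Finset.range m).biUnion (fun j => D.image (· + j * n)) ∪ F.image (n * ·)) with hTdef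
  have hT : ∀ e : ℕ, e < n * m → (e ∈ T ↔ e % n ∈ D ∨ ∃ f ∈ F, e = n * f) := by
    intro e he
    constructor
    · intro hmem
      rcases Finset.mem_union.mp hmem with h | h
      · obtain ⟨j, hj, h⟩ := Finset.mem_biUnion.mp h
        obtain ⟨d, hd', hde⟩ := Finset.mem_image.mp h
        left
        have hd1 := hD hd'
        rw [Finset.mem_Icc] at hd1
        have hdn : d < n := by omega
        have : e % n = d := by
          rw [← hde]
          simp [Nat.add_mul_mod_self_right, Nat.mod_eq_of_lt hdn]
        rwa [this]
      · obtain ⟨f, hf', hfe⟩ := Finset.mem_image.mp h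
        right; exact ⟨f, hf', hfe.symm⟩
    · rintro (h | ⟨f, hf', rfl⟩)
      · apply Finset.mem_union_left
        apply Finset.mem_biUnion.mpr
        refine ⟨e / n, Finset.mem_range.mpr ?_, Finset.mem_image.mpr ⟨e % n, h, ?_⟩⟩
        · exact (Nat.div_lt_iff_lt_mul hn).mpr (by rwa [Nat.mul_comm m n])
        · exact Nat.mod_add_div' e n
      · exact Finset.mem_union_right _ (Finset.mem_image.mpr ⟨f, hf', rfl⟩)
  set φ : ZMod n × ZMod m → ZMod (n * m) :=
    (fun p => ((p.1.val + n * p.2.val : ℕ) : ZMod (n * m))) with hphi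
  have hval : ∀ p : ZMod n × ZMod m, (φ p).val = p.1.val + n * p.2.val :=
    fun p => phiVal p.1 p.2
  have hinj : Function.Injective φ := by
    rintro ⟨u, x⟩ ⟨v, y⟩ h
    have h' : u.val + n * x.val = v.val + n * y.val := by
      have := congrArg ZMod.val h
      rwa [hval, hval] at this
    have h1 : u.val = v.val := by
      have h2 := congrArg (· % n) h'
      simpa [Nat.add_mul_mod_self_left, Nat.mod_eq_of_lt (ZMod.val_lt u),
        Nat.mod_eq_of_lt (ZMod.val_lt v)] using h2
    have h2 : x.val = y.val := Nat.eq_of_mul_eq_mul_left hn (by omega)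
    exact Prod.ext (ZMod.val_injective n h1) (ZMod.val_injective m h2)
  have hbij : Function.Bijective φ := by
    rw [Fintype.bijective_iff_injective_and_card]
    refine ⟨hinj, ?_⟩
    simp [ZMod.card]
  have hD0 : (0 : ℕ) ∉ D := fun h => by simpa using hD h
  have hF0 : (0 : ℕ) ∉ F := fun h => by simpa using hF h
  have hKey : ∀ (u v : ZMod n) (x y : ZMod m),
      (φ (u, x) - φ (v, y)).val ∈ T ↔ ((u - v).val ∈ D ∨ (u = v ∧ (x - y).val ∈ F)) := by
    intro u v x y
    have hlt : (φ (u, x) - φ (v, y)).val < n * m := ZMod.val_lt _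
    rw [hT _ hlt]
    have hA : (φ (u, x) - φ (v, y)).val % n = (u - v).val := subModN u v x y
    have hev : ∀ w z : ZMod m, (φ (u, w) - φ (u, z)).val = n * (w - z).val := by
      intro w z
      have hB : φ (u, w) - φ (u, z) = ((n * (w - z).val : ℕ) : ZMod (n * m)) := subEqMul u w z
      have hlt2 : n * (w - z).val < n * m :=
        (mul_lt_mul_iff_right₀ hn).mpr (ZMod.val_lt _)
      rw [hB]
      exact ZMod.val_natCast_of_lt hlt2
    constructor
    · rintro (h | ⟨f, hf, hef⟩)
      · left; rwa [hA] at h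
      · have hz : (u - v).val = 0 := by rw [← hA, hef, Nat.mul_mod_right]
        have huv : u = v := sub_eq_zero.mp ((ZMod.val_eq_zero _).mp hz)
        subst huv
        right
        refine ⟨rfl, ?_⟩
        rw [hev x y] at hef
        have : (x - y).val = f := Nat.eq_of_mul_eq_mul_left hn hef
        rwa [this]
    · rintro (h | ⟨rfl, h⟩)
      · left; rwa [hA]
      · right
        exact ⟨(x - y).val, h, (hev x y)⟩
  refine ⟨⟨Equiv.ofBijective φ hbij, ?_⟩⟩
  rintro ⟨u, x⟩ ⟨v, y⟩
  show (circulant (n * m) T).Adj (φ (u, x)) (φ (v, y)) ↔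
    ((circulant n D).Adj u v ∨ (u = v ∧ (circulant m F).Adj x y))
  simp only [circulant, SimpleGraph.fromRel_adj]
  rw [hKey u v x y, hKey v u y x]
  have hne : φ (u, x) ≠ φ (v, y) ↔ (u, x) ≠ (v, y) := hinj.ne_iff
  rw [hne]
  by_cases huv : u = v
  · subst huv
    have hx0 : x = y → ¬ (x - y).val ∈ F := by rintro rfl; simpa using hF0
    have hy0 : y = x → ¬ (y - x).val ∈ F := by rintro rfl; simpa using hF0
    simp only [sub_self, ZMod.val_zero, hD0, ne_eq, Prod.mk.injEq, true_and, eq_comm]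
    tauto
  · have hvu : ¬ v = u := fun h => huv h.symm
    simp only [huv, hvu, false_and, or_false, ne_eq, Prod.mk.injEq, not_and]
    try tauto
end

section
/- Every 1-paired circulant C(n; a, b) is a CIS graph; that is, for all positive integers n, a, b with a·b ∣ n, the circulant C_n(D) with D = { d ∈ {1,…,n−1} : a ∣ d and a·b ∤ d } is a CIS graph. -/
open SimpleGraph Finset

/-- Every 1-paired circulant `C(n; a, b)` is a CIS graph. -/
theorem stmt_4 (n a b : ℕ) (hn : 0 < n) (ha : 0 < a) (hb : 0 < b) (hab : a * b ∣ n) :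
    (circulant n (pairedD n a b)).IsCIS := by
  haveI : NeZero n := ⟨hn.ne'⟩
  haveI : NeZero a := ⟨ha.ne'⟩
  haveI : NeZero (a*b) := ⟨(Nat.mul_pos ha hb).ne'⟩
  have hadvd : a ∣ n := dvd_trans (dvd_mul_right a b) hab
  set G : SimpleGraph (ZMod n) := circulant n (pairedD n a b) with hG
  set φ : ZMod n →+* ZMod a := ZMod.castHom hadvd (ZMod a) with hφ
  set ψ : ZMod n →+* ZMod (a*b) := ZMod.castHom hab (ZMod (a*b)) with hψ
  set πb : ZMod (a*b) →+* ZMod a := ZMod.castHom (dvd_mul_right a b) (ZMod a) with hπb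
  have hφval : ∀ x : ZMod n, φ x = (x.val : ZMod a) := fun x => by
    rw [hφ, ZMod.castHom_apply, ZMod.natCast_val]
  have hψval : ∀ x : ZMod n, ψ x = (x.val : ZMod (a*b)) := fun x => by
    rw [hψ, ZMod.castHom_apply, ZMod.natCast_val]
  have hdvdφ : ∀ x : ZMod n, a ∣ x.val ↔ φ x = 0 := fun x => by
    rw [hφval, ZMod.natCast_eq_zero_iff]
  have hdvdψ : ∀ x : ZMod n, a*b ∣ x.val ↔ ψ x = 0 := fun x => by
    rw [hψval, ZMod.natCast_eq_zero_iff]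
  have hπ : ∀ x : ZMod n, πb (ψ x) = φ x := fun x => by
    rw [hψval, hφval, map_natCast]
  -- the adjacency characterization
  have hφsub : ∀ i j : ZMod n, a ∣ (i - j).val ↔ φ i = φ j := fun i j => by
    rw [hdvdφ, map_sub, sub_eq_zero]
  have hψsub : ∀ i j : ZMod n, a*b ∣ (i - j).val ↔ ψ i = ψ j := fun i j => by
    rw [hdvdψ, map_sub, sub_eq_zero]
  have hmem : ∀ i j : ZMod n, i ≠ j →
      ((i - j).val ∈ pairedD n a b ↔ (φ i = φ j ∧ ψ i ≠ ψ j)) := by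
    intro i j hne
    rw [pairedD, Finset.mem_filter, Finset.mem_Icc]
    constructor
    · rintro ⟨-, h1, h2⟩
      exact ⟨(hφsub i j).mp h1, fun he => h2 ((hψsub i j).mpr he)⟩
    · rintro ⟨h1, h2⟩
      have hsub0 : i - j ≠ 0 := sub_ne_zero.mpr hne
      refine ⟨⟨Nat.one_le_iff_ne_zero.mpr (fun h => hsub0 (((i-j).val_eq_zero).mp h)), ?_⟩,
        (hφsub i j).mpr h1, fun hd => h2 ((hψsub i j).mp hd)⟩
      exact Nat.le_sub_one_of_lt (ZMod.val_lt _)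
  have hadj : ∀ i j : ZMod n, G.Adj i j ↔ (φ i = φ j ∧ ψ i ≠ ψ j) := by
    intro i j
    rw [hG, circulant, SimpleGraph.fromRel_adj]
    constructor
    · rintro ⟨hne, h | h⟩
      · exact (hmem i j hne).mp h
      · obtain ⟨h1, h2⟩ := (hmem j i hne.symm).mp h
        exact ⟨h1.symm, fun he => h2 he.symm⟩
    · rintro ⟨h1, h2⟩
      have hne : i ≠ j := fun h => h2 (by rw [h])
      exact ⟨hne, Or.inl ((hmem i j hne).mpr ⟨h1, h2⟩)⟩
  -- main argument
  intro C S hC hS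
  have hCne : C.Nonempty := by
    by_contra h
    rw [Set.not_nonempty_iff_eq_empty] at h
    have hcl : G.IsClique {(0 : ZMod n)} := Set.pairwise_singleton _ _
    have := hC.2 hcl (h ▸ Set.empty_subset _) (Set.mem_singleton _)
    rw [h] at this
    exact this
  obtain ⟨c0, hc0⟩ := hCne
  have hCφ : ∀ ⦃x⦄, x ∈ C → ∀ ⦃y⦄, y ∈ C → φ x = φ y := by
    intro x hx y hy
    by_cases hxy : x = y
    · rw [hxy]
    · exact ((hadj x y).mp (hC.1 hx hy hxy)).1
  -- Claim: C hits every ψ-fiber over φ c0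
  have hclaim3 : ∀ t : ZMod (a*b), πb t = φ c0 → ∃ c ∈ C, ψ c = t := by
    intro t hxt
    by_contra h
    push_neg at h
    set x : ZMod n := (t.val : ZMod n) with hx
    have hψx : ψ x = t := by
      rw [hx, map_natCast, ZMod.natCast_val, ZMod.cast_id]
    have hx_notin : x ∉ C := fun hxC => h x hxC hψx
    have hclique : G.IsClique (insert x C) := by
      apply hC.1.insert
      intro y hy hne
      rw [hadj]
      refine ⟨?_, ?_⟩
      · rw [← hπ x, hψx, hxt]
        exact hCφ hc0 hy
      · rw [hψx]
        exact fun he => h y hy he.symm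
    exact hx_notin (hC.2 hclique (Set.subset_insert x C) (Set.mem_insert x C))
  -- Claim: S meets the component of c0
  have hclaim4 : ∃ s ∈ S, φ s = φ c0 := by
    by_contra h
    push_neg at h
    have hc0S : c0 ∉ S := fun hc0S => h c0 hc0S rfl
    have hclique : Gᶜ.IsClique (insert c0 S) := by
      apply hS.1.insert
      intro s hsS hne
      rw [SimpleGraph.compl_adj]
      refine ⟨hne, fun hGadj => ?_⟩
      exact h s hsS (((hadj c0 s).mp hGadj).1.symm)
    exact hc0S (hS.2 hclique (Set.subset_insert c0 S) (Set.mem_insert c0 S))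
  obtain ⟨s0, hs0S, hs0φ⟩ := hclaim4
  obtain ⟨c, hcC, hψc⟩ := hclaim3 (ψ s0) (by rw [hπ, hs0φ])
  -- c ∈ S
  have hcS : c ∈ S := by
    by_contra hcS
    have hclique : Gᶜ.IsClique (insert c S) := by
      apply hS.1.insert
      intro s hsS hne
      rw [SimpleGraph.compl_adj]
      refine ⟨hne, fun hGadj => ?_⟩
      obtain ⟨hφcs, hψcs⟩ := (hadj c s).mp hGadj
      have hss0 : ψ s = ψ s0 := by
        by_cases h' : s = s0
        · rw [h']
        · have hcompl := hS.1 hsS hs0S h'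
          rw [SimpleGraph.compl_adj] at hcompl
          have hnadj := hcompl.2
          rw [hadj] at hnadj
          push_neg at hnadj
          apply hnadj
          rw [← hφcs, ← hπ c, hψc, hπ]
      exact hψcs (by rw [hψc, ← hss0])
    exact hcS (hS.2 hclique (Set.subset_insert c S) (Set.mem_insert c S))
  exact ⟨c, hcC, hcS⟩
end

section
/- Let G = C(n; a_1,b_1; a_2,b_2) be a 2-paired circulant that is connected and whose complement is connected. Then G is a CIS graph if and only if gcd(a_1·b_1, a_2·b_2) = 1. -/
open SimpleGraph Finset

-- Bezout-based CRT for non-coprime moduli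
lemma crt2 (m1 m2 : ℕ) (x y : ℤ) (h : (Nat.gcd m1 m2 : ℤ) ∣ x - y) :
    ∃ v : ℤ, (m1:ℤ) ∣ v - x ∧ (m2:ℤ) ∣ v - y := by
  obtain ⟨k, hk⟩ := h
  have hg : ((Nat.gcd m1 m2 : ℕ) : ℤ) = (m1:ℤ) * Int.gcdA m1 m2 + (m2:ℤ) * Int.gcdB m1 m2 := by
    have := Int.gcd_eq_gcd_ab (m1:ℤ) (m2:ℤ)
    simpa using this
  refine ⟨x - (m1:ℤ) * (Int.gcdA m1 m2) * k, ⟨-(Int.gcdA m1 m2 * k), by ring⟩, ?_⟩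
  refine ⟨(Int.gcdB m1 m2) * k, ?_⟩
  have : x - y = ((Nat.gcd m1 m2 : ℕ) : ℤ) * k := hk
  rw [hg] at this
  linear_combination this

lemma cast_val_natCast {n m : ℕ} [NeZero n] (hm : m ∣ n) (z : ZMod n) :
    ((z.val : ℕ) : ZMod m) = ZMod.castHom hm (ZMod m) z := by
  rw [ZMod.castHom_apply, ZMod.natCast_val]

lemma dvd_sub_val_iff {n m : ℕ} [NeZero n] (hm : m ∣ n) (v w : ZMod n) :
    (m ∣ (v - w).val) ↔ (v.val : ZMod m) = (w.val : ZMod m) := by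
  rw [← ZMod.natCast_eq_zero_iff]
  rw [cast_val_natCast hm, cast_val_natCast hm, cast_val_natCast hm, map_sub]
  constructor
  · intro h; exact sub_eq_zero.mp h
  · intro h; rw [h]; ring

lemma natCast_val_self {m : ℕ} [NeZero m] (z : ZMod m) : ((z.val : ℕ) : ZMod m) = z := by
  rw [ZMod.natCast_val, ZMod.cast_id]

lemma int_dvd_val_sub {n m : ℕ} [NeZero n] (hm : m ∣ n) (V : ℤ) :
    ((m:ℤ)) ∣ (((V : ZMod n).val : ℤ) - V) := by
  have h1 : (((V : ZMod n).val : ℤ) : ZMod n) = (V : ZMod n) := by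
    push_cast
    rw [natCast_val_self]
  have : ((((V : ZMod n).val : ℤ) - V : ℤ) : ZMod n) = 0 := by
    push_cast [h1]
    ring
  have hn : (n:ℤ) ∣ (((V : ZMod n).val : ℤ) - V) := (ZMod.intCast_zmod_eq_zero_iff_dvd _ n).mp this
  exact dvd_trans (Int.natCast_dvd_natCast.mpr hm) hn

lemma natCast_val_eq_iff_int {n m : ℕ} [NeZero n] [NeZero m] (v : ZMod n) (x : ZMod m)
    (h : (m:ℤ) ∣ ((v.val : ℤ) - (x.val : ℤ))) : ((v.val : ℕ) : ZMod m) = x := by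
  have : (((v.val : ℤ) - (x.val : ℤ) : ℤ) : ZMod m) = 0 :=
    (ZMod.intCast_zmod_eq_zero_iff_dvd _ m).mpr h
  push_cast at this
  have h2 : ((v.val : ℕ) : ZMod m) = ((x.val : ℕ) : ZMod m) := by
    push_cast
    linear_combination this
  rw [h2, natCast_val_self]

lemma exists_vertex {n m1 m2 : ℕ} [NeZero n] (h1 : m1 ∣ n) (h2 : m2 ∣ n)
    [NeZero m1] [NeZero m2]
    (x : ZMod m1) (y : ZMod m2)
    (h : ((x.val : ℕ) : ZMod (Nat.gcd m1 m2)) = ((y.val : ℕ) : ZMod (Nat.gcd m1 m2))) :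
    ∃ v : ZMod n, ((v.val : ℕ) : ZMod m1) = x ∧ ((v.val : ℕ) : ZMod m2) = y := by
  have hdvd : ((Nat.gcd m1 m2 : ℕ) : ℤ) ∣ ((x.val : ℤ) - (y.val : ℤ)) := by
    have := (ZMod.natCast_eq_natCast_iff _ _ _).mp h
    exact_mod_cast (Nat.ModEq.dvd this.symm)
  obtain ⟨V, hV1, hV2⟩ := crt2 m1 m2 (x.val : ℤ) (y.val : ℤ) hdvd
  refine ⟨(V : ZMod n), ?_, ?_⟩
  · apply natCast_val_eq_iff_int
    have := int_dvd_val_sub (n := n) h1 V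
    have := dvd_add this hV1
    simpa using this
  · apply natCast_val_eq_iff_int
    have := int_dvd_val_sub (n := n) h2 V
    have := dvd_add this hV2
    simpa using this

section Adj
variable {n a1 b1 a2 b2 : ℕ}

/-- membership of a difference in one pairedD, for `v ≠ w`. -/
lemma mem_pairedD_iff {a b : ℕ} [NeZero n] (hab : a * b ∣ n) (v w : ZMod n) (hvw : v ≠ w) :
    (v - w).val ∈ pairedD n a b ↔
      (((v.val : ℕ) : ZMod a) = ((w.val : ℕ) : ZMod a) ∧
        ((v.val : ℕ) : ZMod (a*b)) ≠ ((w.val : ℕ) : ZMod (a*b))) := by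
  have ha : a ∣ n := dvd_trans (Dvd.intro b rfl) hab
  have hsub : v - w ≠ 0 := sub_ne_zero.mpr hvw
  have hval0 : (v - w).val ≠ 0 := fun h => hsub ((ZMod.val_eq_zero _).mp h)
  have hlt : (v - w).val < n := ZMod.val_lt _
  simp only [pairedD, Finset.mem_filter, Finset.mem_Icc]
  constructor
  · rintro ⟨-, hdvd, hndvd⟩
    refine ⟨(dvd_sub_val_iff ha v w).mp hdvd, ?_⟩
    intro heq
    exact hndvd ((dvd_sub_val_iff hab v w).mpr heq)
  · rintro ⟨h1, h2⟩
    refine ⟨⟨Nat.one_le_iff_ne_zero.mpr hval0, Nat.le_sub_one_of_lt hlt⟩,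
      (dvd_sub_val_iff ha v w).mpr h1, fun hd => h2 ((dvd_sub_val_iff hab v w).mp hd)⟩

lemma circ_adj [NeZero n] (h1 : a1 * b1 ∣ n) (h2 : a2 * b2 ∣ n) (v w : ZMod n) :
    (circulant n (pairedD n a1 b1 ∪ pairedD n a2 b2)).Adj v w ↔ v ≠ w ∧
      ((((v.val : ℕ) : ZMod a1) = ((w.val : ℕ) : ZMod a1) ∧
        ((v.val : ℕ) : ZMod (a1*b1)) ≠ ((w.val : ℕ) : ZMod (a1*b1))) ∨
       (((v.val : ℕ) : ZMod a2) = ((w.val : ℕ) : ZMod a2) ∧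
        ((v.val : ℕ) : ZMod (a2*b2)) ≠ ((w.val : ℕ) : ZMod (a2*b2)))) := by
  rw [circulant, SimpleGraph.fromRel_adj]
  constructor
  · rintro ⟨hne, hmem⟩
    refine ⟨hne, ?_⟩
    rcases hmem with hmem | hmem <;> rw [Finset.mem_union] at hmem
    · rcases hmem with hm | hm
      · exact Or.inl ((mem_pairedD_iff h1 v w hne).mp hm)
      · exact Or.inr ((mem_pairedD_iff h2 v w hne).mp hm)
    · rcases hmem with hm | hm
      · have := (mem_pairedD_iff h1 w v hne.symm).mp hm
        exact Or.inl ⟨this.1.symm, fun h => this.2 h.symm⟩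
      · have := (mem_pairedD_iff h2 w v hne.symm).mp hm
        exact Or.inr ⟨this.1.symm, fun h => this.2 h.symm⟩
  · rintro ⟨hne, hor⟩
    refine ⟨hne, Or.inl ?_⟩
    rw [Finset.mem_union]
    rcases hor with h | h
    · exact Or.inl ((mem_pairedD_iff h1 v w hne).mpr h)
    · exact Or.inr ((mem_pairedD_iff h2 v w hne).mpr h)

end Adj

section Graphs
variable {V : Type*} {G : SimpleGraph V}

lemma mem_of_insert_clique {C : Set V} (hC : Maximal G.IsClique C) {u : V}
    (h : G.IsClique (insert u C)) : u ∈ C :=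
  hC.2 h (Set.subset_insert u C) (Set.mem_insert u C)

lemma clique_insert_of_adj {C : Set V} (hC : G.IsClique C) {u : V}
    (h : ∀ v ∈ C, v ≠ u → G.Adj u v) : G.IsClique (insert u C) := by
  intro a ha b hb hab
  rcases ha with rfl | ha
  · rcases hb with rfl | hb
    · exact absurd rfl hab
    · exact h b hb (fun hh => hab hh.symm)
  · rcases hb with rfl | hb
    · exact (h a ha hab).symm
    · exact hC ha hb hab

lemma not_connected_of_invariant {n e : ℕ} (hn : 0 < n) (he : 2 ≤ e) (hedvd : e ∣ n)
    (G : SimpleGraph (ZMod n))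
    (h : ∀ v w : ZMod n, G.Adj v w → ((v.val : ℕ) : ZMod e) = ((w.val : ℕ) : ZMod e)) :
    ¬ G.Connected := by
  intro hc
  have hn2 : 2 ≤ n := le_trans he (Nat.le_of_dvd hn hedvd)
  haveI : NeZero n := ⟨by omega⟩
  haveI : Fact (1 < n) := ⟨by omega⟩
  have hreach := hc.preconnected (0 : ZMod n) 1
  obtain ⟨p⟩ := hreach
  have key : ∀ {u v2 : ZMod n} (_ : G.Walk u v2), ((u.val : ℕ) : ZMod e) = ((v2.val : ℕ) : ZMod e) := by
    intro u v2 p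
    induction p with
    | nil => rfl
    | cons hadj _ ih => exact (h _ _ hadj).trans ih
  have h01 := key p
  have hv0 : (0 : ZMod n).val = 0 := ZMod.val_zero
  have hv1 : (1 : ZMod n).val = 1 := ZMod.val_one n
  rw [hv0, hv1] at h01
  simp only [Nat.cast_zero, Nat.cast_one] at h01
  have hdvd1 : (e : ℕ) ∣ 1 := by
    have := (ZMod.natCast_eq_zero_iff 1 e).mp (by simpa using h01.symm)
    exact this
  have := Nat.le_of_dvd one_pos hdvd1
  omega
end Graphs

section NotCIS
variable {V : Type*} {G : SimpleGraph V}

lemma not_cis_of_cover (C : Set V) (hC : Maximal G.IsClique C) (S0 : Set V)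
    (hS0 : Gᶜ.IsClique S0) (hcov : ∀ v ∈ C, ∃ z ∈ S0, G.Adj z v) : ¬ G.IsCIS := by
  intro hcis
  -- extend S0 to a maximal stable set via Zorn
  obtain ⟨S, hsub, hmax⟩ := zorn_subset_nonempty {T : Set V | Gᶜ.IsClique T ∧ S0 ⊆ T}
    (by
      intro c hc hchain hne
      refine ⟨⋃₀ c, ⟨?_, ?_⟩, fun s hs => Set.subset_sUnion_of_mem hs⟩
      · intro a ha b hb hab
        obtain ⟨sa, hsa, haa⟩ := ha
        obtain ⟨sb, hsb, hbb⟩ := hb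
        rcases hchain.total hsa hsb with h | h
        · exact (hc hsb).1 (h haa) hbb hab
        · exact (hc hsa).1 haa (h hbb) hab
      · obtain ⟨s, hs⟩ := hne
        exact (hc hs).2.trans (Set.subset_sUnion_of_mem hs))
    S0 ⟨hS0, subset_rfl⟩
  have hSmax : Maximal Gᶜ.IsClique S := by
    refine ⟨hmax.prop.1, fun T hT hST => ?_⟩
    exact hmax.le_of_ge ⟨hT, hmax.prop.2.trans hST⟩ hST
  obtain ⟨x, hxC, hxS⟩ := hcis C S hC hSmax
  obtain ⟨z, hzS0, hadj⟩ := hcov x hxC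
  have hzS : z ∈ S := hmax.prop.2 hzS0
  have : Gᶜ.Adj z x ∨ z = x := by
    by_cases h : z = x
    · exact Or.inr h
    · exact Or.inl (hSmax.1 hzS hxS h)
  rcases this with h | rfl
  · exact (G.compl_adj z x).mp h |>.2 hadj
  · exact G.irrefl hadj

end NotCIS

section Core
variable {V M1 M2 A1 A2 : Type*} {G : SimpleGraph V}

lemma stable_insert {S : Set V} (hS : Maximal Gᶜ.IsClique S) (u : V)
    (h : ∀ z ∈ S, z ≠ u → ¬ G.Adj u z) : u ∈ S := by
  apply mem_of_insert_clique hS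
  apply clique_insert_of_adj hS.1
  intro z hz hzu
  exact (G.compl_adj u z).mpr ⟨fun he => hzu he.symm, h z hz hzu⟩

lemma stable_struct {π1 : V → M1} {ρ1 : V → A1} {π2 : V → M2} {ρ2 : V → A2}
    (h_adj : ∀ v w, G.Adj v w ↔ v ≠ w ∧
      ((ρ1 v = ρ1 w ∧ π1 v ≠ π1 w) ∨ (ρ2 v = ρ2 w ∧ π2 v ≠ π2 w)))
    {S : Set V} (hS : Gᶜ.IsClique S) :
    ∀ z ∈ S, ∀ w ∈ S, ρ1 z = ρ1 w → π1 z = π1 w := by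
  intro z hz w hw hρ
  by_cases hzw : z = w
  · rw [hzw]
  · have hnadj : ¬ G.Adj z w := ((G.compl_adj z w).mp (hS hz hw hzw)).2
    by_contra hne
    exact hnadj ((h_adj z w).mpr ⟨hzw, Or.inl ⟨hρ, hne⟩⟩)

/-- every ρ1-class of any vertex is hit by a maximal stable set -/
lemma claimS (π1 : V → M1) (π2 : V → M2) (ρ1 : V → A1) (ρ2 : V → A2)
    (h_adj : ∀ v w, G.Adj v w ↔ v ≠ w ∧
      ((ρ1 v = ρ1 w ∧ π1 v ≠ π1 w) ∨ (ρ2 v = ρ2 w ∧ π2 v ≠ π2 w)))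
    (h_f1 : ∀ v w, π1 v = π1 w → ρ1 v = ρ1 w)
    (h_f2 : ∀ v w, π2 v = π2 w → ρ2 v = ρ2 w)
    (h_surj : ∀ v w : V, ∃ u, π1 u = π1 v ∧ π2 u = π2 w)
    {S : Set V} (hS : Maximal Gᶜ.IsClique S) (v0 : V) :
    ∃ w ∈ S, ρ1 w = ρ1 v0 := by
  by_contra hno
  push_neg at hno
  have hstab2 : ∀ z ∈ S, ∀ w ∈ S, ρ2 z = ρ2 w → π2 z = π2 w := by
    intro z hz w hw h
    exact stable_struct (π1 := π2) (ρ1 := ρ2) (π2 := π1) (ρ2 := ρ1)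
      (fun v w => by rw [h_adj v w]; tauto) hS.1 z hz w hw h
  by_cases hw0 : ∃ w0 ∈ S, ρ2 w0 = ρ2 v0
  · obtain ⟨w0, hw0S, hw0ρ⟩ := hw0
    obtain ⟨u, hu1, hu2⟩ := h_surj v0 w0
    have huS : u ∈ S := by
      apply stable_insert hS
      intro z hz hzu hadj
      rcases ((h_adj u z).mp hadj).2 with ⟨he, hne⟩ | ⟨he, hne⟩
      · exact hno z hz (he.symm.trans (h_f1 u v0 hu1))
      · have : π2 z = π2 w0 := hstab2 z hz w0 hw0S (he.symm.trans ((h_f2 u w0 hu2).trans hw0ρ) |>.trans hw0ρ.symm)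
        exact hne (hu2.trans this.symm)
    exact hno u huS (h_f1 u v0 hu1)
  · push_neg at hw0
    have hv0S : v0 ∈ S := by
      apply stable_insert hS
      intro z hz hzv hadj
      rcases ((h_adj v0 z).mp hadj).2 with ⟨he, hne⟩ | ⟨he, hne⟩
      · exact hno z hz he.symm
      · exact hw0 z hz he.symm
    exact hno v0 hv0S rfl

lemma core_cis (π1 : V → M1) (π2 : V → M2) (ρ1 : V → A1) (ρ2 : V → A2)
    (h_adj : ∀ v w, G.Adj v w ↔ v ≠ w ∧
      ((ρ1 v = ρ1 w ∧ π1 v ≠ π1 w) ∨ (ρ2 v = ρ2 w ∧ π2 v ≠ π2 w)))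
    (h_f1 : ∀ v w, π1 v = π1 w → ρ1 v = ρ1 w)
    (h_f2 : ∀ v w, π2 v = π2 w → ρ2 v = ρ2 w)
    (h_surj : ∀ v w : V, ∃ u, π1 u = π1 v ∧ π2 u = π2 w)
    {C S : Set V} (hC : Maximal G.IsClique C) (hS : Maximal Gᶜ.IsClique S)
    (hρ : ∀ v ∈ C, ∀ w ∈ C, ρ1 v = ρ1 w) (v0 : V) (hv0 : v0 ∈ C) :
    (C ∩ S).Nonempty := by
  have hstab1 := stable_struct h_adj hS.1
  have hstab2 : ∀ z ∈ S, ∀ w ∈ S, ρ2 z = ρ2 w → π2 z = π2 w := by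
    intro z hz w hw h
    exact stable_struct (π1 := π2) (ρ1 := ρ2) (π2 := π1) (ρ2 := ρ1)
      (fun v w => by rw [h_adj v w]; tauto) hS.1 z hz w hw h
  -- w1 in S with same ρ1-class as C
  obtain ⟨w1, hw1S, hw1ρ⟩ := claimS π1 π2 ρ1 ρ2 h_adj h_f1 h_f2 h_surj hS v0
  -- step1 : some v2 ∈ C with π1 v2 = π1 w1
  have step1 : ∃ v2 ∈ C, π1 v2 = π1 w1 := by
    by_contra hno
    push_neg at hno
    have : w1 ∈ C := by
      apply mem_of_insert_clique hC
      apply clique_insert_of_adj hC.1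
      intro v hv hvw
      refine (h_adj w1 v).mpr ⟨fun h => hvw h.symm, Or.inl ⟨hw1ρ.trans (hρ v0 hv0 v hv), fun h => hno v hv h.symm⟩⟩
    exact hno w1 this rfl
  obtain ⟨v2, hv2C, hv2π⟩ := step1
  -- w2 ∈ S with same ρ2-class as fiber of v2
  obtain ⟨w2, hw2S, hw2ρ⟩ := claimS π2 π1 ρ2 ρ1
    (fun v w => by rw [h_adj v w]; tauto)
    h_f2 h_f1 (fun v w => by obtain ⟨u, h1, h2⟩ := h_surj w v; exact ⟨u, h2, h1⟩) hS v2
  -- step3 : v3 ∈ C with both coordinates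
  have step3 : ∃ v3 ∈ C, π1 v3 = π1 v2 ∧ π2 v3 = π2 w2 := by
    obtain ⟨u, hu1, hu2⟩ := h_surj v2 w2
    by_contra hno
    push_neg at hno
    have huC : u ∈ C := by
      apply mem_of_insert_clique hC
      apply clique_insert_of_adj hC.1
      intro v hv hvu
      by_cases hπ : π1 v = π1 v2
      · -- same fiber: ρ2 v = ρ2 v2
        have hρ2v : ρ2 v = ρ2 v2 := by
          by_cases hvv2 : v = v2
          · rw [hvv2]
          · rcases ((h_adj v v2).mp (hC.1 hv hv2C hvv2)).2 with ⟨-, hne⟩ | ⟨he, -⟩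
            · exact absurd hπ hne
            · exact he
        have hπ2 : π2 v ≠ π2 w2 := fun h => hno v hv hπ h
        refine (h_adj u v).mpr ⟨fun h => hvu h.symm, Or.inr ?_⟩
        exact ⟨(h_f2 u w2 hu2).trans (hw2ρ.trans hρ2v.symm), by
          rw [hu2]; exact fun h => hπ2 h.symm⟩
      · refine (h_adj u v).mpr ⟨fun h => hvu h.symm, Or.inl ?_⟩
        refine ⟨(h_f1 u v2 hu1).trans (hρ v2 hv2C v hv), by rw [hu1]; exact fun h => hπ h.symm⟩
    exact hno u huC hu1 hu2
  obtain ⟨v3, hv3C, hv3π1, hv3π2⟩ := step3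
  -- step4 : v3 ∈ S
  have hv3S : v3 ∈ S := by
    apply stable_insert hS
    intro z hz hzv hadj
    rcases ((h_adj v3 z).mp hadj).2 with ⟨he, hne⟩ | ⟨he, hne⟩
    · have hzw1 : ρ1 z = ρ1 w1 := he.symm.trans ((hρ v3 hv3C v0 hv0).trans hw1ρ.symm)
      have hπz : π1 z = π1 v3 := (hstab1 z hz w1 hw1S hzw1).trans (hv2π.symm.trans hv3π1.symm)
      exact hne hπz.symm
    · have hzw2 : ρ2 z = ρ2 w2 := he.symm.trans (h_f2 v3 w2 hv3π2)
      have hπz : π2 z = π2 v3 := (hstab2 z hz w2 hw2S hzw2).trans hv3π2.symm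
      exact hne hπz.symm
  exact ⟨v3, hv3C, hv3S⟩

end Core

section Dich
variable {V M1 M2 A1 A2 : Type*} {G : SimpleGraph V}

lemma dichotomy {π1 : V → M1} {π2 : V → M2} {ρ1 : V → A1} {ρ2 : V → A2}
    (h_adj : ∀ v w, G.Adj v w ↔ v ≠ w ∧
      ((ρ1 v = ρ1 w ∧ π1 v ≠ π1 w) ∨ (ρ2 v = ρ2 w ∧ π2 v ≠ π2 w)))
    {C : Set V} (hC : G.IsClique C) :
    (∀ v ∈ C, ∀ w ∈ C, ρ1 v = ρ1 w) ∨ (∀ v ∈ C, ∀ w ∈ C, ρ2 v = ρ2 w) := by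
  by_contra hcon
  push_neg at hcon
  obtain ⟨⟨p, hp, q, hq, h1ne⟩, ⟨r, hr, s, hs, h2ne⟩⟩ := hcon
  have hpq : p ≠ q := fun h => h1ne (h ▸ rfl)
  have hρ2pq : ρ2 p = ρ2 q := by
    rcases ((h_adj p q).mp (hC hp hq hpq)).2 with ⟨he, -⟩ | ⟨he, -⟩
    · exact absurd he h1ne
    · exact he
  have key : ∀ r' ∈ C, ρ2 r' ≠ ρ2 p → False := by
    intro r' hr' hne
    have hr'p : r' ≠ p := fun h => hne (h ▸ rfl)
    have hr'q : r' ≠ q := fun h => hne (h ▸ hρ2pq.symm)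
    have e1 : ρ1 r' = ρ1 p := by
      rcases ((h_adj r' p).mp (hC hr' hp hr'p)).2 with ⟨he, -⟩ | ⟨he, -⟩
      · exact he
      · exact absurd he hne
    have e2 : ρ1 r' = ρ1 q := by
      rcases ((h_adj r' q).mp (hC hr' hq hr'q)).2 with ⟨he, -⟩ | ⟨he, -⟩
      · exact he
      · exact absurd (he.trans hρ2pq.symm) hne
    exact h1ne (e1.symm.trans e2)
  by_cases hrp : ρ2 r = ρ2 p
  · exact key s hs (fun h => h2ne (hrp.trans h.symm))
  · exact key r hr hrp

end Dich

section Suff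
variable {n a1 b1 a2 b2 : ℕ}

lemma cast_factor {m a : ℕ} (hd : a ∣ m) (z w : ℕ) (h : (z : ZMod m) = (w : ZMod m)) :
    (z : ZMod a) = (w : ZMod a) := by
  have := congrArg (ZMod.castHom hd (ZMod a)) h
  simpa using this

lemma suff_cis (hn : 0 < n) (ha1 : 0 < a1) (hb1 : 0 < b1) (ha2 : 0 < a2) (hb2 : 0 < b2)
    (h1 : a1 * b1 ∣ n) (h2 : a2 * b2 ∣ n)
    (hg : Nat.gcd (a1 * b1) (a2 * b2) = 1) :
    (circulant n (pairedD n a1 b1 ∪ pairedD n a2 b2)).IsCIS := by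
  haveI : NeZero n := ⟨hn.ne'⟩
  haveI : NeZero (a1 * b1) := ⟨(Nat.mul_pos ha1 hb1).ne'⟩
  haveI : NeZero (a2 * b2) := ⟨(Nat.mul_pos ha2 hb2).ne'⟩
  intro C S hC hS
  set G := circulant n (pairedD n a1 b1 ∪ pairedD n a2 b2) with hG
  set π1 : ZMod n → ZMod (a1 * b1) := fun v => ((v.val : ℕ) : ZMod (a1*b1)) with hπ1
  set π2 : ZMod n → ZMod (a2 * b2) := fun v => ((v.val : ℕ) : ZMod (a2*b2)) with hπ2
  set ρ1 : ZMod n → ZMod a1 := fun v => ((v.val : ℕ) : ZMod a1) with hρ1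
  set ρ2 : ZMod n → ZMod a2 := fun v => ((v.val : ℕ) : ZMod a2) with hρ2
  have h_adj : ∀ v w, G.Adj v w ↔ v ≠ w ∧
      ((ρ1 v = ρ1 w ∧ π1 v ≠ π1 w) ∨ (ρ2 v = ρ2 w ∧ π2 v ≠ π2 w)) :=
    fun v w => circ_adj h1 h2 v w
  have h_f1 : ∀ v w, π1 v = π1 w → ρ1 v = ρ1 w :=
    fun v w h => cast_factor (Dvd.intro b1 rfl) _ _ h
  have h_f2 : ∀ v w, π2 v = π2 w → ρ2 v = ρ2 w :=
    fun v w h => cast_factor (Dvd.intro b2 rfl) _ _ h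
  have h_surj : ∀ v w : ZMod n, ∃ u, π1 u = π1 v ∧ π2 u = π2 w := by
    intro v w
    obtain ⟨u, hu1, hu2⟩ := exists_vertex h1 h2 (π1 v) (π2 w) (by
      rw [hg]
      exact Subsingleton.elim _ _)
    exact ⟨u, hu1, hu2⟩
  -- C is nonempty
  have hCne : C.Nonempty := by
    by_contra hemp
    rw [Set.not_nonempty_iff_eq_empty] at hemp
    have h0 : G.IsClique {(0 : ZMod n)} := by
      intro a ha b hb hab
      rw [Set.mem_singleton_iff] at ha hb
      exact absurd (ha.trans hb.symm) hab
    have hsub := hC.2 h0 (by rw [hemp]; exact Set.empty_subset _)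
    have := hsub (Set.mem_singleton (0 : ZMod n))
    rw [hemp] at this
    exact this
  obtain ⟨v0, hv0⟩ := hCne
  rcases dichotomy h_adj hC.1 with hconst | hconst
  · exact core_cis π1 π2 ρ1 ρ2 h_adj h_f1 h_f2 h_surj hC hS hconst v0 hv0
  · exact core_cis π2 π1 ρ2 ρ1 (fun v w => by rw [h_adj v w]; tauto) h_f2 h_f1
      (fun v w => by obtain ⟨u, hh1, hh2⟩ := h_surj w v; exact ⟨u, hh2, hh1⟩) hC hS hconst v0 hv0

end Suff

section Elim
variable {n a1 b1 a2 b2 : ℕ}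

lemma conn_inv {D : Finset ℕ} {e : ℕ} (hn : 0 < n) (he : 2 ≤ e) (hedvd : e ∣ n)
    (hD : ∀ d ∈ D, e ∣ d) : ¬ (circulant n D).Connected := by
  haveI : NeZero n := ⟨hn.ne'⟩
  apply not_connected_of_invariant hn he hedvd
  intro v w hadj
  rw [circulant, SimpleGraph.fromRel_adj] at hadj
  rcases hadj.2 with h | h
  · exact (dvd_sub_val_iff hedvd v w).mp (hD _ h)
  · exact ((dvd_sub_val_iff hedvd w v).mp (hD _ h)).symm

lemma coconn_inv {D : Finset ℕ} {e : ℕ} (hn : 0 < n) (he : 2 ≤ e) (hedvd : e ∣ n)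
    (hD : ∀ d, 1 ≤ d → d ≤ n - 1 → d ∉ D → e ∣ d) : ¬ (circulant n D)ᶜ.Connected := by
  haveI : NeZero n := ⟨hn.ne'⟩
  apply not_connected_of_invariant hn he hedvd
  intro v w hadj
  rw [SimpleGraph.compl_adj] at hadj
  obtain ⟨hne, hnadj⟩ := hadj
  rw [circulant, SimpleGraph.fromRel_adj] at hnadj
  have hmem : (v - w).val ∉ D := fun hm => hnadj ⟨hne, Or.inl hm⟩
  have hsub : v - w ≠ 0 := sub_ne_zero.mpr hne
  have hval0 : (v - w).val ≠ 0 := fun h => hsub ((ZMod.val_eq_zero _).mp h)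
  have hlt : (v - w).val < n := ZMod.val_lt _
  have := hD _ (Nat.one_le_iff_ne_zero.mpr hval0) (Nat.le_sub_one_of_lt hlt) hmem
  exact (dvd_sub_val_iff hedvd v w).mp this

lemma pairedD_b_one (a : ℕ) : pairedD n a 1 = ∅ := by
  ext d
  simp [pairedD]

lemma mem_pairedD_dvd {a b d : ℕ} (h : d ∈ pairedD n a b) : a ∣ d := by
  simp only [pairedD, Finset.mem_filter] at h
  exact h.2.1

lemma not_mem_pairedD {a b d : ℕ} (h1 : 1 ≤ d) (h2 : d ≤ n - 1) (h : d ∉ pairedD n a b)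
    (ha : a ∣ d) : a * b ∣ d := by
  simp only [pairedD, Finset.mem_filter, Finset.mem_Icc] at h
  push_neg at h
  exact h ⟨h1, h2⟩ ha

lemma necessity_params (hn : 0 < n) (ha1 : 0 < a1) (hb1 : 0 < b1) (ha2 : 0 < a2) (hb2 : 0 < b2)
    (h1 : a1 * b1 ∣ n) (h2 : a2 * b2 ∣ n)
    (hconn : (circulant n (pairedD n a1 b1 ∪ pairedD n a2 b2)).Connected)
    (hcoconn : (circulant n (pairedD n a1 b1 ∪ pairedD n a2 b2))ᶜ.Connected)
    (hg : Nat.gcd (a1 * b1) (a2 * b2) ≠ 1) :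
    2 ≤ a1 ∧ 2 ≤ a2 ∧ 2 ≤ b1 ∧ 2 ≤ b2 ∧ Nat.gcd a1 a2 = 1 := by
  have hm1 : a1 ∣ n := dvd_trans (Dvd.intro b1 rfl) h1
  have hm2 : a2 ∣ n := dvd_trans (Dvd.intro b2 rfl) h2
  have hb1' : b1 ∣ n := dvd_trans (Dvd.intro_left a1 rfl) h1
  have hb2' : b2 ∣ n := dvd_trans (Dvd.intro_left a2 rfl) h2
  -- b1 ≥ 2
  have hb1_2 : 2 ≤ b1 := by
    by_contra hb
    have hb1e : b1 = 1 := by omega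
    subst hb1e
    rw [pairedD_b_one, Finset.empty_union] at hconn hcoconn
    by_cases hb2e : b2 = 1
    · subst hb2e
      rw [pairedD_b_one] at hconn
      have hn1 : n = 1 := by
        by_contra hn1
        exact conn_inv hn (by omega) (dvd_refl n) (fun d hd => absurd hd (Finset.notMem_empty d)) hconn
      apply hg
      rw [Nat.eq_one_of_dvd_one (hn1 ▸ h1 : a1 * 1 ∣ 1)] at *
      have := Nat.eq_one_of_dvd_one (hn1 ▸ h2 : a2 * 1 ∣ 1)
      simp [this]
    · have hb2_2 : 2 ≤ b2 := by omega
      by_cases ha2e : a2 = 1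
      · subst ha2e
        refine absurd hcoconn (coconn_inv hn hb2_2 (by simpa using hb2') ?_)
        intro d hd1 hd2 hdmem
        have := not_mem_pairedD hd1 hd2 hdmem (one_dvd d)
        simpa using this
      · exact absurd hconn (conn_inv hn (by omega) hm2 (fun d hd => mem_pairedD_dvd hd))
  -- b2 ≥ 2 (symmetric)
  have hb2_2 : 2 ≤ b2 := by
    by_contra hb
    have hb2e : b2 = 1 := by omega
    subst hb2e
    rw [pairedD_b_one, Finset.union_empty] at hconn hcoconn
    by_cases ha1e : a1 = 1
    · subst ha1e
      refine absurd hcoconn (coconn_inv hn hb1_2 (by simpa using hb1') ?_)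
      intro d hd1 hd2 hdmem
      have := not_mem_pairedD hd1 hd2 hdmem (one_dvd d)
      simpa using this
    · exact absurd hconn (conn_inv hn (by omega) hm1 (fun d hd => mem_pairedD_dvd hd))
  -- a1 ≥ 2
  have ha1_2 : 2 ≤ a1 := by
    by_contra ha
    have ha1e : a1 = 1 := by omega
    subst ha1e
    refine absurd hcoconn (coconn_inv hn hb1_2 (by simpa using hb1') ?_)
    intro d hd1 hd2 hdmem
    rw [Finset.mem_union] at hdmem
    push_neg at hdmem
    have := not_mem_pairedD hd1 hd2 hdmem.1 (one_dvd d)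
    simpa using this
  have ha2_2 : 2 ≤ a2 := by
    by_contra ha
    have ha2e : a2 = 1 := by omega
    subst ha2e
    refine absurd hcoconn (coconn_inv hn hb2_2 (by simpa using hb2') ?_)
    intro d hd1 hd2 hdmem
    rw [Finset.mem_union] at hdmem
    push_neg at hdmem
    have := not_mem_pairedD hd1 hd2 hdmem.2 (one_dvd d)
    simpa using this
  -- gcd(a1,a2) = 1
  have hcop : Nat.gcd a1 a2 = 1 := by
    by_contra hq
    have hq2 : 2 ≤ Nat.gcd a1 a2 := by
      have h0 : 0 < Nat.gcd a1 a2 := Nat.gcd_pos_of_pos_left a2 ha1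
      omega
    refine absurd hconn (conn_inv hn hq2 (dvd_trans (Nat.gcd_dvd_left a1 a2) hm1) ?_)
    intro d hd
    rw [Finset.mem_union] at hd
    rcases hd with hd | hd
    · exact dvd_trans (Nat.gcd_dvd_left a1 a2) (mem_pairedD_dvd hd)
    · exact dvd_trans (Nat.gcd_dvd_right a1 a2) (mem_pairedD_dvd hd)
  exact ⟨ha1_2, ha2_2, hb1_2, hb2_2, hcop⟩

end Elim

section Fiber
variable {n m1 m2 : ℕ} [NeZero n]

lemma bridge {k m : ℕ} [NeZero m] (hd : k ∣ m) (z : ℕ) :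
    ((((z : ZMod m)).val : ℕ) : ZMod k) = (z : ZMod k) := by
  rw [ZMod.val_natCast]
  rw [ZMod.natCast_eq_natCast_iff]
  exact Nat.ModEq.of_dvd hd (Nat.mod_modEq z m)

lemma val_lt_lcm_inj (h1 : m1 ∣ n) (h2 : m2 ∣ n) {u v : ZMod n}
    (hu : u.val < Nat.lcm m1 m2) (hv : v.val < Nat.lcm m1 m2)
    (e1 : ((u.val : ℕ) : ZMod m1) = ((v.val : ℕ) : ZMod m1))
    (e2 : ((u.val : ℕ) : ZMod m2) = ((v.val : ℕ) : ZMod m2)) : u = v := by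
  have d1 : (m1:ℤ) ∣ ((v.val:ℤ) - (u.val:ℤ)) := Nat.ModEq.dvd ((ZMod.natCast_eq_natCast_iff _ _ _).mp e1)
  have d2 : (m2:ℤ) ∣ ((v.val:ℤ) - (u.val:ℤ)) := Nat.ModEq.dvd ((ZMod.natCast_eq_natCast_iff _ _ _).mp e2)
  have hlcm : ((Nat.lcm m1 m2 : ℕ):ℤ) ∣ ((v.val:ℤ) - (u.val:ℤ)) := by
    have := Int.lcm_dvd (Int.dvd_natAbs.mpr d1) (Int.dvd_natAbs.mpr d2)
    simpa [Int.lcm] using Int.natCast_dvd.mpr this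
  have h0 : ((v.val:ℤ) - (u.val:ℤ)) = 0 := by
    apply Int.eq_zero_of_abs_lt_dvd hlcm
    rw [abs_sub_lt_iff]
    constructor <;> [skip; skip] <;>
      · push_cast
        omega
  have : u.val = v.val := by omega
  exact ZMod.val_injective n this

lemma exists_in_fiber (h1 : m1 ∣ n) (h2 : m2 ∣ n) [NeZero m1] [NeZero m2]
    (x : ZMod m1) (y : ZMod m2)
    (h : ((x.val : ℕ) : ZMod (Nat.gcd m1 m2)) = ((y.val : ℕ) : ZMod (Nat.gcd m1 m2))) :
    ∃ v : ZMod n, v.val < Nat.lcm m1 m2 ∧ ((v.val : ℕ) : ZMod m1) = x ∧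
      ((v.val : ℕ) : ZMod m2) = y := by
  obtain ⟨v, hv1, hv2⟩ := exists_vertex h1 h2 x y h
  set L := Nat.lcm m1 m2 with hL
  have hLn : L ∣ n := Nat.lcm_dvd h1 h2
  have hLpos : 0 < L := Nat.lcm_pos (NeZero.pos m1) (NeZero.pos m2)
  have hLle : L ≤ n := Nat.le_of_dvd (NeZero.pos n) hLn
  refine ⟨((v.val % L : ℕ) : ZMod n), ?_, ?_, ?_⟩
  · rw [ZMod.val_cast_of_lt (lt_of_lt_of_le (Nat.mod_lt _ hLpos) hLle)]
    exact Nat.mod_lt _ hLpos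
  · rw [ZMod.val_cast_of_lt (lt_of_lt_of_le (Nat.mod_lt _ hLpos) hLle), ← hv1]
    rw [ZMod.natCast_eq_natCast_iff]
    exact Nat.ModEq.of_dvd (Nat.dvd_lcm_left m1 m2) (Nat.mod_modEq v.val L)
  · rw [ZMod.val_cast_of_lt (lt_of_lt_of_le (Nat.mod_lt _ hLpos) hLle), ← hv2]
    rw [ZMod.natCast_eq_natCast_iff]
    exact Nat.ModEq.of_dvd (Nat.dvd_lcm_right m1 m2) (Nat.mod_modEq v.val L)

end Fiber

section V1
variable {n a1 b1 a2 b2 : ℕ}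

lemma two_mul_le_of_dvd_of_lt {d a : ℕ} (hpos : 0 < d) (hdvd : d ∣ a) (hlt : d < a) :
    2 * d ≤ a := by
  obtain ⟨k, rfl⟩ := hdvd
  rcases Nat.lt_or_ge k 2 with hk | hk
  · interval_cases k <;> omega
  · calc 2 * d = d * 2 := by ring
    _ ≤ d * k := Nat.mul_le_mul_left d hk
lemma natCast_ne_zero_of_lt {a N : ℕ} (h0 : 0 < N) (hlt : N < a) : (N : ZMod a) ≠ 0 := by
  intro h
  have : a ∣ N := by
    haveI : NeZero a := ⟨by omega⟩
    exact (ZMod.natCast_eq_zero_iff N a).mp h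
  have := Nat.le_of_dvd h0 this
  omega

lemma notcis_v1 (hn : 0 < n) (ha1 : 2 ≤ a1) (ha2 : 2 ≤ a2)
    (hb1 : 2 ≤ b1) (hb2 : 2 ≤ b2) (h1 : a1 * b1 ∣ n) (h2 : a2 * b2 ∣ n)
    (hcop : Nat.gcd a1 a2 = 1)
    (hd2a : Nat.gcd a2 (Nat.gcd (a1 * b1) (a2 * b2)) < a2)
    (hd2g : Nat.gcd a2 (Nat.gcd (a1 * b1) (a2 * b2)) < Nat.gcd (a1 * b1) (a2 * b2)) :
    ¬ (circulant n (pairedD n a1 b1 ∪ pairedD n a2 b2)).IsCIS := by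
  haveI : NeZero n := ⟨hn.ne'⟩
  set m1 := a1 * b1 with hm1def
  set m2 := a2 * b2 with hm2def
  set g := Nat.gcd m1 m2 with hgdef
  set d1 := Nat.gcd a1 g with hd1def
  set d2 := Nat.gcd a2 g with hd2def
  set L := Nat.lcm m1 m2 with hLdef
  have hm1pos : 0 < m1 := by positivity
  have hm2pos : 0 < m2 := by positivity
  haveI : NeZero m1 := ⟨hm1pos.ne'⟩
  haveI : NeZero m2 := ⟨hm2pos.ne'⟩
  have hgpos : 0 < g := Nat.gcd_pos_of_pos_left m2 hm1pos
  have hd2pos : 0 < d2 := Nat.gcd_pos_of_pos_right a2 hgpos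
  have hd1pos : 0 < d1 := Nat.gcd_pos_of_pos_right a1 hgpos
  haveI : NeZero g := ⟨hgpos.ne'⟩
  have ha1m1 : a1 ∣ m1 := Dvd.intro b1 rfl
  have ha2m2 : a2 ∣ m2 := Dvd.intro b2 rfl
  have hgm1 : g ∣ m1 := Nat.gcd_dvd_left m1 m2
  have hgm2 : g ∣ m2 := Nat.gcd_dvd_right m1 m2
  have hd2a2 : d2 ∣ a2 := Nat.gcd_dvd_left a2 g
  have hd2g' : d2 ∣ g := Nat.gcd_dvd_right a2 g
  have hd1a1 : d1 ∣ a1 := Nat.gcd_dvd_left a1 g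
  have hd1g : d1 ∣ g := Nat.gcd_dvd_right a1 g
  have ha1n : a1 ∣ n := ha1m1.trans h1
  have ha2n : a2 ∣ n := ha2m2.trans h2
  have hgn : g ∣ n := hgm1.trans h1
  have ha1lt : a1 < m1 := by
    calc a1 = a1 * 1 := by ring
    _ < a1 * b1 := by
      apply Nat.mul_lt_mul_of_le_of_lt (le_refl a1) (by omega) (by omega)
  have hd2a1 : d2 ∣ m1 := hd2g'.trans hgm1
  -- coprime d1 d2
  have hcd : Nat.gcd d1 d2 = 1 := by
    apply Nat.eq_one_of_dvd_one
    rw [← hcop]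
    exact Nat.dvd_gcd ((Nat.gcd_dvd_left d1 d2).trans hd1a1) ((Nat.gcd_dvd_right d1 d2).trans hd2a2)
  -- the graph and its adjacency
  set G := circulant n (pairedD n a1 b1 ∪ pairedD n a2 b2) with hG
  have hadj : ∀ v w : ZMod n, G.Adj v w ↔ v ≠ w ∧
      ((((v.val : ℕ) : ZMod a1) = ((w.val : ℕ) : ZMod a1) ∧
        ((v.val : ℕ) : ZMod m1) ≠ ((w.val : ℕ) : ZMod m1)) ∨
       (((v.val : ℕ) : ZMod a2) = ((w.val : ℕ) : ZMod a2) ∧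
        ((v.val : ℕ) : ZMod m2) ≠ ((w.val : ℕ) : ZMod m2))) :=
    fun v w => circ_adj h1 h2 v w
  -- delta function
  set δv : ZMod n → ℕ := fun v =>
    (((v.val : ℕ) : ZMod m1)).val % d2 +
      (if ((v.val : ℕ) : ZMod m1) = ((a1 : ℕ) : ZMod m1) then d2 else 0) with hδdef
  have hδeq : ∀ u v : ZMod n, ((u.val : ℕ) : ZMod m1) = ((v.val : ℕ) : ZMod m1) → δv u = δv v := by
    intro u v h
    simp only [hδdef, h]
  -- C
  set C : Set (ZMod n) := {v : ZMod n | v.val < L ∧ ((v.val : ℕ) : ZMod a1) = 0 ∧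
      ((v.val : ℕ) : ZMod a2) = ((δv v : ℕ) : ZMod a2)} with hCdef
  -- helper : δv v mod d2 equals v mod d2
  have hδmod : ∀ v : ZMod n, ((δv v : ℕ) : ZMod d2) = ((v.val : ℕ) : ZMod d2) := by
    intro v
    have hb : ((((v.val : ℕ) : ZMod m1)).val : ZMod d2) = ((v.val : ℕ) : ZMod d2) :=
      bridge hd2a1 v.val
    rw [hδdef]
    simp only
    rw [ZMod.natCast_eq_natCast_iff] at hb ⊢
    refine Nat.ModEq.trans ?_ hb
    unfold Nat.ModEq
    by_cases hc : ((v.val : ℕ) : ZMod m1) = ((a1 : ℕ) : ZMod m1)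
    · rw [if_pos hc, Nat.add_mod_right, Nat.mod_mod_of_dvd _ (dvd_refl d2)]
    · rw [if_neg hc, Nat.add_zero, Nat.mod_mod_of_dvd _ (dvd_refl d2)]
  haveI : NeZero a1 := ⟨by omega⟩
  haveI : NeZero a2 := ⟨by omega⟩
  -- build elements of C over any admissible fiber
  have mkC : ∀ x : ZMod m1, ((x.val : ℕ) : ZMod a1) = 0 →
      ∃ v, v ∈ C ∧ ((v.val : ℕ) : ZMod m1) = x := by
    intro x hx
    set N : ℕ := x.val % d2 + (if x = ((a1 : ℕ) : ZMod m1) then d2 else 0) with hN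
    have hNd2 : ((N : ℕ) : ZMod d2) = ((x.val : ℕ) : ZMod d2) := by
      rw [ZMod.natCast_eq_natCast_iff]
      unfold Nat.ModEq
      by_cases hc : x = ((a1 : ℕ) : ZMod m1)
      · rw [hN, if_pos hc, Nat.add_mod_right, Nat.mod_mod_of_dvd _ (dvd_refl d2)]
      · rw [hN, if_neg hc, Nat.add_zero, Nat.mod_mod_of_dvd _ (dvd_refl d2)]
    obtain ⟨y, hylt, hya2, hyg⟩ := exists_in_fiber (n := m2) ha2m2 hgm2
      ((N : ℕ) : ZMod a2) ((x.val : ℕ) : ZMod g) (by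
        rw [show Nat.gcd a2 g = d2 from rfl, bridge hd2a2 N, bridge hd2g' x.val]
        exact hNd2)
    obtain ⟨v, hvlt, hv1, hv2⟩ := exists_in_fiber (n := n) h1 h2 x y (by
      rw [show Nat.gcd m1 m2 = g from rfl]
      exact hyg.symm)
    refine ⟨v, ⟨hvlt, ?_, ?_⟩, hv1⟩
    · have hbv := bridge ha1m1 v.val
      rw [hv1] at hbv
      rw [← hbv]
      exact hx
    · have hδvv : δv v = N := by
        simp only [hδdef, hv1]
        exact hN.symm
      have hbv := bridge ha2m2 v.val
      rw [hv2] at hbv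
      rw [← hbv, hδvv]
      exact hya2
  -- C is a clique
  have hCclique : G.IsClique C := by
    intro u hu v hv huv
    obtain ⟨hul, hu1, hu2⟩ := hu
    obtain ⟨hvl, hv1', hv2'⟩ := hv
    by_cases hp : ((u.val : ℕ) : ZMod m1) = ((v.val : ℕ) : ZMod m1)
    · have hπ2 : ((u.val : ℕ) : ZMod m2) ≠ ((v.val : ℕ) : ZMod m2) := by
        intro h
        exact huv (val_lt_lcm_inj h1 h2 hul hvl hp h)
      exact (hadj u v).mpr ⟨huv, Or.inr ⟨by rw [hu2, hv2', hδeq u v hp], hπ2⟩⟩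
    · exact (hadj u v).mpr ⟨huv, Or.inl ⟨by rw [hu1, hv1'], hp⟩⟩
  -- no vertex can be added to C
  have hkill : ∀ u, u ∉ C → ¬ G.IsClique (insert u C) := by
    intro u huC hclq
    have hadjall : ∀ v ∈ C, u ≠ v → G.Adj u v := fun v hv hne =>
      hclq (Set.mem_insert u C) (Set.mem_insert_of_mem u hv) hne
    by_cases hρ1 : ((u.val : ℕ) : ZMod a1) = 0
    · by_cases hρ2 : ((u.val : ℕ) : ZMod a2) = ((δv u : ℕ) : ZMod a2)
      · -- canonical lift of u is in C: contradiction with u ∉ C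
        obtain ⟨w, hwlt, hw1, hw2⟩ := exists_in_fiber (n := n) h1 h2
          ((u.val : ℕ) : ZMod m1) ((u.val : ℕ) : ZMod m2) (by
            rw [show Nat.gcd m1 m2 = g from rfl, bridge hgm1 u.val, bridge hgm2 u.val])
        have hwu1 : ((w.val : ℕ) : ZMod m1) = ((u.val : ℕ) : ZMod m1) := hw1
        have hwu2 : ((w.val : ℕ) : ZMod m2) = ((u.val : ℕ) : ZMod m2) := hw2
        have hwC : w ∈ C := by
          refine ⟨hwlt, ?_, ?_⟩
          · rw [cast_factor ha1m1 w.val u.val hwu1]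
            exact hρ1
          · rw [cast_factor ha2m2 w.val u.val hwu2, hδeq w u hwu1]
            exact hρ2
        have hne : u ≠ w := fun h => huC (h ▸ hwC)
        rcases ((hadj u w).mp (hadjall w hwC hne)).2 with ⟨-, hne1⟩ | ⟨-, hne2⟩
        · exact hne1 hwu1.symm
        · exact hne2 hwu2.symm
      · -- some element of C lies in the same m1-fiber as u
        have hx : ((((u.val : ℕ) : ZMod m1)).val : ZMod a1) = 0 := by
          rw [bridge ha1m1 u.val]; exact hρ1
        obtain ⟨w, hwC, hw1⟩ := mkC _ hx
        have hne : u ≠ w := fun h => huC (h ▸ hwC)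
        rcases ((hadj u w).mp (hadjall w hwC hne)).2 with ⟨-, hne1⟩ | ⟨he, -⟩
        · exact hne1 hw1.symm
        · apply hρ2
          rw [he, hwC.2.2, hδeq w u hw1]
    · -- two elements of C with different δ values
      obtain ⟨vA, hvAC, hvA1⟩ := mkC (((0 : ℕ)) : ZMod m1) (by simp)
      obtain ⟨vB, hvBC, hvB1⟩ := mkC (((a1 : ℕ)) : ZMod m1) (by
        rw [ZMod.val_cast_of_lt ha1lt]
        simp)
      have hneA : u ≠ vA := by
        intro h
        rw [h] at hρ1
        exact hρ1 hvAC.2.1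
      have hneB : u ≠ vB := by
        intro h
        rw [h] at hρ1
        exact hρ1 hvBC.2.1
      have hcastne : (((0:ℕ)) : ZMod m1) ≠ ((a1 : ℕ) : ZMod m1) := by
        intro h
        have := congrArg ZMod.val h
        rw [ZMod.val_cast_of_lt ha1lt] at this
        simp at this
        omega
      have hδA : δv vA = 0 := by
        show (((vA.val : ℕ) : ZMod m1)).val % d2 +
          (if ((vA.val : ℕ) : ZMod m1) = ((a1 : ℕ) : ZMod m1) then d2 else 0) = 0
        rw [hvA1, if_neg hcastne]
        simp
      have hδB : δv vB = a1 % d2 + d2 := by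
        show (((vB.val : ℕ) : ZMod m1)).val % d2 +
          (if ((vB.val : ℕ) : ZMod m1) = ((a1 : ℕ) : ZMod m1) then d2 else 0) = a1 % d2 + d2
        rw [hvB1, if_pos rfl, ZMod.val_cast_of_lt ha1lt]
      have heA : ((u.val : ℕ) : ZMod a2) = 0 := by
        rcases ((hadj u vA).mp (hadjall vA hvAC hneA)).2 with ⟨he, -⟩ | ⟨he, -⟩
        · exact absurd (he.trans hvAC.2.1) hρ1
        · rw [he, hvAC.2.2, hδA]
          simp
      have heB : ((u.val : ℕ) : ZMod a2) = ((a1 % d2 + d2 : ℕ) : ZMod a2) := by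
        rcases ((hadj u vB).mp (hadjall vB hvBC hneB)).2 with ⟨he, -⟩ | ⟨he, -⟩
        · exact absurd (he.trans hvBC.2.1) hρ1
        · rw [he, hvBC.2.2, hδB]
      have : ((a1 % d2 + d2 : ℕ) : ZMod a2) ≠ 0 := by
        apply natCast_ne_zero_of_lt (by omega)
        have h2d : 2 * d2 ≤ a2 := two_mul_le_of_dvd_of_lt hd2pos hd2a2 hd2a
        have := Nat.mod_lt a1 hd2pos
        omega
      exact this (heB.symm.trans heA)
  have hCmax : Maximal G.IsClique C := by
    refine ⟨hCclique, ?_⟩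
    intro t ht hsub u hut
    by_contra huC
    exact hkill u huC (ht.subset (Set.insert_subset hut hsub))
  -- gcd facts for building the stable pair
  have hgcd_m1a2 : Nat.gcd m1 a2 = d2 := by
    apply Nat.dvd_antisymm
    · exact Nat.dvd_gcd (Nat.gcd_dvd_right m1 a2)
        (Nat.dvd_gcd (Nat.gcd_dvd_left m1 a2) ((Nat.gcd_dvd_right m1 a2).trans ha2m2))
    · exact Nat.dvd_gcd (hd2g'.trans hgm1) hd2a2
  obtain ⟨z1, hz1m1, hz1a2⟩ := exists_vertex h1 ha2n (0 : ZMod m1) ((d2 : ℕ) : ZMod a2) (by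
    rw [hgcd_m1a2]
    rw [ZMod.val_zero, ZMod.val_cast_of_lt hd2a]
    simp)
  set M := Nat.lcm a2 g with hMdef
  have hMm2 : M ∣ m2 := Nat.lcm_dvd ha2m2 hgm2
  have hMn : M ∣ n := hMm2.trans h2
  have hMpos : 0 < M := Nat.lcm_pos (by omega) hgpos
  haveI : NeZero M := ⟨hMpos.ne'⟩
  obtain ⟨w2, hw2a2, hw2g⟩ := exists_vertex (n := M) (Nat.dvd_lcm_left a2 g)
    (Nat.dvd_lcm_right a2 g) (0 : ZMod a2) ((d2 : ℕ) : ZMod g) (by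
      rw [show Nat.gcd a2 g = d2 from rfl, ZMod.val_zero, ZMod.val_cast_of_lt hd2g]
      simp)
  have hgcd_a1M : Nat.gcd a1 M = d1 := by
    apply Nat.dvd_antisymm
    · apply Nat.dvd_gcd (Nat.gcd_dvd_left a1 M)
      have hcopr : Nat.Coprime (Nat.gcd a1 M) a2 :=
        Nat.Coprime.coprime_dvd_left (Nat.gcd_dvd_left a1 M) hcop
      apply hcopr.dvd_of_dvd_mul_left
      exact (Nat.gcd_dvd_right a1 M).trans (Nat.lcm_dvd (dvd_mul_right a2 g) (dvd_mul_left g a2))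
    · exact Nat.dvd_gcd hd1a1 (hd1g.trans (Nat.dvd_lcm_right a2 g))
  set γ2val : ℕ := if d1 = 1 then 1 else d2 % d1 with hγdef
  have hγlt : γ2val < a1 := by
    rw [hγdef]
    by_cases hd1 : d1 = 1
    · rw [if_pos hd1]; omega
    · rw [if_neg hd1]
      have := Nat.mod_lt d2 hd1pos
      have := Nat.le_of_dvd (by omega) hd1a1
      omega
  have hγpos : 0 < γ2val := by
    rw [hγdef]
    by_cases hd1 : d1 = 1
    · rw [if_pos hd1]; omega
    · rw [if_neg hd1]
      rcases Nat.eq_zero_or_pos (d2 % d1) with h0 | h0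
      · exfalso
        have hdd : d1 ∣ d2 := Nat.dvd_of_mod_eq_zero h0
        have h11 : d1 ∣ 1 := hcd ▸ Nat.dvd_gcd (dvd_refl d1) hdd
        have := Nat.le_of_dvd one_pos h11
        omega
      · exact h0
  have hγd1 : ((γ2val : ℕ) : ZMod d1) = ((d2 : ℕ) : ZMod d1) := by
    rw [hγdef]
    by_cases hd1 : d1 = 1
    · haveI : Subsingleton (ZMod d1) := by
        rw [hd1]
        infer_instance
      exact Subsingleton.elim _ _
    · rw [if_neg hd1, ZMod.natCast_eq_natCast_iff]
      exact Nat.mod_modEq d2 d1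
  obtain ⟨z2, hz2a1, hz2M⟩ := exists_vertex ha1n hMn ((γ2val : ℕ) : ZMod a1) w2 (by
    rw [hgcd_a1M, ZMod.val_cast_of_lt hγlt, hγd1]
    exact (cast_factor hd1g w2.val d2 hw2g).symm)
  -- derived properties of z2
  have hz2a2 : ((z2.val : ℕ) : ZMod a2) = 0 := by
    have hb := bridge (Nat.dvd_lcm_left a2 g) z2.val
    rw [hz2M] at hb
    rw [← hb]
    exact hw2a2
  have hz2g : ((z2.val : ℕ) : ZMod g) = ((d2 : ℕ) : ZMod g) := by
    have hb := bridge (Nat.dvd_lcm_right a2 g) z2.val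
    rw [hz2M] at hb
    rw [← hb]
    exact hw2g
  have hγa1ne : ((γ2val : ℕ) : ZMod a1) ≠ 0 := natCast_ne_zero_of_lt hγpos hγlt
  have hd2a2ne : ((d2 : ℕ) : ZMod a2) ≠ 0 := natCast_ne_zero_of_lt hd2pos hd2a
  have hd2gne : ((d2 : ℕ) : ZMod g) ≠ 0 := natCast_ne_zero_of_lt hd2pos hd2g
  have hz1a1 : ((z1.val : ℕ) : ZMod a1) = 0 := by
    have := cast_factor ha1m1 z1.val 0 (by
      rw [Nat.cast_zero]
      exact hz1m1)
    simpa using this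
  -- the stable pair
  have hz1z2ne : z1 ≠ z2 := by
    intro h
    rw [h] at hz1a2
    rw [hz2a2] at hz1a2
    exact hd2a2ne hz1a2.symm
  have hnadj12 : ¬ G.Adj z1 z2 := by
    intro hA
    rcases ((hadj z1 z2).mp hA).2 with ⟨he, -⟩ | ⟨he, -⟩
    · rw [hz1a1, hz2a1] at he
      exact hγa1ne he.symm
    · rw [hz1a2, hz2a2] at he
      exact hd2a2ne he
  have hS0 : (circulant n (pairedD n a1 b1 ∪ pairedD n a2 b2))ᶜ.IsClique {z1, z2} := by
    intro a ha b hb hne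
    rcases ha with rfl | ha <;> rcases hb with rfl | hb
    · exact absurd rfl hne
    · rw [Set.mem_singleton_iff] at hb
      subst hb
      exact (SimpleGraph.compl_adj _ _ _).mpr ⟨hne, hnadj12⟩
    · rw [Set.mem_singleton_iff] at ha
      subst ha
      exact (SimpleGraph.compl_adj _ _ _).mpr ⟨hne, fun hA => hnadj12 hA.symm⟩
    · rw [Set.mem_singleton_iff] at ha hb
      subst ha; subst hb
      exact absurd rfl hne
  -- coverage
  have hcov : ∀ v ∈ C, ∃ z ∈ ({z1, z2} : Set (ZMod n)), G.Adj z v := by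
    intro v hvC
    obtain ⟨hvl, hv1, hv2⟩ := hvC
    by_cases hp : ((v.val : ℕ) : ZMod m1) = ((0 : ℕ) : ZMod m1)
    · -- z2 covers the 0-fiber
      refine ⟨z2, Set.mem_insert_of_mem z1 rfl, ?_⟩
      have hvg : ((v.val : ℕ) : ZMod g) = 0 := by
        have := cast_factor hgm1 v.val 0 hp
        simpa using this
      have hz2v : z2 ≠ v := by
        intro h
        rw [h] at hz2a1
        rw [hv1] at hz2a1
        exact hγa1ne hz2a1.symm
      refine (hadj z2 v).mpr ⟨hz2v, Or.inr ⟨?_, ?_⟩⟩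
      · rw [hz2a2, hv2]
        have hδv0 : δv v = 0 := by
          show (((v.val : ℕ) : ZMod m1)).val % d2 +
            (if ((v.val : ℕ) : ZMod m1) = ((a1 : ℕ) : ZMod m1) then d2 else 0) = 0
          rw [hp]
          have hcastne : (((0 : ℕ)) : ZMod m1) ≠ ((a1 : ℕ) : ZMod m1) := by
            intro h
            have := congrArg ZMod.val h
            rw [ZMod.val_cast_of_lt ha1lt] at this
            simp at this
            omega
          rw [if_neg hcastne]
          simp
        rw [hδv0]
        simp
      · intro h
        have := cast_factor hgm2 z2.val v.val h
        rw [hz2g, hvg] at this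
        exact hd2gne this
    · -- z1 covers the other fibers
      refine ⟨z1, Set.mem_insert z1 _, ?_⟩
      have hz1v : z1 ≠ v := by
        intro h
        apply hp
        rw [← h]
        rw [Nat.cast_zero]
        exact hz1m1
      refine (hadj z1 v).mpr ⟨hz1v, Or.inl ⟨?_, ?_⟩⟩
      · rw [hz1a1, hv1]
      · intro h
        apply hp
        rw [← h, Nat.cast_zero]
        exact hz1m1
  exact not_cis_of_cover C hCmax {z1, z2} hS0 hcov

end V1

section V3
variable {n a1 b1 a2 b2 : ℕ}

lemma notcis_v3 (hn : 0 < n) (ha1 : 2 ≤ a1) (ha2 : 2 ≤ a2)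
    (hb1 : 2 ≤ b1) (hb2 : 2 ≤ b2) (h1 : a1 * b1 ∣ n) (h2 : a2 * b2 ∣ n)
    (hcop : Nat.gcd a1 a2 = 1)
    (hga1 : a1 ∣ Nat.gcd (a1 * b1) (a2 * b2))
    (hga2 : a2 ∣ Nat.gcd (a1 * b1) (a2 * b2))
    (hlt : a1 < a2) :
    ¬ (circulant n (pairedD n a1 b1 ∪ pairedD n a2 b2)).IsCIS := by
  haveI : NeZero n := ⟨hn.ne'⟩
  set m1 := a1 * b1 with hm1def
  set m2 := a2 * b2 with hm2def
  set g := Nat.gcd m1 m2 with hgdef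
  set L := Nat.lcm m1 m2 with hLdef
  have hm1pos : 0 < m1 := by positivity
  have hm2pos : 0 < m2 := by positivity
  haveI : NeZero m1 := ⟨hm1pos.ne'⟩
  haveI : NeZero m2 := ⟨hm2pos.ne'⟩
  haveI : NeZero a1 := ⟨by omega⟩
  haveI : NeZero a2 := ⟨by omega⟩
  have hgm1 : g ∣ m1 := Nat.gcd_dvd_left m1 m2
  have hgm2 : g ∣ m2 := Nat.gcd_dvd_right m1 m2
  have ha1m1 : a1 ∣ m1 := Dvd.intro b1 rfl
  have ha2m2 : a2 ∣ m2 := Dvd.intro b2 rfl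
  have ha1m2 : a1 ∣ m2 := hga1.trans hgm2
  have ha2m1 : a2 ∣ m1 := hga2.trans hgm1
  have ha1n : a1 ∣ n := ha1m1.trans h1
  have ha2n : a2 ∣ n := ha2m2.trans h2
  have ha2lt : a2 < m2 := by
    calc a2 = a2 * 1 := by ring
    _ < a2 * b2 := by
      apply Nat.mul_lt_mul_of_le_of_lt (le_refl a2) (by omega) (by omega)
  have ha2a1ne : ((a2 : ℕ) : ZMod a1) ≠ 0 := by
    intro h
    have hdvd : a1 ∣ a2 := (ZMod.natCast_eq_zero_iff a2 a1).mp h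
    have : a1 ∣ 1 := hcop ▸ Nat.dvd_gcd (dvd_refl a1) hdvd
    have := Nat.le_of_dvd one_pos this
    omega
  set G := circulant n (pairedD n a1 b1 ∪ pairedD n a2 b2) with hG
  have hadj : ∀ v w : ZMod n, G.Adj v w ↔ v ≠ w ∧
      ((((v.val : ℕ) : ZMod a1) = ((w.val : ℕ) : ZMod a1) ∧
        ((v.val : ℕ) : ZMod m1) ≠ ((w.val : ℕ) : ZMod m1)) ∨
       (((v.val : ℕ) : ZMod a2) = ((w.val : ℕ) : ZMod a2) ∧
        ((v.val : ℕ) : ZMod m2) ≠ ((w.val : ℕ) : ZMod m2))) :=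
    fun v w => circ_adj h1 h2 v w
  set C : Set (ZMod n) := {v : ZMod n | v.val < L ∧ ((v.val : ℕ) : ZMod a2) = 0} with hCdef
  -- elements of C over a given m2-fiber
  have mkC : ∀ y : ZMod m2, ((y.val : ℕ) : ZMod a2) = 0 →
      ∃ v, v ∈ C ∧ ((v.val : ℕ) : ZMod m2) = y := by
    intro y hy
    obtain ⟨v, hvlt, hv1, hv2⟩ := exists_in_fiber (n := n) h1 h2
      ((y.val : ℕ) : ZMod m1) y (by
        rw [show Nat.gcd m1 m2 = g from rfl, bridge hgm1 y.val])
    exact ⟨v, ⟨hvlt, by rw [cast_factor ha2m2 v.val y.val (by rw [hv2, natCast_val_self])]; exact hy⟩, hv2⟩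
  -- C is a clique
  have hCclique : G.IsClique C := by
    intro u hu v hv huv
    obtain ⟨hul, hu2⟩ := hu
    obtain ⟨hvl, hv2⟩ := hv
    by_cases hp : ((u.val : ℕ) : ZMod m2) = ((v.val : ℕ) : ZMod m2)
    · have hπ1 : ((u.val : ℕ) : ZMod m1) ≠ ((v.val : ℕ) : ZMod m1) := by
        intro h
        exact huv (val_lt_lcm_inj h1 h2 hul hvl h hp)
      have hρ1 : ((u.val : ℕ) : ZMod a1) = ((v.val : ℕ) : ZMod a1) :=
        cast_factor ha1m2 u.val v.val hp
      exact (hadj u v).mpr ⟨huv, Or.inl ⟨hρ1, hπ1⟩⟩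
    · exact (hadj u v).mpr ⟨huv, Or.inr ⟨by rw [hu2, hv2], hp⟩⟩
  -- maximality of C
  have hkill : ∀ u, u ∉ C → ¬ G.IsClique (insert u C) := by
    intro u huC hclq
    have hadjall : ∀ v ∈ C, u ≠ v → G.Adj u v := fun v hv hne =>
      hclq (Set.mem_insert u C) (Set.mem_insert_of_mem u hv) hne
    by_cases hρ2 : ((u.val : ℕ) : ZMod a2) = 0
    · -- canonical lift of u is in C
      obtain ⟨w, hwlt, hw1, hw2⟩ := exists_in_fiber (n := n) h1 h2
        ((u.val : ℕ) : ZMod m1) ((u.val : ℕ) : ZMod m2) (by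
          rw [show Nat.gcd m1 m2 = g from rfl, bridge hgm1 u.val, bridge hgm2 u.val])
      have hwC : w ∈ C := ⟨hwlt, by
        rw [cast_factor ha2m2 w.val u.val hw2]
        exact hρ2⟩
      have hne : u ≠ w := fun h => huC (h ▸ hwC)
      rcases ((hadj u w).mp (hadjall w hwC hne)).2 with ⟨-, hne1⟩ | ⟨-, hne2⟩
      · exact hne1 hw1.symm
      · exact hne2 hw2.symm
    · -- two elements of C with different ρ1 values
      obtain ⟨vA, hvAC, hvA2⟩ := mkC ((0 : ℕ) : ZMod m2) (by simp)
      obtain ⟨vB, hvBC, hvB2⟩ := mkC ((a2 : ℕ) : ZMod m2) (by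
        rw [ZMod.val_cast_of_lt ha2lt]
        simp)
      have hvAρ1 : ((vA.val : ℕ) : ZMod a1) = 0 := by
        have := cast_factor ha1m2 vA.val 0 hvA2
        simpa using this
      have hvBρ1 : ((vB.val : ℕ) : ZMod a1) = ((a2 : ℕ) : ZMod a1) :=
        cast_factor ha1m2 vB.val a2 hvB2
      have hneA : u ≠ vA := by
        intro h
        rw [h] at hρ2
        exact hρ2 hvAC.2
      have hneB : u ≠ vB := by
        intro h
        rw [h] at hρ2
        exact hρ2 hvBC.2
      have heA : ((u.val : ℕ) : ZMod a1) = 0 := by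
        rcases ((hadj u vA).mp (hadjall vA hvAC hneA)).2 with ⟨he, -⟩ | ⟨he, -⟩
        · exact he.trans hvAρ1
        · exact absurd (he.trans hvAC.2) hρ2
      have heB : ((u.val : ℕ) : ZMod a1) = ((a2 : ℕ) : ZMod a1) := by
        rcases ((hadj u vB).mp (hadjall vB hvBC hneB)).2 with ⟨he, -⟩ | ⟨he, -⟩
        · exact he.trans hvBρ1
        · exact absurd (he.trans hvBC.2) hρ2
      exact ha2a1ne (heB.symm.trans heA)
  have hCmax : Maximal G.IsClique C := by
    refine ⟨hCclique, ?_⟩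
    intro t ht hsub u hut
    by_contra huC
    exact hkill u huC (ht.subset (Set.insert_subset hut hsub))
  -- the covering stable family
  set μ := min b2 a1 with hμdef
  have hwex : ∀ k : ℕ, ∃ z : ZMod n,
      ((z.val : ℕ) : ZMod a1) = ((k * a2 : ℕ) : ZMod a1) ∧
      ((z.val : ℕ) : ZMod a2) = ((k + 1 : ℕ) : ZMod a2) := by
    intro k
    obtain ⟨z, hz1, hz2⟩ := exists_vertex ha1n ha2n ((k * a2 : ℕ) : ZMod a1)
      ((k + 1 : ℕ) : ZMod a2) (by
        haveI : Subsingleton (ZMod (Nat.gcd a1 a2)) := by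
          rw [hcop]
          infer_instance
        exact Subsingleton.elim _ _)
    exact ⟨z, hz1, hz2⟩
  choose w hwa1 hwa2 using hwex
  set S0 : Set (ZMod n) := w '' {k : ℕ | k < μ} with hS0def
  -- injectivity facts on casts of the w's
  have hwne : ∀ k k', k < μ → k' < μ → k ≠ k' → ¬ G.Adj (w k) (w k') := by
    intro k k' hk hk' hkk' hA
    rcases ((hadj (w k) (w k')).mp hA).2 with ⟨he, -⟩ | ⟨he, -⟩
    · rw [hwa1 k, hwa1 k'] at he
      rw [ZMod.natCast_eq_natCast_iff] at he
      have hmod : k ≡ k' [MOD a1] := Nat.ModEq.cancel_right_of_coprime hcop he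
      have : k = k' := by
        have h1' := Nat.mod_eq_of_lt (lt_of_lt_of_le hk (min_le_right b2 a1))
        have h2' := Nat.mod_eq_of_lt (lt_of_lt_of_le hk' (min_le_right b2 a1))
        unfold Nat.ModEq at hmod
        omega
      exact hkk' this
    · rw [hwa2 k, hwa2 k'] at he
      rw [ZMod.natCast_eq_natCast_iff] at he
      have hka : k + 1 < a2 := by
        have := min_le_right b2 a1
        omega
      have hka' : k' + 1 < a2 := by
        have := min_le_right b2 a1
        omega
      have : k + 1 = k' + 1 := by
        have e1 := Nat.mod_eq_of_lt hka
        have e2 := Nat.mod_eq_of_lt hka'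
        unfold Nat.ModEq at he
        omega
      exact hkk' (by omega)
  have hS0 : Gᶜ.IsClique S0 := by
    rintro a ⟨k, hk, rfl⟩ b ⟨k', hk', rfl⟩ hne
    have hkk' : k ≠ k' := fun h => hne (by rw [h])
    exact (SimpleGraph.compl_adj _ _ _).mpr ⟨hne, hwne k k' hk hk' hkk'⟩
  -- coverage
  have hcov : ∀ v ∈ C, ∃ z ∈ S0, G.Adj z v := by
    intro v hvC
    obtain ⟨hvl, hv2⟩ := hvC
    set y : ZMod m2 := ((v.val : ℕ) : ZMod m2) with hydef
    have hyv : ((y.val : ℕ) : ZMod m2) = ((v.val : ℕ) : ZMod m2) := natCast_val_self y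
    have hdvd : a2 ∣ y.val := by
      apply (ZMod.natCast_eq_zero_iff y.val a2).mp
      rw [bridge ha2m2 v.val]
      exact hv2
    set j := y.val / a2 with hjdef
    have hyj : y.val = a2 * j := (Nat.mul_div_cancel' hdvd).symm
    have hjb2 : j < b2 := by
      have hylt : y.val < m2 := ZMod.val_lt y
      have hylt2 : a2 * j < a2 * b2 := by
        rw [← hyj]
        exact hylt
      exact lt_of_mul_lt_mul_left hylt2 (by omega)
    set k := j % a1 with hkdef
    have hka1 : k < a1 := Nat.mod_lt j (by omega)
    have hkμ : k < μ := lt_min (lt_of_le_of_lt (Nat.mod_le j a1) hjb2) hka1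
    refine ⟨w k, ⟨k, hkμ, rfl⟩, ?_⟩
    have hwk2 : (((w k).val : ℕ) : ZMod a2) = ((k + 1 : ℕ) : ZMod a2) := hwa2 k
    have hk1ne : ((k + 1 : ℕ) : ZMod a2) ≠ 0 := natCast_ne_zero_of_lt (by omega) (by omega)
    have hzv : w k ≠ v := by
      intro h
      rw [h] at hwk2
      rw [hv2] at hwk2
      exact hk1ne hwk2.symm
    refine (hadj (w k) v).mpr ⟨hzv, Or.inl ⟨?_, ?_⟩⟩
    · rw [hwa1 k]
      have hva1 : ((v.val : ℕ) : ZMod a1) = ((y.val : ℕ) : ZMod a1) :=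
        (cast_factor ha1m2 y.val v.val hyv).symm
      rw [hva1, hyj, ZMod.natCast_eq_natCast_iff]
      calc k * a2 ≡ j * a2 [MOD a1] := Nat.ModEq.mul_right a2 ((Nat.mod_modEq j a1))
      _ = a2 * j := by ring
    · intro h
      have := cast_factor ha2m1 (w k).val v.val h
      rw [hwk2, hv2] at this
      exact hk1ne this
  exact not_cis_of_cover C hCmax S0 hS0 hcov

end V3


/-- A connected and co-connected 2-paired circulant `C(n; a₁,b₁; a₂,b₂)` is CIS
iff `gcd(a₁b₁, a₂b₂) = 1`. -/
theorem stmt_5 (n a1 b1 a2 b2 : ℕ) (hn : 0 < n)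
    (ha1 : 0 < a1) (hb1 : 0 < b1) (ha2 : 0 < a2) (hb2 : 0 < b2)
    (h1 : a1 * b1 ∣ n) (h2 : a2 * b2 ∣ n)
    (hconn : (circulant n (pairedD n a1 b1 ∪ pairedD n a2 b2)).Connected)
    (hcoconn : (circulant n (pairedD n a1 b1 ∪ pairedD n a2 b2))ᶜ.Connected) :
    (circulant n (pairedD n a1 b1 ∪ pairedD n a2 b2)).IsCIS ↔
      Nat.gcd (a1 * b1) (a2 * b2) = 1 := by
  constructor
  · -- necessity
    intro hcis
    by_contra hg
    obtain ⟨ha1', ha2', hb1', hb2', hcop⟩ :=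
      necessity_params hn ha1 hb1 ha2 hb2 h1 h2 hconn hcoconn hg
    set m1 := a1 * b1 with hm1def
    set m2 := a2 * b2 with hm2def
    set g := Nat.gcd m1 m2 with hgdef
    set d1 := Nat.gcd a1 g with hd1def
    set d2 := Nat.gcd a2 g with hd2def
    have hm1pos : 0 < m1 := by positivity
    have hm2pos : 0 < m2 := by positivity
    have hgpos : 0 < g := Nat.gcd_pos_of_pos_left m2 hm1pos
    have hg2 : 2 ≤ g := by
      have hne1 : g ≠ 1 := hg
      omega
    have hd2a2 : d2 ∣ a2 := Nat.gcd_dvd_left a2 g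
    have hd1a1 : d1 ∣ a1 := Nat.gcd_dvd_left a1 g
    have hd2le : d2 ≤ a2 := Nat.le_of_dvd (by omega) hd2a2
    have hd1le : d1 ≤ a1 := Nat.le_of_dvd (by omega) hd1a1
    have hd2gle : d2 ≤ g := Nat.le_of_dvd hgpos (Nat.gcd_dvd_right a2 g)
    have hd1gle : d1 ≤ g := Nat.le_of_dvd hgpos (Nat.gcd_dvd_right a1 g)
    have hgcomm : Nat.gcd m2 m1 = g := Nat.gcd_comm m2 m1
    have hcop' : Nat.gcd a2 a1 = 1 := (Nat.gcd_comm a2 a1).trans hcop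
    by_cases hc1 : d2 < a2 ∧ d2 < g
    · exact notcis_v1 hn ha1' ha2' hb1' hb2' h1 h2 hcop hc1.1 hc1.2 hcis
    · by_cases hc2 : d1 < a1 ∧ d1 < g
      · apply notcis_v1 hn ha2' ha1' hb2' hb1' h2 h1 hcop'
          (by rw [hgcomm]; exact hc2.1) (by rw [hgcomm]; exact hc2.2)
        rw [Finset.union_comm]
        exact hcis
      · -- both a1 ∣ g and a2 ∣ g
        have ha2g : a2 ∣ g := by
          rcases (by omega : d2 = a2 ∨ d2 = g) with h | h
          · rw [← h]
            exact Nat.gcd_dvd_right a2 g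
          · exfalso
            have hga2' : g ∣ a2 := h ▸ Nat.gcd_dvd_left a2 g
            have hd11 : d1 = 1 := Nat.eq_one_of_dvd_one
              (hcop ▸ Nat.dvd_gcd hd1a1 ((Nat.gcd_dvd_right a1 g).trans hga2'))
            exact hc2 ⟨by omega, by omega⟩
        have ha1g : a1 ∣ g := by
          rcases (by omega : d1 = a1 ∨ d1 = g) with h | h
          · rw [← h]
            exact Nat.gcd_dvd_right a1 g
          · exfalso
            have hga1' : g ∣ a1 := h ▸ Nat.gcd_dvd_left a1 g
            have hd21 : d2 = 1 := Nat.eq_one_of_dvd_one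
              (hcop' ▸ Nat.dvd_gcd hd2a2 ((Nat.gcd_dvd_right a2 g).trans hga1'))
            exact hc1 ⟨by omega, by omega⟩
        have hne : a1 ≠ a2 := by
          intro h
          rw [h] at hcop
          rw [Nat.gcd_self] at hcop
          omega
        rcases Nat.lt_or_ge a1 a2 with hlt | hge
        · exact notcis_v3 hn ha1' ha2' hb1' hb2' h1 h2 hcop ha1g ha2g hlt hcis
        · have hlt' : a2 < a1 := by omega
          apply notcis_v3 hn ha2' ha1' hb2' hb1' h2 h1 hcop'
            (by rw [hgcomm]; exact ha2g) (by rw [hgcomm]; exact ha1g) hlt'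
          rw [Finset.union_comm]
          exact hcis
  · -- sufficiency
    intro hg
    exact suff_cis hn ha1 hb1 ha2 hb2 h1 h2 hg
end

section
/- Let G = C(n; a_1,b_1; …; a_k,b_k) and H = C(m; a'_1,b'_1; …; a'_ℓ,b'_ℓ) be paired circulants. Then the lexicographic product G[H] is isomorphic to the (k+ℓ)-paired circulant C(nm; a_1,b_1; …; a_k,b_k; n·a'_1,b'_1; …; n·a'_ℓ,b'_ℓ). -/
open SimpleGraph Finset

section helpers

variable {n m : ℕ} [NeZero n] [NeZero m]

lemma phi_lt (p : ZMod n × ZMod m) : p.1.val + n * p.2.val < n * m := by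
  have h1 := ZMod.val_lt p.1
  have h2 := ZMod.val_lt p.2
  calc p.1.val + n * p.2.val < n + n * p.2.val := by omega
    _ = n * (p.2.val + 1) := by ring
    _ ≤ n * m := Nat.mul_le_mul_left n (by omega)

/-- the vertex bijection -/
def prodEquiv (n m : ℕ) [NeZero n] [NeZero m] : ZMod n × ZMod m ≃ ZMod (n * m) where
  toFun p := ((p.1.val + n * p.2.val : ℕ) : ZMod (n * m))
  invFun x := (((x.val % n : ℕ) : ZMod n), ((x.val / n : ℕ) : ZMod m))
  left_inv p := by
    have hn : 0 < n := Nat.pos_of_ne_zero (NeZero.ne n)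
    have h1 := ZMod.val_lt p.1
    have hv : ((p.1.val + n * p.2.val : ℕ) : ZMod (n * m)).val = p.1.val + n * p.2.val :=
      ZMod.val_cast_of_lt (phi_lt p)
    rw [Prod.ext_iff]
    constructor
    · simp only [hv]
      rw [Nat.add_mul_mod_self_left, Nat.mod_eq_of_lt h1, ZMod.natCast_val, ZMod.cast_id]
    · simp only [hv]
      rw [Nat.add_mul_div_left _ _ hn, Nat.div_eq_of_lt h1, Nat.zero_add,
        ZMod.natCast_val, ZMod.cast_id]
  right_inv x := by
    have hn : 0 < n := Nat.pos_of_ne_zero (NeZero.ne n)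
    have hx := ZMod.val_lt x
    have hdiv : x.val / n < m := Nat.div_lt_of_lt_mul hx
    have h1 : ((x.val % n : ℕ) : ZMod n).val = x.val % n :=
      ZMod.val_cast_of_lt (Nat.mod_lt _ hn)
    have h2 : ((x.val / n : ℕ) : ZMod m).val = x.val / n := ZMod.val_cast_of_lt hdiv
    simp only [h1, h2]
    rw [Nat.mod_add_div, ZMod.natCast_val, ZMod.cast_id]

lemma val_prodEquiv (p : ZMod n × ZMod m) :
    (prodEquiv n m p).val = p.1.val + n * p.2.val := ZMod.val_cast_of_lt (phi_lt p)

lemma sub_val_modeq {N : ℕ} [NeZero N] (x y : ZMod N) :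
    (x - y).val + y.val ≡ x.val [MOD N] := by
  have h : ((x - y) + y).val = ((x - y).val + y.val) % N := ZMod.val_add _ _
  rw [sub_add_cancel] at h
  exact Nat.ModEq.symm (h ▸ (Nat.mod_modEq _ _))

/-- key lemma 1: the difference of images mod n -/
lemma diff_mod (p q : ZMod n × ZMod m) :
    (prodEquiv n m p - prodEquiv n m q).val % n = (p.1 - q.1).val := by
  set x := prodEquiv n m p with hxdef
  set y := prodEquiv n m q with hydef
  set d := (x - y).val with hd
  have h1 : d + y.val ≡ x.val [MOD n] := (sub_val_modeq x y).of_dvd (dvd_mul_right n m)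
  rw [val_prodEquiv, val_prodEquiv] at h1
  have hy : q.1.val + n * q.2.val ≡ q.1.val [MOD n] := by
    unfold Nat.ModEq; rw [Nat.add_mul_mod_self_left]
  have hx : p.1.val + n * p.2.val ≡ p.1.val [MOD n] := by
    unfold Nat.ModEq; rw [Nat.add_mul_mod_self_left]
  have h2 : (p.1 - q.1).val + q.1.val ≡ p.1.val [MOD n] := sub_val_modeq p.1 q.1
  have h3 : d + q.1.val ≡ (p.1 - q.1).val + q.1.val [MOD n] := by
    calc d + q.1.val ≡ d + (q.1.val + n * q.2.val) [MOD n] := (Nat.ModEq.add_left d hy).symm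
      _ ≡ p.1.val [MOD n] := by rw [← Nat.add_assoc] at h1 ⊢; exact h1.trans hx
      _ ≡ (p.1 - q.1).val + q.1.val [MOD n] := h2.symm
  have h4 : d ≡ (p.1 - q.1).val [MOD n] := Nat.ModEq.add_right_cancel' _ h3
  calc d % n = (p.1 - q.1).val % n := h4
    _ = (p.1 - q.1).val := Nat.mod_eq_of_lt (ZMod.val_lt _)

/-- key lemma 2: when first coordinates agree -/
lemma diff_eq_of_fst_eq (p q : ZMod n × ZMod m) (h : p.1 = q.1) :
    (prodEquiv n m p - prodEquiv n m q).val = n * (p.2 - q.2).val := by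
  set x := prodEquiv n m p with hxdef
  set y := prodEquiv n m q with hydef
  set d := (x - y).val with hd
  have h1 : d + y.val ≡ x.val [MOD n * m] := sub_val_modeq x y
  rw [val_prodEquiv, val_prodEquiv, h] at h1
  have h2 : (p.2 - q.2).val + q.2.val ≡ p.2.val [MOD m] := sub_val_modeq p.2 q.2
  have h2' : n * (p.2 - q.2).val + n * q.2.val ≡ n * p.2.val [MOD n * m] := by
    have := Nat.ModEq.mul_left' (c := n) h2
    rwa [Nat.mul_add] at this
  have h3 : d + (q.1.val + n * q.2.val) ≡ n * (p.2 - q.2).val + (q.1.val + n * q.2.val)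
      [MOD n * m] := by
    refine h1.trans ?_
    have := (Nat.ModEq.add_left q.1.val h2'.symm)
    calc q.1.val + n * p.2.val
        ≡ q.1.val + (n * (p.2 - q.2).val + n * q.2.val) [MOD n * m] := this
      _ = n * (p.2 - q.2).val + (q.1.val + n * q.2.val) := by ring
  have h4 : d ≡ n * (p.2 - q.2).val [MOD n * m] := Nat.ModEq.add_right_cancel' _ h3
  have hdlt : d < n * m := ZMod.val_lt _
  have hvlt : n * (p.2 - q.2).val < n * m :=
    mul_lt_mul_of_pos_left (ZMod.val_lt _) (Nat.pos_of_ne_zero (NeZero.ne n))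
  calc d = d % (n * m) := (Nat.mod_eq_of_lt hdlt).symm
    _ = (n * (p.2 - q.2).val) % (n * m) := h4
    _ = n * (p.2 - q.2).val := Nat.mod_eq_of_lt hvlt

end helpers

section mems
variable {n m : ℕ}

/-- membership in pairedD for the first-block pairs -/
lemma mem_pairedD_first {a bb d u : ℕ} (hn : 0 < n) (hm : 0 < m) (hab : a * bb ∣ n)
    (hdn : d % n = u) (hdlt : d < n * m) :
    d ∈ pairedD (n * m) a bb ↔ u ∈ pairedD n a bb := by
  have ha : a ∣ n := dvd_trans (dvd_mul_right a bb) hab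
  have hd_eq : d = n * (d / n) + u := by rw [← hdn]; exact (Nat.div_add_mod d n).symm
  have hdvd : ∀ c : ℕ, c ∣ n → (c ∣ d ↔ c ∣ u) := by
    intro c hc
    rw [hd_eq]
    exact Nat.dvd_add_right (Dvd.dvd.mul_right hc _)
  have hu_lt : u < n := hdn ▸ Nat.mod_lt _ hn
  simp only [pairedD, mem_filter, mem_Icc, hdvd a ha, hdvd _ hab]
  constructor
  · rintro ⟨⟨hd1, _⟩, h3, h4⟩
    have hu0 : u ≠ 0 := fun h => h4 (h ▸ dvd_zero _)
    exact ⟨⟨by omega, by omega⟩, h3, h4⟩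
  · rintro ⟨⟨hu1, _⟩, h3, h4⟩
    have : u ≤ d := hd_eq ▸ Nat.le_add_left u _
    refine ⟨⟨by omega, Nat.le_sub_one_of_lt hdlt⟩, h3, h4⟩

/-- membership in pairedD for the second-block pairs -/
lemma mem_pairedD_second {a bb d : ℕ} (hn : 0 < n) (hm : 0 < m) (hab : a * bb ∣ m)
    (hdlt : d < n * m) :
    d ∈ pairedD (n * m) (n * a) bb ↔ (d % n = 0 ∧ d / n ∈ pairedD m a bb) := by
  by_cases hnd : n ∣ d
  · obtain ⟨e, rfl⟩ := hnd
    have hdn : (n * e) % n = 0 := Nat.mul_mod_right n e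
    have hdiv : (n * e) / n = e := Nat.mul_div_cancel_left e hn
    have helt : e < m := Nat.lt_of_mul_lt_mul_left hdlt
    simp only [pairedD, mem_filter, mem_Icc, hdn, hdiv, true_and]
    have h1 : n * a ∣ n * e ↔ a ∣ e := Nat.mul_dvd_mul_iff_left hn
    have h2 : n * a * bb ∣ n * e ↔ a * bb ∣ e := by
      rw [mul_assoc]; exact Nat.mul_dvd_mul_iff_left hn
    rw [h1, h2]
    constructor
    · rintro ⟨⟨h3, _⟩, h5, h6⟩
      have he0 : e ≠ 0 := by rintro rfl; simp at h3
      exact ⟨⟨by omega, by omega⟩, h5, h6⟩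
    · rintro ⟨⟨h3, _⟩, h5, h6⟩
      have : 0 < n * e := Nat.mul_pos hn (by omega)
      exact ⟨⟨by omega, Nat.le_sub_one_of_lt hdlt⟩, h5, h6⟩
  · have hdn : d % n ≠ 0 := fun h => hnd (Nat.dvd_of_mod_eq_zero h)
    simp only [pairedD, mem_filter, mem_Icc, hdn, false_and, iff_false]
    rintro ⟨-, h5, -⟩
    exact hnd (dvd_trans (dvd_mul_right n a) h5)

/-- splitting an existential over `Fin (k+l)` with appended functions -/
lemma exists_append_iff {k l : ℕ} {a c : Fin k → ℕ} {a' c' : Fin l → ℕ}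
    (P : ℕ → ℕ → Prop) :
    (∃ i : Fin (k + l), P (Fin.append a a' i) (Fin.append c c' i)) ↔
      (∃ i : Fin k, P (a i) (c i)) ∨ (∃ j : Fin l, P (a' j) (c' j)) := by
  constructor
  · rintro ⟨i, hi⟩
    by_cases hik : (i : ℕ) < k
    · left
      refine ⟨⟨i, hik⟩, ?_⟩
      have he : i = Fin.castAdd l ⟨i, hik⟩ := Fin.ext rfl
      rwa [he, Fin.append_left, Fin.append_left] at hi
    · right
      have hlt : (i : ℕ) - k < l := by have := i.isLt; omega
      refine ⟨⟨(i : ℕ) - k, hlt⟩, ?_⟩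
      have he : i = Fin.natAdd k ⟨(i : ℕ) - k, hlt⟩ := Fin.ext (by simp; omega)
      rwa [he, Fin.append_right, Fin.append_right] at hi
  · rintro (⟨i, hi⟩ | ⟨j, hj⟩)
    · exact ⟨Fin.castAdd l i, by rwa [Fin.append_left, Fin.append_left]⟩
    · exact ⟨Fin.natAdd k j, by rwa [Fin.append_right, Fin.append_right]⟩

lemma zero_not_mem_pairedD (N a b : ℕ) (hb : 0 < a * b) : 0 ∉ pairedD N a b := by
  simp [pairedD]

end mems



/-- The lexicographic product of the paired circulants
`C(n; a₁,b₁; …; a_k,b_k)` and `C(m; a'₁,b'₁; …; a'_ℓ,b'_ℓ)` is isomorphic to the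
`(k+ℓ)`-paired circulant `C(nm; a₁,b₁; …; a_k,b_k; n·a'₁,b'₁; …; n·a'_ℓ,b'_ℓ)`. -/
theorem stmt_6 (n m k l : ℕ) (hn : 0 < n) (hm : 0 < m)
    (a b : Fin k → ℕ) (a' b' : Fin l → ℕ)
    (ha : ∀ i, 0 < a i) (hb : ∀ i, 0 < b i) (hab : ∀ i, a i * b i ∣ n)
    (ha' : ∀ i, 0 < a' i) (hb' : ∀ i, 0 < b' i) (hab' : ∀ i, a' i * b' i ∣ m) :
    Nonempty (lexProd (pairedCirculant n a b) (pairedCirculant m a' b') ≃g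
      pairedCirculant (n * m) (Fin.append a (fun i => n * a' i)) (Fin.append b b')) := by
  haveI : NeZero n := ⟨hn.ne'⟩
  haveI : NeZero m := ⟨hm.ne'⟩
  set e := prodEquiv n m with he
  -- the key single-difference membership characterization
  have key : ∀ p q : ZMod n × ZMod m,
      ((e p - e q).val ∈ Finset.univ.biUnion (fun i : Fin (k + l) =>
        pairedD (n * m) (Fin.append a (fun i => n * a' i) i) (Fin.append b b' i))) ↔
      ((p.1 - q.1).val ∈ Finset.univ.biUnion (fun i => pairedD n (a i) (b i)) ∨
        (p.1 = q.1 ∧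
          (p.2 - q.2).val ∈ Finset.univ.biUnion (fun i => pairedD m (a' i) (b' i)))) := by
    intro p q
    have hdlt : (e p - e q).val < n * m := ZMod.val_lt _
    have hdm : (e p - e q).val % n = (p.1 - q.1).val := diff_mod p q
    simp only [mem_biUnion, mem_univ, true_and]
    rw [exists_append_iff (fun x y => (e p - e q).val ∈ pairedD (n * m) x y)]
    constructor
    · rintro (⟨i, hi⟩ | ⟨j, hj⟩)
      · exact Or.inl ⟨i, (mem_pairedD_first hn hm (hab i) hdm hdlt).1 hi⟩
      · obtain ⟨hmod, hdiv⟩ := (mem_pairedD_second hn hm (hab' j) hdlt).1 hj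
        have hfst : p.1 = q.1 := by
          have h0 : (p.1 - q.1).val = 0 := by rw [← hdm]; exact hmod
          exact sub_eq_zero.mp ((ZMod.val_eq_zero _).1 h0)
        have hdq : (e p - e q).val = n * (p.2 - q.2).val := diff_eq_of_fst_eq p q hfst
        have hdv : (e p - e q).val / n = (p.2 - q.2).val := by
          rw [hdq, Nat.mul_div_cancel_left _ hn]
        exact Or.inr ⟨hfst, ⟨j, hdv ▸ hdiv⟩⟩
    · rintro (⟨i, hi⟩ | ⟨hfst, j, hj⟩)
      · exact Or.inl ⟨i, (mem_pairedD_first hn hm (hab i) hdm hdlt).2 hi⟩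
      · have hdq : (e p - e q).val = n * (p.2 - q.2).val := diff_eq_of_fst_eq p q hfst
        refine Or.inr ⟨j, (mem_pairedD_second hn hm (hab' j) hdlt).2 ⟨?_, ?_⟩⟩
        · rw [hdm, sub_eq_zero.mpr hfst, ZMod.val_zero]
        · rwa [hdq, Nat.mul_div_cancel_left _ hn]
  refine ⟨{ toEquiv := e, map_rel_iff' := ?_ }⟩
  intro p q
  show (pairedCirculant (n * m) _ _).Adj (e p) (e q) ↔ (lexProd _ _).Adj p q
  simp only [pairedCirculant, circulant, fromRel_adj, lexProd]
  rw [key p q, key q p]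
  have hepq : e p = e q ↔ p = q := e.injective.eq_iff
  have hzero_nG : ∀ i : Fin k, (0 : ℕ) ∉ pairedD n (a i) (b i) := by
    intro i; simp [pairedD]
  by_cases hfst : p.1 = q.1
  · have hu : (p.1 - q.1).val = 0 := by rw [sub_eq_zero.mpr hfst, ZMod.val_zero]
    have hu' : (q.1 - p.1).val = 0 := by rw [sub_eq_zero.mpr hfst.symm, ZMod.val_zero]
    have hGfalse : ¬ (p.1 - q.1).val ∈ Finset.univ.biUnion (fun i => pairedD n (a i) (b i)) := by
      rw [hu]; simp only [mem_biUnion, mem_univ, true_and]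
      rintro ⟨i, hi⟩; exact hzero_nG i hi
    have hGfalse' : ¬ (q.1 - p.1).val ∈ Finset.univ.biUnion (fun i => pairedD n (a i) (b i)) := by
      rw [hu']; simp only [mem_biUnion, mem_univ, true_and]
      rintro ⟨i, hi⟩; exact hzero_nG i hi
    have hpq : p = q ↔ p.2 = q.2 := by
      rw [Prod.ext_iff]; exact and_iff_right hfst
    have hene : e p ≠ e q ↔ p.2 ≠ q.2 := by rw [Ne, Ne, hepq, hpq]
    constructor
    · rintro ⟨h1, (hA | ⟨-, hB⟩) | (hA' | ⟨-, hB'⟩)⟩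
      · exact absurd hA hGfalse
      · exact Or.inr ⟨hfst, hene.mp h1, Or.inl hB⟩
      · exact absurd hA' hGfalse'
      · exact Or.inr ⟨hfst, hene.mp h1, Or.inr hB'⟩
    · rintro (⟨h1, -⟩ | ⟨-, h2, hB | hB'⟩)
      · exact absurd hfst h1
      · exact ⟨hene.mpr h2, Or.inl (Or.inr ⟨hfst, hB⟩)⟩
      · exact ⟨hene.mpr h2, Or.inr (Or.inr ⟨hfst.symm, hB'⟩)⟩
  · have hne : p ≠ q := fun h => hfst (by rw [h])
    have hene : e p ≠ e q := fun h => hne (e.injective h)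
    have hfst' : q.1 ≠ p.1 := fun h => hfst h.symm
    constructor
    · rintro ⟨-, (hA | ⟨h, -⟩) | (hA' | ⟨h, -⟩)⟩
      · exact Or.inl ⟨hfst, Or.inl hA⟩
      · exact absurd h hfst
      · exact Or.inl ⟨hfst, Or.inr hA'⟩
      · exact absurd h hfst'
    · rintro (⟨-, hA | hA'⟩ | ⟨h, -⟩)
      · exact ⟨hene, Or.inl (Or.inl hA)⟩
      · exact ⟨hene, Or.inr (Or.inl hA')⟩
      · exact absurd h hfst
end

section
/- Let G = C(n; a_1,b_1; …; a_k,b_k) be a k-paired circulant. If b_i = 1 for all i ∈ [k], then G has exactly n connected components (G is edgeless); otherwise, the number of connected components of G equals gcd(A), where A = { a_i : i ∈ [k] and b_i > 1 }. In particular, G is connected if and only if either n = 1, or b_i > 1 for some i ∈ [k] and gcd(A) = 1. -/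
open SimpleGraph Finset

section Aux

variable {n k : ℕ} {a b : Fin k → ℕ}

lemma pc_adj_iff {x y : ZMod n} :
    (pairedCirculant n a b).Adj x y ↔ x ≠ y ∧
      ((x - y).val ∈ Finset.univ.biUnion (fun i => pairedD n (a i) (b i)) ∨
       (y - x).val ∈ Finset.univ.biUnion (fun i => pairedD n (a i) (b i))) :=
  Iff.rfl

lemma pc_adj_shift (c : ZMod n) {x y : ZMod n} (h : (pairedCirculant n a b).Adj x y) :
    (pairedCirculant n a b).Adj (x + c) (y + c) := by
  rw [pc_adj_iff] at h ⊢
  refine ⟨fun he => h.1 (by exact add_right_cancel he), ?_⟩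
  simpa [add_sub_add_right_eq_sub] using h.2

lemma pc_reach_shift (c : ZMod n) {x y : ZMod n}
    (h : (pairedCirculant n a b).Reachable x y) :
    (pairedCirculant n a b).Reachable (x + c) (y + c) :=
  h.map ⟨fun z => z + c, fun h => pc_adj_shift c h⟩

end Aux

/-- If `b_i = 1` for all `i`, a `k`-paired circulant has exactly `n` connected
components; otherwise it has `gcd {a_i : b_i > 1}` components. In particular it is connected
iff `n = 1`, or `b_i > 1` for some `i` and `gcd {a_i : b_i > 1} = 1`. -/
theorem stmt_8 (n k : ℕ) (hn : 0 < n) (a b : Fin k → ℕ)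
    (ha : ∀ i, 0 < a i) (hb : ∀ i, 0 < b i) (hab : ∀ i, a i * b i ∣ n) :
    ((∀ i, b i = 1) → Nat.card (pairedCirculant n a b).ConnectedComponent = n) ∧
    ((∃ i, 1 < b i) →
      Nat.card (pairedCirculant n a b).ConnectedComponent =
        (Finset.univ.filter (fun i => 1 < b i)).gcd a) ∧
    ((pairedCirculant n a b).Connected ↔
      n = 1 ∨ ((∃ i, 1 < b i) ∧ (Finset.univ.filter (fun i => 1 < b i)).gcd a = 1)) := by
  haveI : NeZero n := ⟨hn.ne'⟩
  set G := pairedCirculant n a b with hG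
  -- Part 1
  have part1 : (∀ i, b i = 1) → Nat.card G.ConnectedComponent = n := by
    intro h1
    have hbot : G = ⊥ := by
      ext x y
      rw [hG, pc_adj_iff]
      simp only [bot_adj, iff_false, not_and]
      intro _
      rintro (hc | hc) <;>
      · rcases Finset.mem_biUnion.mp hc with ⟨i, -, hd⟩
        rw [pairedD, Finset.mem_filter, h1 i, mul_one] at hd
        exact hd.2.2 hd.2.1
    have hb2 : Function.Bijective (G.connectedComponentMk) := by
      constructor
      · intro x y hxy
        have := SimpleGraph.ConnectedComponent.eq.mp hxy
        rw [hbot] at this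
        exact SimpleGraph.reachable_bot.mp this
      · exact fun c => c.exists_rep
    rw [← Nat.card_eq_of_bijective _ hb2, Nat.card_zmod]
  -- Preliminaries for part 2
  set g := (Finset.univ.filter (fun i => 1 < b i)).gcd a with hgdef
  have part2 : (∃ i, 1 < b i) → Nat.card G.ConnectedComponent = g := by
    rintro ⟨i0, hi0⟩
    have hi0mem : i0 ∈ Finset.univ.filter (fun i => 1 < b i) := by
      simp [hi0]
    have hgdvd : ∀ i ∈ Finset.univ.filter (fun i => 1 < b i), g ∣ a i :=
      fun i hi => Finset.gcd_dvd hi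
    have hgn : g ∣ n := (hgdvd i0 hi0mem).trans ((dvd_mul_right _ _).trans (hab i0))
    have hgpos : 0 < g := Nat.pos_of_dvd_of_pos hgn hn
    -- every element of the distance set is divisible by g
    have hDg : ∀ d ∈ Finset.univ.biUnion (fun i => pairedD n (a i) (b i)), g ∣ d := by
      intro d hd
      rcases Finset.mem_biUnion.mp hd with ⟨i, -, hdi⟩
      rw [pairedD, Finset.mem_filter] at hdi
      have hbi : 1 < b i := by
        by_contra hlt
        have : b i = 1 := by have := hb i; omega
        rw [this, mul_one] at hdi
        exact hdi.2.2 hdi.2.1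
      exact (hgdvd i (by simp [hbi])).trans hdi.2.1
    -- the reachability class of 0 is an additive subgroup
    let H : AddSubgroup (ZMod n) :=
      { carrier := {z | G.Reachable 0 z}
        zero_mem' := SimpleGraph.Reachable.refl 0
        add_mem' := by
          intro x y hx hy
          have := pc_reach_shift (a := a) (b := b) x hy
          rw [zero_add] at this
          exact SimpleGraph.Reachable.trans hx (by rwa [add_comm] at this)
        neg_mem' := by
          intro x hx
          have := pc_reach_shift (a := a) (b := b) (-x) hx
          rw [zero_add, add_neg_cancel] at this
          exact this.symm }
    have hmemH : ∀ z : ZMod n, z ∈ H ↔ G.Reachable 0 z := fun z => Iff.rfl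
    -- generators
    have hgen : ∀ i, 1 < b i → ((a i : ℕ) : ZMod n) ∈ H := by
      intro i hbi
      have hain : a i < n := by
        have h1 : a i * b i ≤ n := Nat.le_of_dvd hn (hab i)
        have h2 : a i * 2 ≤ a i * b i := Nat.mul_le_mul_left _ hbi
        have := ha i
        omega
      have hval : ((a i : ℕ) : ZMod n).val = a i := ZMod.val_natCast_of_lt hain
      refine SimpleGraph.Adj.reachable ?_
      rw [hG, pc_adj_iff]
      constructor
      · intro hEq
        have := congrArg ZMod.val hEq
        rw [ZMod.val_zero, hval] at this
        exact (ha i).ne' this.symm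
      · right
        rw [sub_zero, hval]
        refine Finset.mem_biUnion.mpr ⟨i, Finset.mem_univ i, ?_⟩
        rw [pairedD, Finset.mem_filter, Finset.mem_Icc]
        refine ⟨⟨ha i, by omega⟩, dvd_refl _, ?_⟩
        intro hdvd
        have h1 := Nat.le_of_dvd (ha i) hdvd
        have h2 : a i * 2 ≤ a i * b i := Nat.mul_le_mul_left _ hbi
        have := ha i
        omega
    -- Bezout: the gcd is in H
    have hbez : ∀ s : Finset (Fin k), (∀ i ∈ s, 1 < b i) → ((s.gcd a : ℕ) : ZMod n) ∈ H := by
      intro s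
      induction s using Finset.induction_on with
      | empty => intro _; simpa using H.zero_mem
      | insert j s' hnotmem ih =>
        intro hmem
        rw [Finset.gcd_insert]
        have hx : ((a j : ℕ) : ZMod n) ∈ H := hgen j (hmem j (Finset.mem_insert_self j s'))
        have hy : ((s'.gcd a : ℕ) : ZMod n) ∈ H :=
          ih (fun i hi => hmem i (Finset.mem_insert_of_mem hi))
        have hkey : ((GCDMonoid.gcd (a j) (s'.gcd a) : ℕ) : ZMod n)
            = (Nat.gcdA (a j) (s'.gcd a)) • ((a j : ℕ) : ZMod n)
              + (Nat.gcdB (a j) (s'.gcd a)) • ((s'.gcd a : ℕ) : ZMod n) := by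
          have h1 : (GCDMonoid.gcd (a j) (s'.gcd a) : ℕ) = Nat.gcd (a j) (s'.gcd a) := rfl
          have h2 := Nat.gcd_eq_gcd_ab (a j) (s'.gcd a)
          have h3 := congrArg (fun t : ℤ => (t : ZMod n)) h2
          rw [h1]
          push_cast at h3 ⊢
          rw [h3]
          simp [zsmul_eq_mul]
          ring
        rw [hkey]
        exact H.add_mem (H.zsmul_mem hx _) (H.zsmul_mem hy _)
    have hgH : ((g : ℕ) : ZMod n) ∈ H := by
      refine hbez _ ?_
      intro i hi
      exact (Finset.mem_filter.mp hi).2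
    -- all multiples of g are in H
    have hmulH : ∀ z : ZMod n, g ∣ z.val → z ∈ H := by
      intro z hz
      rcases hz with ⟨m, hm⟩
      have : z = ((g * m : ℕ) : ZMod n) := by
        rw [← hm, ZMod.natCast_rightInverse z]
      rw [this]
      push_cast
      rw [mul_comm, ← nsmul_eq_mul]
      exact H.nsmul_mem hgH m
    -- the quotient map to ZMod g
    haveI : NeZero g := ⟨hgpos.ne'⟩
    let f : ZMod n →+* ZMod g := ZMod.castHom hgn (ZMod g)
    have hf0 : ∀ z : ZMod n, f z = 0 ↔ g ∣ z.val := by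
      intro z
      conv_lhs => rw [← ZMod.natCast_rightInverse z]
      rw [map_natCast, ZMod.natCast_eq_zero_iff]
    have hfadj : ∀ x y : ZMod n, G.Adj x y → f x = f y := by
      intro x y hxy
      rw [hG, pc_adj_iff] at hxy
      have hsub : f (x - y) = 0 ∨ f (y - x) = 0 := by
        rcases hxy.2 with h | h
        · exact Or.inl ((hf0 _).mpr (hDg _ h))
        · exact Or.inr ((hf0 _).mpr (hDg _ h))
      rcases hsub with h | h
      · rw [map_sub, sub_eq_zero] at h; exact h
      · rw [map_sub, sub_eq_zero] at h; exact h.symm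
    have hfwalk : ∀ (v w : ZMod n) (p : G.Walk v w), f v = f w := by
      intro v w p
      induction p with
      | nil => rfl
      | cons hadj _ ih => exact (hfadj _ _ hadj).trans ih
    have hfreach : ∀ x y : ZMod n, f x = f y → G.Reachable x y := by
      intro x y hfe
      have h0 : f (x - y) = 0 := by rw [map_sub, hfe, sub_self]
      have hx : x - y ∈ H := hmulH _ ((hf0 _).mp h0)
      have := pc_reach_shift (a := a) (b := b) y ((hmemH _).mp hx)
      rw [zero_add, sub_add_cancel] at this
      exact this.symm
    let φ : G.ConnectedComponent → ZMod g :=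
      SimpleGraph.ConnectedComponent.lift f (fun v w p _ => hfwalk v w p)
    have hφbij : Function.Bijective φ := by
      constructor
      · refine SimpleGraph.ConnectedComponent.ind₂ (fun x y hxy => ?_)
        exact SimpleGraph.ConnectedComponent.sound (hfreach x y hxy)
      · intro t
        refine ⟨G.connectedComponentMk ((t.val : ℕ) : ZMod n), ?_⟩
        show f ((t.val : ℕ) : ZMod n) = t
        rw [map_natCast]
        exact ZMod.natCast_rightInverse t
    rw [Nat.card_eq_of_bijective _ hφbij, Nat.card_zmod]
  refine ⟨part1, part2, ?_⟩
  constructor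
  · intro hc
    have hcard1 : Nat.card G.ConnectedComponent = 1 :=
      Nat.card_eq_one_iff_unique.mpr
        ⟨hc.preconnected.subsingleton_connectedComponent, ⟨G.connectedComponentMk 0⟩⟩
    by_cases hA : ∃ i, 1 < b i
    · exact Or.inr ⟨hA, (part2 hA).symm.trans hcard1⟩
    · left
      push_neg at hA
      have h1 : ∀ i, b i = 1 := fun i => by have := hb i; have := hA i; omega
      rw [← part1 h1, hcard1]
  · rintro (h1 | ⟨hA, hg1⟩)
    · subst h1
      rw [SimpleGraph.connected_iff]
      exact ⟨fun x y => by rw [Subsingleton.elim x y], ⟨0⟩⟩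
    · have hcard : Nat.card G.ConnectedComponent = 1 := by
        rw [part2 hA]; exact hg1
      obtain ⟨hsub, -⟩ := Nat.card_eq_one_iff_unique.mp hcard
      rw [SimpleGraph.connected_iff]
      refine ⟨fun x y => ?_, ⟨0⟩⟩
      exact SimpleGraph.ConnectedComponent.eq.mp
        (Subsingleton.elim (G.connectedComponentMk x) (G.connectedComponentMk y))
end

section
/- Let G = C(n; a_1,b_1; a_2,b_2) be a 2-paired circulant. Then every clique C of G is either an a_1-clique or an a_2-clique; that is, either i ≡ j (mod a_1) holds for all i, j ∈ C, or i ≡ j (mod a_2) holds for all i, j ∈ C. -/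
open SimpleGraph Finset

lemma key_mod {n : ℕ} [NeZero n] {a : ℕ} (ha : a ∣ n) (x y : ZMod n)
    (h : a ∣ (x - y).val) : x.val ≡ y.val [MOD a] := by
  haveI : NeZero a := ⟨by rintro rfl; exact (NeZero.ne n) (zero_dvd_iff.mp ha)⟩
  let f : ZMod n →+* ZMod a := ZMod.castHom ha (ZMod a)
  have hc : ∀ z : ZMod n, ((z.val : ℕ) : ZMod a) = f z := by
    intro z
    rw [ZMod.natCast_val, ZMod.castHom_apply]
  have h0 : ((x - y).val : ZMod a) = 0 := (ZMod.natCast_eq_zero_iff _ _).mpr h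
  have hsub : f x - f y = 0 := by
    rw [← map_sub, ← hc (x - y)]; exact h0
  have : (x.val : ZMod a) = (y.val : ZMod a) := by
    rw [hc x, hc y]; exact sub_eq_zero.mp hsub
  exact (ZMod.natCast_eq_natCast_iff _ _ _).mp this

/-- Every clique of a 2-paired circulant `C(n; a₁,b₁; a₂,b₂)` is an
`a₁`-clique or an `a₂`-clique. -/
theorem stmt_11 (n a1 b1 a2 b2 : ℕ) (hn : 0 < n)
    (ha1 : 0 < a1) (hb1 : 0 < b1) (ha2 : 0 < a2) (hb2 : 0 < b2)
    (h1 : a1 * b1 ∣ n) (h2 : a2 * b2 ∣ n)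
    (C : Set (ZMod n))
    (hC : (circulant n (pairedD n a1 b1 ∪ pairedD n a2 b2)).IsClique C) :
    (∀ i ∈ C, ∀ j ∈ C, i.val ≡ j.val [MOD a1]) ∨
    (∀ i ∈ C, ∀ j ∈ C, i.val ≡ j.val [MOD a2]) := by
  haveI : NeZero n := ⟨hn.ne'⟩
  have hd1 : a1 ∣ n := (dvd_mul_right a1 b1).trans h1
  have hd2 : a2 ∣ n := (dvd_mul_right a2 b2).trans h2
  -- every pair in C is congruent mod a1 or mod a2
  have pair : ∀ p ∈ C, ∀ q ∈ C, p.val ≡ q.val [MOD a1] ∨ p.val ≡ q.val [MOD a2] := by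
    intro p hp q hq
    by_cases hpq : p = q
    · subst hpq; exact Or.inl rfl
    have hadj := hC hp hq hpq
    simp only [circulant, SimpleGraph.fromRel_adj] at hadj
    obtain ⟨-, hmem⟩ := hadj
    rcases hmem with hmem | hmem
    · rcases Finset.mem_union.mp hmem with hm | hm
      · exact Or.inl (key_mod hd1 p q (Finset.mem_filter.mp hm).2.1)
      · exact Or.inr (key_mod hd2 p q (Finset.mem_filter.mp hm).2.1)
    · rcases Finset.mem_union.mp hmem with hm | hm
      · exact Or.inl (key_mod hd1 q p (Finset.mem_filter.mp hm).2.1).symm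
      · exact Or.inr (key_mod hd2 q p (Finset.mem_filter.mp hm).2.1).symm
  by_contra hcon
  push_neg at hcon
  obtain ⟨⟨x, hx, y, hy, hxy⟩, ⟨u, hu, v, hv, huv⟩⟩ := hcon
  -- x ≢ y [MOD a1], u ≢ v [MOD a2]
  have hxy2 : x.val ≡ y.val [MOD a2] := (pair x hx y hy).resolve_left hxy
  have huv1 : u.val ≡ v.val [MOD a1] := (pair u hu v hv).resolve_right huv
  by_cases hxu : x.val ≡ u.val [MOD a1]
  · have hxv : x.val ≡ v.val [MOD a1] := hxu.trans huv1
    have hyu : y.val ≡ u.val [MOD a2] := by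
      rcases pair y hy u hu with h | h
      · exact absurd (hxu.trans h.symm) hxy
      · exact h
    have hyv : y.val ≡ v.val [MOD a2] := by
      rcases pair y hy v hv with h | h
      · exact absurd (hxv.trans h.symm) hxy
      · exact h
    exact huv (hyu.symm.trans hyv)
  · have hxu2 : x.val ≡ u.val [MOD a2] := (pair x hx u hu).resolve_left hxu
    have hxv2 : x.val ≡ v.val [MOD a2] := by
      rcases pair x hx v hv with h | h
      · exact absurd (h.trans huv1.symm) hxu
      · exact h
    exact huv (hxu2.symm.trans hxv2)
end

section
/- Let G = C(n; a_1,b_1; a_2,b_2) be a 2-paired circulant with n = lcm(a_1·b_1, a_2·b_2). Then every inclusion-maximal clique of G that is an a_1-clique has size exactly b_1·b_2·gcd(a_2, a_1·b_1)/gcd(a_1·b_1, a_2·b_2), and every inclusion-maximal clique of G that is an a_2-clique has size exactly b_1·b_2·gcd(a_1, a_2·b_2)/gcd(a_1·b_1, a_2·b_2). -/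
open SimpleGraph Finset

lemma cast_mod_dvd (a N k : ℕ) (h : k ∣ N) : ((a % N : ℕ) : ZMod k) = (a : ZMod k) := by
  rw [ZMod.natCast_eq_natCast_iff]
  exact (Nat.mod_modEq a N).of_dvd h

lemma castval_add {N k : ℕ} [NeZero N] (h : k ∣ N) (d e : ZMod N) :
    (((d + e).val : ℕ) : ZMod k) = (d.val : ZMod k) + (e.val : ZMod k) := by
  rw [ZMod.val_add, cast_mod_dvd _ _ _ h]
  push_cast
  ring

lemma castval_sub {N k : ℕ} [NeZero N] (h : k ∣ N) (d e : ZMod N) :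
    (((d - e).val : ℕ) : ZMod k) = (d.val : ZMod k) - (e.val : ZMod k) := by
  have h1 := castval_add h (d - e) e
  rw [sub_add_cancel] at h1
  rw [h1]; ring

lemma dvd_val_iff {N k : ℕ} [NeZero N] [NeZero k] (d : ZMod N) :
    k ∣ d.val ↔ (d.val : ZMod k) = 0 :=
  (ZMod.natCast_eq_zero_iff _ _).symm

lemma circ_adj_s12 (n a1 b1 a2 b2 : ℕ) (hn : 0 < n)
    (ha1 : 0 < a1) (hb1 : 0 < b1) (ha2 : 0 < a2) (hb2 : 0 < b2)
    (h1 : a1 * b1 ∣ n) (h2 : a2 * b2 ∣ n) (i j : ZMod n) :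
    (circulant n (pairedD n a1 b1 ∪ pairedD n a2 b2)).Adj i j ↔
      i ≠ j ∧ ((a1 ∣ (i - j).val ∧ ¬ (a1 * b1) ∣ (i - j).val) ∨
        (a2 ∣ (i - j).val ∧ ¬ (a2 * b2) ∣ (i - j).val)) := by
  haveI : NeZero n := ⟨hn.ne'⟩
  have ha1n : a1 ∣ n := dvd_trans (dvd_mul_right a1 b1) h1
  have ha2n : a2 ∣ n := dvd_trans (dvd_mul_right a2 b2) h2
  have hsym : ∀ k, 0 < k → k ∣ n → ∀ u v : ZMod n, (k ∣ (u - v).val ↔ k ∣ (v - u).val) := by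
    intro k hk hkn u v
    haveI : NeZero k := ⟨hk.ne'⟩
    rw [dvd_val_iff, dvd_val_iff, castval_sub hkn, castval_sub hkn, sub_eq_zero, sub_eq_zero]
    exact eq_comm
  have hmem : ∀ d : ZMod n, d ≠ 0 →
      (d.val ∈ pairedD n a1 b1 ∪ pairedD n a2 b2 ↔
        ((a1 ∣ d.val ∧ ¬ (a1 * b1) ∣ d.val) ∨ (a2 ∣ d.val ∧ ¬ (a2 * b2) ∣ d.val))) := by
    intro d hd
    have hlb : 1 ≤ d.val := Nat.one_le_iff_ne_zero.mpr (fun h => hd ((ZMod.val_eq_zero d).mp h))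
    have hub : d.val ≤ n - 1 := Nat.le_sub_one_of_lt (ZMod.val_lt d)
    simp [pairedD, Finset.mem_union, Finset.mem_filter, Finset.mem_Icc, hlb, hub]
  rw [circulant, SimpleGraph.fromRel_adj]
  constructor
  · rintro ⟨hne, hD⟩
    refine ⟨hne, ?_⟩
    rcases hD with hD | hD
    · exact (hmem _ (sub_ne_zero.mpr hne)).mp hD
    · have := (hmem _ (sub_ne_zero.mpr (Ne.symm hne))).mp hD
      rcases this with ⟨hx, hy⟩ | ⟨hx, hy⟩
      · exact Or.inl ⟨(hsym a1 ha1 ha1n j i).mp hx, fun hc => hy ((hsym _ (mul_pos ha1 hb1) h1 i j).mp hc)⟩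
      · exact Or.inr ⟨(hsym a2 ha2 ha2n j i).mp hx, fun hc => hy ((hsym _ (mul_pos ha2 hb2) h2 i j).mp hc)⟩
  · rintro ⟨hne, hQ⟩
    exact ⟨hne, Or.inl ((hmem _ (sub_ne_zero.mpr hne)).mpr hQ)⟩
lemma ncard_dvd_val (N k : ℕ) (hN : 0 < N) (hk : 0 < k) (h : k ∣ N) :
    {d : ZMod N | k ∣ d.val}.ncard = N / k := by
  haveI : NeZero N := ⟨hN.ne'⟩
  classical
  set f : ℕ → ZMod N := fun s => ((k * s : ℕ) : ZMod N) with hf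
  have hval : ∀ s, s < N / k → (f s).val = k * s := by
    intro s hs
    have hlt : k * s < N := by
      calc k * s < k * (N / k) := by exact Nat.mul_lt_mul_of_le_of_lt (le_refl k) hs hk
        _ = N := Nat.mul_div_cancel' h
    rw [hf]
    simp only
    rw [ZMod.val_natCast, Nat.mod_eq_of_lt hlt]
  have hset : {d : ZMod N | k ∣ d.val} = ↑((Finset.range (N / k)).image f) := by
    ext d
    simp only [Set.mem_setOf_eq, coe_image, coe_range, Set.mem_image, Set.mem_Iio]
    constructor
    · rintro ⟨s, hs⟩
      have hslt : s < N / k := by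
        have : k * s < N := hs ▸ ZMod.val_lt d
        exact Nat.lt_div_iff_mul_lt' h s |>.mpr (by omega)
      refine ⟨s, hslt, ?_⟩
      have : ((d.val : ℕ) : ZMod N) = d := ZMod.natCast_rightInverse d
      rw [hf]; simp only; rw [← hs, this]
    · rintro ⟨s, hs, rfl⟩
      exact ⟨s, (hval s hs).symm ▸ rfl⟩
  have hinj : Set.InjOn f (Finset.range (N / k)) := by
    intro s hs t ht hst
    simp only [coe_range, Set.mem_Iio] at hs ht
    have : (f s).val = (f t).val := by rw [hst]
    rw [hval s hs, hval t ht] at this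
    exact Nat.eq_of_mul_eq_mul_left hk this
  rw [hset, Set.ncard_coe_finset, Finset.card_image_of_injOn hinj, Finset.card_range]

lemma key (n a1 b1 a2 b2 : ℕ) (hn : 0 < n)
    (ha1 : 0 < a1) (hb1 : 0 < b1) (ha2 : 0 < a2) (hb2 : 0 < b2)
    (h1 : a1 * b1 ∣ n) (h2 : a2 * b2 ∣ n)
    (hlcm : n = Nat.lcm (a1 * b1) (a2 * b2))
    (C : Set (ZMod n))
    (hC : Maximal (circulant n (pairedD n a1 b1 ∪ pairedD n a2 b2)).IsClique C)
    (hmod : ∀ i ∈ C, ∀ j ∈ C, i.val ≡ j.val [MOD a1]) :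
    C.ncard = b1 * b2 * Nat.gcd a2 (a1 * b1) / Nat.gcd (a1 * b1) (a2 * b2) := by
  classical
  haveI : NeZero n := ⟨hn.ne'⟩
  haveI : NeZero a1 := ⟨ha1.ne'⟩
  haveI : NeZero a2 := ⟨ha2.ne'⟩
  haveI : NeZero (a1 * b1) := ⟨(mul_pos ha1 hb1).ne'⟩
  haveI : NeZero (a2 * b2) := ⟨(mul_pos ha2 hb2).ne'⟩
  have ha1n : a1 ∣ n := dvd_trans (dvd_mul_right a1 b1) h1
  have ha2n : a2 ∣ n := dvd_trans (dvd_mul_right a2 b2) h2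
  set G := circulant n (pairedD n a1 b1 ∪ pairedD n a2 b2) with hGdef
  have hadj : ∀ i j : ZMod n, G.Adj i j ↔
      i ≠ j ∧ ((a1 ∣ (i - j).val ∧ ¬ (a1 * b1) ∣ (i - j).val) ∨
        (a2 ∣ (i - j).val ∧ ¬ (a2 * b2) ∣ (i - j).val)) :=
    fun i j => circ_adj_s12 n a1 b1 a2 b2 hn ha1 hb1 ha2 hb2 h1 h2 i j
  have hmax : ∀ v, G.IsClique (insert v C) → v ∈ C := fun v h =>
    hC.2 h (Set.subset_insert v C) (Set.mem_insert v C)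
  have hmod' : ∀ i ∈ C, ∀ j ∈ C, ((i.val : ZMod a1)) = (j.val : ZMod a1) := by
    intro i hi j hj
    rw [ZMod.natCast_eq_natCast_iff]
    exact hmod i hi j hj
  have hpair : ∀ i ∈ C, ∀ j ∈ C, (a1 * b1) ∣ (i - j).val → a2 ∣ (i - j).val := by
    intro i hi j hj hd
    by_cases hij : i = j
    · subst hij; simp
    · have hado := hC.1 hi hj hij
      rw [hadj] at hado
      rcases hado.2 with ⟨_, hno⟩ | ⟨h, _⟩
      · exact absurd hd hno
      · exact h
  have hnotboth : ∀ d : ZMod n, d ≠ 0 → (a1 * b1) ∣ d.val → ¬ (a2 * b2) ∣ d.val := by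
    intro d hd hdvd hbad
    have hl : n ∣ d.val := by
      have hl' : Nat.lcm (a1 * b1) (a2 * b2) ∣ d.val := lcm_dvd_iff.mpr ⟨hdvd, hbad⟩
      rwa [← hlcm] at hl'
    exact hd ((ZMod.val_eq_zero d).mp (Nat.eq_zero_of_dvd_of_lt hl (ZMod.val_lt d)))
  set F : ZMod n → ZMod (a1 * b1) := fun j => ((j.val : ℕ) : ZMod (a1 * b1)) with hFdef
  set K : Set (ZMod n) := {d | (a1 * b1) ∣ d.val ∧ a2 ∣ d.val} with hKdef
  -- Step A : C is closed under adding elements of K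
  have hA : ∀ j ∈ C, ∀ k ∈ K, j + k ∈ C := by
    intro j hj k hk
    obtain ⟨hk1, hk2⟩ := hk
    have hk1' : a1 ∣ k.val := dvd_trans (dvd_mul_right a1 b1) hk1
    apply hmax
    rw [SimpleGraph.isClique_insert]
    refine ⟨hC.1, ?_⟩
    intro u hu hne
    rw [hadj]
    refine ⟨hne, ?_⟩
    have hds : (j + k) - u = (j - u) + k := by ring
    by_cases hcase : (a1 * b1) ∣ ((j + k) - u).val
    · right
      have hju : (a1 * b1) ∣ (j - u).val := by
        rw [dvd_val_iff]
        have e1 : j - u = ((j + k) - u) - k := by ring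
        rw [e1, castval_sub h1, (dvd_val_iff _).mp hcase, (dvd_val_iff _).mp hk1]
        simp
      have h2a2 : a2 ∣ (j - u).val := hpair j hj u hu hju
      refine ⟨?_, ?_⟩
      · rw [dvd_val_iff, hds, castval_add ha2n, (dvd_val_iff _).mp h2a2, (dvd_val_iff _).mp hk2]
        simp
      · intro hbad
        exact hnotboth _ (sub_ne_zero.mpr hne) hcase hbad
    · left
      refine ⟨?_, hcase⟩
      rw [dvd_val_iff, hds, castval_add ha1n, castval_sub ha1n, hmod' j hj u hu,
        (dvd_val_iff _).mp hk1']
      simp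
  -- fibers of F on C are translates of K
  have hfiber : ∀ j ∈ C, {j' | j' ∈ C ∧ F j' = F j} = (fun k => j + k) '' K := by
    intro j hj
    ext j'
    constructor
    · rintro ⟨hj', hFeq⟩
      have hd1 : (a1 * b1) ∣ (j' - j).val := by
        rw [dvd_val_iff, castval_sub h1]
        rw [hFdef] at hFeq
        simp only at hFeq
        rw [hFeq]
        simp
      refine ⟨j' - j, ⟨hd1, hpair j' hj' j hj hd1⟩, by ring⟩
    · rintro ⟨k, hk, rfl⟩
      refine ⟨hA j hj k hk, ?_⟩
      rw [hFdef]
      simp only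
      rw [castval_add h1, (dvd_val_iff _).mp hk.1, add_zero]
  -- C is nonempty
  have hCne : C.Nonempty := by
    rcases Set.eq_empty_or_nonempty C with hem | hne
    · exfalso
      have h0 : (0 : ZMod n) ∈ C := by
        apply hmax
        rw [hem]
        simp [SimpleGraph.isClique_insert]
      rw [hem] at h0
      exact h0
    · exact hne
  obtain ⟨i0, hi0⟩ := hCne
  set Tset : Set (ZMod (a1 * b1)) := {x | ((x.val : ℕ) : ZMod a1) = ((i0.val : ℕ) : ZMod a1)}
    with hTdef
  have hFval : ∀ j : ZMod n, ((F j).val : ZMod a1) = ((j.val : ℕ) : ZMod a1) := by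
    intro j
    rw [hFdef]
    simp only
    rw [ZMod.val_natCast, cast_mod_dvd _ _ _ (dvd_mul_right a1 b1)]
  have himage : F '' C = Tset := by
    apply Set.Subset.antisymm
    · rintro x ⟨j, hj, rfl⟩
      rw [hTdef]
      simp only [Set.mem_setOf_eq]
      rw [hFval j]
      exact hmod' j hj i0 hi0
    · intro x hx
      rw [hTdef] at hx
      simp only [Set.mem_setOf_eq] at hx
      set v : ZMod n := ((x.val : ℕ) : ZMod n) with hvdef
      have hvval : v.val = x.val := by
        rw [hvdef, ZMod.val_natCast, Nat.mod_eq_of_lt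
          (lt_of_lt_of_le (ZMod.val_lt x) (Nat.le_of_dvd hn h1))]
      have hFv : F v = x := by
        rw [hFdef]
        simp only
        rw [hvval]
        exact ZMod.natCast_rightInverse x
      by_contra hno
      have hno' : ∀ j ∈ C, F j ≠ x := by
        intro j hj hFj
        exact hno ⟨j, hj, hFj⟩
      have hv : v ∈ C := by
        apply hmax
        rw [SimpleGraph.isClique_insert]
        refine ⟨hC.1, ?_⟩
        intro u hu hneu
        rw [hadj]
        refine ⟨hneu, Or.inl ⟨?_, ?_⟩⟩
        · rw [dvd_val_iff, castval_sub ha1n, hvval, hx, hmod' i0 hi0 u hu]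
          simp
        · intro hc
          apply hno' u hu
          have : ((v.val : ℕ) : ZMod (a1 * b1)) = ((u.val : ℕ) : ZMod (a1 * b1)) := by
            have h0 : (((v - u).val : ℕ) : ZMod (a1 * b1)) = 0 := (dvd_val_iff _).mp hc
            rw [castval_sub h1] at h0
            exact sub_eq_zero.mp h0
          rw [hFdef]
          simp only
          rw [← this, hvval]
          exact ZMod.natCast_rightInverse x
      exact hno' v hv hFv
  -- cardinality of Tset
  have hTcard : Tset.ncard = b1 := by
    have hTeq : Tset = (fun y => ((i0.val : ℕ) : ZMod (a1 * b1)) + y) ''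
        {y : ZMod (a1 * b1) | a1 ∣ y.val} := by
      set c : ZMod (a1 * b1) := ((i0.val : ℕ) : ZMod (a1 * b1)) with hcdef
      have hcval : ((c.val : ℕ) : ZMod a1) = ((i0.val : ℕ) : ZMod a1) := by
        rw [hcdef, ZMod.val_natCast, cast_mod_dvd _ _ _ (dvd_mul_right a1 b1)]
      ext x
      constructor
      · intro hx
        rw [hTdef] at hx
        simp only [Set.mem_setOf_eq] at hx
        refine ⟨x - c, ?_, by ring⟩
        simp only [Set.mem_setOf_eq]
        rw [dvd_val_iff, castval_sub (dvd_mul_right a1 b1), hx, hcval]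
        simp
      · rintro ⟨y, hy, rfl⟩
        simp only [Set.mem_setOf_eq] at hy
        rw [hTdef]
        simp only [Set.mem_setOf_eq]
        rw [castval_add (dvd_mul_right a1 b1), hcval, (dvd_val_iff _).mp hy, add_zero]
    rw [hTeq, Set.ncard_image_of_injective _ (add_right_injective _),
      ncard_dvd_val (a1 * b1) a1 (mul_pos ha1 hb1) ha1 (dvd_mul_right a1 b1),
      Nat.mul_div_cancel_left b1 ha1]
  -- cardinality of K
  set l : ℕ := Nat.lcm (a1 * b1) a2 with hldef
  have hlpos : 0 < l := Nat.pos_of_ne_zero (Nat.lcm_ne_zero (mul_pos ha1 hb1).ne' ha2.ne')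
  have hln : l ∣ n := lcm_dvd_iff.mpr ⟨h1, ha2n⟩
  have hKcard : K.ncard = n / l := by
    have : K = {d : ZMod n | l ∣ d.val} := by
      ext d
      simp only [hKdef, Set.mem_setOf_eq, hldef]
      constructor
      · rintro ⟨hx, hy⟩
        exact Nat.lcm_dvd hx hy
      · intro h
        exact ⟨dvd_trans (Nat.dvd_lcm_left _ _) h, dvd_trans (Nat.dvd_lcm_right _ _) h⟩
    rw [this]
    exact ncard_dvd_val n l hn hlpos hln
  -- counting
  have hfin : C.Finite := Set.toFinite C
  set CF : Finset (ZMod n) := hfin.toFinset with hCFdef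
  have hCFcoe : ↑CF = C := Set.Finite.coe_toFinset hfin
  have hmapsto : ∀ j ∈ CF, F j ∈ CF.image F := fun j hj => Finset.mem_image_of_mem F hj
  have hsum := Finset.card_eq_sum_card_fiberwise hmapsto
  have hfibcard : ∀ x ∈ CF.image F, (CF.filter fun j => F j = x).card = n / l := by
    intro x hx
    obtain ⟨j, hj, rfl⟩ := Finset.mem_image.mp hx
    have hjC : j ∈ C := (Set.Finite.mem_toFinset hfin).mp hj
    have hcoe : ↑(CF.filter fun j' => F j' = F j) = ((fun k => j + k) '' K) := by
      rw [← hfiber j hjC]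
      ext y
      simp only [Finset.coe_filter, Set.mem_setOf_eq, Set.Finite.mem_toFinset hfin, hCFdef]
    have hcard := congrArg Set.ncard hcoe
    rw [Set.ncard_coe_finset] at hcard
    rw [hcard, Set.ncard_image_of_injective _ (add_right_injective j), hKcard]
  have himcard : (CF.image F).card = b1 := by
    have hcoe : ↑(CF.image F) = Tset := by
      rw [Finset.coe_image, hCFcoe, himage]
    have hcard := congrArg Set.ncard hcoe
    rw [Set.ncard_coe_finset, hTcard] at hcard
    exact hcard
  have hCcount : C.ncard = b1 * (n / l) := by
    rw [Set.ncard_eq_toFinset_card C hfin, ← hCFdef, hsum,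
      Finset.sum_congr rfl hfibcard, Finset.sum_const, himcard, smul_eq_mul]
  -- final arithmetic
  set g : ℕ := Nat.gcd a2 (a1 * b1) with hgdef
  set L : ℕ := Nat.gcd (a1 * b1) (a2 * b2) with hLdef
  have hLpos : 0 < L := Nat.gcd_pos_of_pos_left _ (mul_pos ha1 hb1)
  have h4 : n * L = (a1 * b1) * (a2 * b2) := by
    rw [hlcm, hLdef, mul_comm]
    exact Nat.gcd_mul_lcm _ _
  have h5 : g * l = (a1 * b1) * a2 := by
    rw [hgdef, hldef, Nat.gcd_comm]
    exact Nat.gcd_mul_lcm _ _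
  have heq : b1 * b2 * g = b1 * (n / l) * L := by
    apply Nat.eq_of_mul_eq_mul_right hlpos
    have hnl : n / l * l = n := Nat.div_mul_cancel hln
    calc b1 * b2 * g * l = b1 * b2 * (g * l) := by ring
      _ = b1 * b2 * ((a1 * b1) * a2) := by rw [h5]
      _ = b1 * ((a1 * b1) * (a2 * b2)) := by ring
      _ = b1 * (n * L) := by rw [h4]
      _ = b1 * (n / l * l) * L := by rw [hnl]; ring
      _ = b1 * (n / l) * L * l := by ring
  rw [hCcount]
  exact (Nat.div_eq_of_eq_mul_left hLpos heq).symm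

/-- In a 2-paired circulant with `n = lcm(a₁b₁, a₂b₂)`, every maximal clique
that is an `a₁`-clique has size `b₁b₂ · gcd(a₂, a₁b₁) / gcd(a₁b₁, a₂b₂)`, and every maximal
clique that is an `a₂`-clique has size `b₁b₂ · gcd(a₁, a₂b₂) / gcd(a₁b₁, a₂b₂)`. -/
theorem stmt_12 (n a1 b1 a2 b2 : ℕ) (hn : 0 < n)
    (ha1 : 0 < a1) (hb1 : 0 < b1) (ha2 : 0 < a2) (hb2 : 0 < b2)
    (h1 : a1 * b1 ∣ n) (h2 : a2 * b2 ∣ n)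
    (hlcm : n = Nat.lcm (a1 * b1) (a2 * b2))
    (C : Set (ZMod n))
    (hC : Maximal (circulant n (pairedD n a1 b1 ∪ pairedD n a2 b2)).IsClique C) :
    ((∀ i ∈ C, ∀ j ∈ C, i.val ≡ j.val [MOD a1]) →
      C.ncard = b1 * b2 * Nat.gcd a2 (a1 * b1) / Nat.gcd (a1 * b1) (a2 * b2)) ∧
    ((∀ i ∈ C, ∀ j ∈ C, i.val ≡ j.val [MOD a2]) →
      C.ncard = b1 * b2 * Nat.gcd a1 (a2 * b2) / Nat.gcd (a1 * b1) (a2 * b2)) := by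
  constructor
  · intro hmod
    exact key n a1 b1 a2 b2 hn ha1 hb1 ha2 hb2 h1 h2 hlcm C hC hmod
  · intro hmod
    have hcomm : pairedD n a1 b1 ∪ pairedD n a2 b2 = pairedD n a2 b2 ∪ pairedD n a1 b1 :=
      Finset.union_comm _ _
    rw [hcomm] at hC
    have hlcm' : n = Nat.lcm (a2 * b2) (a1 * b1) := by rw [hlcm, Nat.lcm_comm]
    have h := key n a2 b2 a1 b1 hn ha2 hb2 ha1 hb1 h2 h1 hlcm' C hC hmod
    rw [h, Nat.gcd_comm (a2 * b2) (a1 * b1), mul_comm b2 b1]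
end

section
/- Let G = C(n; a_1,b_1; a_2,b_2) be a 2-paired circulant with n = lcm(a_1·b_1, a_2·b_2). Then every inclusion-maximal stable set S of G satisfies |S| ≤ a_1·a_2. -/
open SimpleGraph Finset

/-- In a 2-paired circulant with `n = lcm(a₁b₁, a₂b₂)`, every maximal stable
set `S` satisfies `|S| ≤ a₁a₂`. -/
theorem stmt_14 (n a1 b1 a2 b2 : ℕ) (hn : 0 < n)
    (ha1 : 0 < a1) (hb1 : 0 < b1) (ha2 : 0 < a2) (hb2 : 0 < b2)
    (h1 : a1 * b1 ∣ n) (h2 : a2 * b2 ∣ n)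
    (hlcm : n = Nat.lcm (a1 * b1) (a2 * b2))
    (S : Set (ZMod n))
    (hS : Maximal (circulant n (pairedD n a1 b1 ∪ pairedD n a2 b2))ᶜ.IsClique S) :
    S.ncard ≤ a1 * a2 := by
  haveI : NeZero n := ⟨hn.ne'⟩
  haveI : NeZero a1 := ⟨ha1.ne'⟩
  haveI : NeZero a2 := ⟨ha2.ne'⟩
  set f : ZMod n → ZMod a1 × ZMod a2 := fun x =>
    (ZMod.castHom (dvd_trans (dvd_mul_right a1 b1) h1) (ZMod a1) x,
     ZMod.castHom (dvd_trans (dvd_mul_right a2 b2) h2) (ZMod a2) x) with hf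
  have hinj : Set.InjOn f S := by
    intro x hx y hy hxy
    by_contra hne
    have hadj := hS.1 hx hy hne
    rw [SimpleGraph.compl_adj] at hadj
    have hnadj := hadj.2
    set d := (x - y).val with hd
    have hdvd1 : a1 ∣ d := by
      have : (d : ZMod a1) = 0 := by
        have : ZMod.castHom (dvd_trans (dvd_mul_right a1 b1) h1) (ZMod a1) (x - y) = 0 := by
          have := congrArg Prod.fst hxy
          simp only [hf] at this
          rw [map_sub, this, sub_self]
        rw [← ZMod.natCast_zmod_val (x - y), map_natCast] at this; exact hd ▸ this
      exact (ZMod.natCast_eq_zero_iff d a1).mp this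
    have hdvd2 : a2 ∣ d := by
      have : (d : ZMod a2) = 0 := by
        have : ZMod.castHom (dvd_trans (dvd_mul_right a2 b2) h2) (ZMod a2) (x - y) = 0 := by
          have := congrArg Prod.snd hxy
          simp only [hf] at this
          rw [map_sub, this, sub_self]
        rw [← ZMod.natCast_zmod_val (x - y), map_natCast] at this; exact hd ▸ this
      exact (ZMod.natCast_eq_zero_iff d a2).mp this
    have hdne : d ≠ 0 := by
      simp only [hd, ne_eq, ZMod.val_eq_zero, sub_eq_zero]
      exact hne
    have hdlt : d < n := ZMod.val_lt _
    have hdIcc : d ∈ Finset.Icc 1 (n - 1) :=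
      Finset.mem_Icc.mpr ⟨Nat.one_le_iff_ne_zero.mpr hdne, Nat.le_sub_one_of_lt hdlt⟩
    have hdnot : d ∉ pairedD n a1 b1 ∪ pairedD n a2 b2 := by
      intro hmem
      exact hnadj (SimpleGraph.fromRel_adj .. |>.mpr ⟨hne, Or.inl hmem⟩)
    have hb1dvd : a1 * b1 ∣ d := by
      by_contra hc
      exact hdnot (Finset.mem_union_left _ (Finset.mem_filter.mpr ⟨hdIcc, hdvd1, hc⟩))
    have hb2dvd : a2 * b2 ∣ d := by
      by_contra hc
      exact hdnot (Finset.mem_union_right _ (Finset.mem_filter.mpr ⟨hdIcc, hdvd2, hc⟩))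
    have : n ∣ d := hlcm ▸ Nat.lcm_dvd hb1dvd hb2dvd
    exact absurd (Nat.eq_zero_of_dvd_of_lt this hdlt) hdne
  calc S.ncard = (f '' S).ncard := (Set.ncard_image_of_injOn hinj).symm
    _ ≤ (Set.univ : Set (ZMod a1 × ZMod a2)).ncard :=
        Set.ncard_le_ncard (Set.subset_univ _) Set.finite_univ
    _ = a1 * a2 := by rw [Set.ncard_univ, Nat.card_prod, Nat.card_zmod, Nat.card_zmod]
end

section
/- Let G = C(n; a_1,b_1; a_2,b_2) be a 2-paired circulant with n = lcm(a_1·b_1, a_2·b_2). If gcd(a_1·b_1, a_2·b_2) = 1, then every inclusion-maximal stable set S of G satisfies |S| = a_1·a_2. -/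
open SimpleGraph Finset

/-- In a 2-paired circulant with `n = lcm(a₁b₁, a₂b₂)` and
`gcd(a₁b₁, a₂b₂) = 1`, every maximal stable set `S` satisfies `|S| = a₁a₂`. -/
theorem stmt_15 (n a1 b1 a2 b2 : ℕ) (hn : 0 < n)
    (ha1 : 0 < a1) (hb1 : 0 < b1) (ha2 : 0 < a2) (hb2 : 0 < b2)
    (h1 : a1 * b1 ∣ n) (h2 : a2 * b2 ∣ n)
    (hlcm : n = Nat.lcm (a1 * b1) (a2 * b2))
    (hgcd : Nat.gcd (a1 * b1) (a2 * b2) = 1)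
    (S : Set (ZMod n))
    (hS : Maximal (circulant n (pairedD n a1 b1 ∪ pairedD n a2 b2))ᶜ.IsClique S) :
    S.ncard = a1 * a2 := by
  classical
  have hm1 : 0 < a1 * b1 := Nat.mul_pos ha1 hb1
  have hm2 : 0 < a2 * b2 := Nat.mul_pos ha2 hb2
  have hco : Nat.Coprime (a1 * b1) (a2 * b2) := hgcd
  have hnmul : n = a1 * b1 * (a2 * b2) := by
    rw [hlcm, Nat.Coprime.lcm_eq_mul hco]
  haveI : NeZero n := ⟨hn.ne'⟩
  haveI : NeZero a1 := ⟨ha1.ne'⟩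
  haveI : NeZero a2 := ⟨ha2.ne'⟩
  haveI : NeZero (a1 * b1) := ⟨hm1.ne'⟩
  haveI : NeZero (a2 * b2) := ⟨hm2.ne'⟩
  have ha1n : a1 ∣ n := (dvd_mul_right a1 b1).trans h1
  have ha2n : a2 ∣ n := (dvd_mul_right a2 b2).trans h2
  -- divisibility of differences via casts
  have hsub : ∀ (m : ℕ) (hm : m ∣ n) (x y : ZMod n),
      (m ∣ (x - y).val ↔ (ZMod.cast x : ZMod m) = ZMod.cast y) := by
    intro m hm x y
    have hkey : ((x - y).val : ZMod m) = ZMod.castHom hm (ZMod m) x - ZMod.castHom hm (ZMod m) y := by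
      rw [ZMod.natCast_val, ← map_sub, ZMod.castHom_apply]
    rw [← ZMod.natCast_eq_zero_iff, hkey, sub_eq_zero, ZMod.castHom_apply,
      ZMod.castHom_apply]
  have hzero : ∀ z : ZMod n, a1 * b1 ∣ z.val → a2 * b2 ∣ z.val → z = 0 := by
    intro z hz1 hz2
    have hd : n ∣ z.val := by
      have h := Nat.Coprime.mul_dvd_of_dvd_of_dvd hco hz1 hz2
      rwa [← hnmul] at h
    have hv : z.val = 0 := Nat.eq_zero_of_dvd_of_lt hd (ZMod.val_lt z)
    exact (ZMod.val_eq_zero z).mp hv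
  -- composition of casts
  have hcomp1 : ∀ x : ZMod n,
      (ZMod.cast (ZMod.cast x : ZMod (a1 * b1)) : ZMod a1) = (ZMod.cast x : ZMod a1) := by
    intro x
    have h := RingHom.congr_fun (ZMod.castHom_comp (dvd_mul_right a1 b1) h1) x
    rwa [RingHom.comp_apply, ZMod.castHom_apply, ZMod.castHom_apply, ZMod.castHom_apply] at h
  have hcomp2 : ∀ x : ZMod n,
      (ZMod.cast (ZMod.cast x : ZMod (a2 * b2)) : ZMod a2) = (ZMod.cast x : ZMod a2) := by
    intro x
    have h := RingHom.congr_fun (ZMod.castHom_comp (dvd_mul_right a2 b2) h2) x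
    rwa [RingHom.comp_apply, ZMod.castHom_apply, ZMod.castHom_apply, ZMod.castHom_apply] at h
  -- membership characterization
  have hmemiff : ∀ x y : ZMod n, x ≠ y →
      ((x - y).val ∈ pairedD n a1 b1 ∪ pairedD n a2 b2 ↔
        ¬(((ZMod.cast x : ZMod a1) = ZMod.cast y → (ZMod.cast x : ZMod (a1 * b1)) = ZMod.cast y) ∧
          ((ZMod.cast x : ZMod a2) = ZMod.cast y → (ZMod.cast x : ZMod (a2 * b2)) = ZMod.cast y))) := by
    intro x y hxy
    have hz : x - y ≠ 0 := sub_ne_zero.mpr hxy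
    have hv1 : 1 ≤ (x - y).val :=
      Nat.one_le_iff_ne_zero.mpr (fun h => hz ((ZMod.val_eq_zero _).mp h))
    have hv2 : (x - y).val ≤ n - 1 := Nat.le_sub_one_of_lt (ZMod.val_lt _)
    simp only [pairedD, Finset.mem_union, Finset.mem_filter, Finset.mem_Icc,
      hsub a1 ha1n x y, hsub (a1 * b1) h1 x y, hsub a2 ha2n x y, hsub (a2 * b2) h2 x y]
    constructor
    · rintro (⟨_, hA, hB⟩ | ⟨_, hA, hB⟩) hC
      · exact hB (hC.1 hA)
      · exact hB (hC.2 hA)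
    · intro hC
      by_cases hA : (ZMod.cast x : ZMod a1) = ZMod.cast y ∧ ¬(ZMod.cast x : ZMod (a1 * b1)) = ZMod.cast y
      · exact Or.inl ⟨⟨hv1, hv2⟩, hA.1, hA.2⟩
      · refine Or.inr ⟨⟨hv1, hv2⟩, ?_⟩
        by_contra hD
        apply hC
        constructor
        · intro h; by_contra hB; exact hA ⟨h, hB⟩
        · intro h; by_contra hB; exact hD ⟨h, hB⟩
  -- nonadjacency characterization
  have hnadj : ∀ x y : ZMod n, x ≠ y →
      (¬ (circulant n (pairedD n a1 b1 ∪ pairedD n a2 b2)).Adj x y ↔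
        (((ZMod.cast x : ZMod a1) = ZMod.cast y → (ZMod.cast x : ZMod (a1 * b1)) = ZMod.cast y) ∧
         ((ZMod.cast x : ZMod a2) = ZMod.cast y → (ZMod.cast x : ZMod (a2 * b2)) = ZMod.cast y))) := by
    intro x y hxy
    simp only [circulant, SimpleGraph.fromRel_adj]
    constructor
    · intro h
      by_contra hC
      exact h ⟨hxy, Or.inl ((hmemiff x y hxy).mpr hC)⟩
    · rintro hC ⟨-, hm | hm⟩
      · exact (hmemiff x y hxy).mp hm hC
      · refine (hmemiff y x hxy.symm).mp hm ⟨?_, ?_⟩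
        · intro h; exact (hC.1 h.symm).symm
        · intro h; exact (hC.2 h.symm).symm
  -- stability in cast form
  have hstab : ∀ s ∈ S, ∀ t ∈ S,
      (((ZMod.cast s : ZMod a1) = ZMod.cast t → (ZMod.cast s : ZMod (a1 * b1)) = ZMod.cast t) ∧
       ((ZMod.cast s : ZMod a2) = ZMod.cast t → (ZMod.cast s : ZMod (a2 * b2)) = ZMod.cast t)) := by
    intro s hs t ht
    by_cases hst : s = t
    · subst hst; exact ⟨fun _ => rfl, fun _ => rfl⟩
    · have h := hS.1 hs ht hst
      rw [SimpleGraph.compl_adj] at h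
      exact (hnadj s t hst).mp h.2
  -- surjectivity of the CRT-style map
  have hΦ : ∀ (r1 : ZMod (a1 * b1)) (r2 : ZMod (a2 * b2)), ∃ z : ZMod n,
      (ZMod.cast z : ZMod (a1 * b1)) = r1 ∧ (ZMod.cast z : ZMod (a2 * b2)) = r2 := by
    have hbij : Function.Bijective (fun z : ZMod n =>
        ((ZMod.cast z : ZMod (a1 * b1)), (ZMod.cast z : ZMod (a2 * b2)))) := by
      rw [Fintype.bijective_iff_injective_and_card]
      constructor
      · intro x y hxy
        rw [Prod.mk.injEq] at hxy
        have := hzero (x - y) ((hsub _ h1 x y).mpr hxy.1) ((hsub _ h2 x y).mpr hxy.2)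
        exact sub_eq_zero.mp this
      · rw [Fintype.card_prod, ZMod.card, ZMod.card, ZMod.card, ← hnmul]
    intro r1 r2
    obtain ⟨z, hz⟩ := hbij.2 (r1, r2)
    rw [Prod.mk.injEq] at hz
    exact ⟨z, hz.1, hz.2⟩
  -- choosing a compatible residue in each coordinate
  have hget1 : ∀ u : ZMod a1, ∃ r1 : ZMod (a1 * b1),
      (ZMod.cast r1 : ZMod a1) = u ∧
      ∀ s ∈ S, (ZMod.cast s : ZMod a1) = u → (ZMod.cast s : ZMod (a1 * b1)) = r1 := by
    intro u
    by_cases hex : ∃ s ∈ S, (ZMod.cast s : ZMod a1) = u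
    · obtain ⟨s1, hs1S, hs1⟩ := hex
      refine ⟨ZMod.cast s1, by rw [hcomp1 s1, hs1], ?_⟩
      intro s hsS hsu
      exact (hstab s hsS s1 hs1S).1 (by rw [hsu, hs1])
    · refine ⟨(u.val : ZMod (a1 * b1)), ?_, ?_⟩
      · calc (ZMod.cast ((u.val : ℕ) : ZMod (a1 * b1)) : ZMod a1)
            = ZMod.castHom (dvd_mul_right a1 b1) (ZMod a1) ((u.val : ℕ) : ZMod (a1 * b1)) :=
              (ZMod.castHom_apply _).symm
          _ = ((u.val : ℕ) : ZMod a1) := map_natCast _ _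
          _ = u := by rw [ZMod.natCast_val, ZMod.cast_id]
      · intro s hsS hsu; exact absurd ⟨s, hsS, hsu⟩ hex
  have hget2 : ∀ v : ZMod a2, ∃ r2 : ZMod (a2 * b2),
      (ZMod.cast r2 : ZMod a2) = v ∧
      ∀ s ∈ S, (ZMod.cast s : ZMod a2) = v → (ZMod.cast s : ZMod (a2 * b2)) = r2 := by
    intro v
    by_cases hex : ∃ s ∈ S, (ZMod.cast s : ZMod a2) = v
    · obtain ⟨s1, hs1S, hs1⟩ := hex
      refine ⟨ZMod.cast s1, by rw [hcomp2 s1, hs1], ?_⟩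
      intro s hsS hsv
      exact (hstab s hsS s1 hs1S).2 (by rw [hsv, hs1])
    · refine ⟨(v.val : ZMod (a2 * b2)), ?_, ?_⟩
      · calc (ZMod.cast ((v.val : ℕ) : ZMod (a2 * b2)) : ZMod a2)
            = ZMod.castHom (dvd_mul_right a2 b2) (ZMod a2) ((v.val : ℕ) : ZMod (a2 * b2)) :=
              (ZMod.castHom_apply _).symm
          _ = ((v.val : ℕ) : ZMod a2) := map_natCast _ _
          _ = v := by rw [ZMod.natCast_val, ZMod.cast_id]
      · intro s hsS hsv; exact absurd ⟨s, hsS, hsv⟩ hex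
  -- surjectivity onto ZMod a1 × ZMod a2 via maximality
  have hsurj : ∀ (u : ZMod a1) (v : ZMod a2), ∃ s ∈ S,
      (ZMod.cast s : ZMod a1) = u ∧ (ZMod.cast s : ZMod a2) = v := by
    intro u v
    by_contra hex
    obtain ⟨r1, hr1u, hr1S⟩ := hget1 u
    obtain ⟨r2, hr2v, hr2S⟩ := hget2 v
    obtain ⟨z, hz1, hz2⟩ := hΦ r1 r2
    have hzu : (ZMod.cast z : ZMod a1) = u := by rw [← hcomp1 z, hz1, hr1u]
    have hzv : (ZMod.cast z : ZMod a2) = v := by rw [← hcomp2 z, hz2, hr2v]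
    have hzS : z ∉ S := fun hz => hex ⟨z, hz, hzu, hzv⟩
    have hnadjz : ∀ s ∈ S, s ≠ z →
        ¬ (circulant n (pairedD n a1 b1 ∪ pairedD n a2 b2)).Adj z s := by
      intro s hsS hsz
      rw [hnadj z s (Ne.symm hsz)]
      constructor
      · intro h
        have hsu : (ZMod.cast s : ZMod a1) = u := by rw [← h, hzu]
        rw [hz1, hr1S s hsS hsu]
      · intro h
        have hsv : (ZMod.cast s : ZMod a2) = v := by rw [← h, hzv]
        rw [hz2, hr2S s hsS hsv]
    have hclique :
        (circulant n (pairedD n a1 b1 ∪ pairedD n a2 b2))ᶜ.IsClique (insert z S) := by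
      intro x hx y hy hxy
      rcases hx with rfl | hx
      · rcases hy with rfl | hy
        · exact absurd rfl hxy
        · exact (SimpleGraph.compl_adj _ _ _).mpr ⟨hxy, hnadjz y hy (Ne.symm hxy)⟩
      · rcases hy with rfl | hy
        · refine (SimpleGraph.compl_adj _ _ _).mpr ⟨hxy, fun h => ?_⟩
          exact hnadjz x hx hxy h.symm
        · exact hS.1 hx hy hxy
    exact hzS (hS.2 hclique (Set.subset_insert z S) (Set.mem_insert z S))
  -- injectivity of the residue map on S
  have hinj : Set.InjOn
      (fun x : ZMod n => ((ZMod.cast x : ZMod a1), (ZMod.cast x : ZMod a2))) S := by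
    intro s hs t ht hst
    rw [Prod.mk.injEq] at hst
    have hm1' := (hstab s hs t ht).1 hst.1
    have hm2' := (hstab s hs t ht).2 hst.2
    have := hzero (s - t) ((hsub (a1 * b1) h1 s t).mpr hm1') ((hsub (a2 * b2) h2 s t).mpr hm2')
    exact sub_eq_zero.mp this
  have himg : (fun x : ZMod n => ((ZMod.cast x : ZMod a1), (ZMod.cast x : ZMod a2))) '' S
      = Set.univ := by
    ext ⟨u, v⟩
    simp only [Set.mem_image, Set.mem_univ, iff_true]
    obtain ⟨s, hs, hsu, hsv⟩ := hsurj u v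
    exact ⟨s, hs, by rw [hsu, hsv]⟩
  calc S.ncard
      = ((fun x : ZMod n => ((ZMod.cast x : ZMod a1), (ZMod.cast x : ZMod a2))) '' S).ncard :=
        (Set.ncard_image_of_injOn hinj).symm
    _ = (Set.univ : Set (ZMod a1 × ZMod a2)).ncard := by rw [himg]
    _ = Nat.card (ZMod a1 × ZMod a2) := Set.ncard_univ _
    _ = a1 * a2 := by rw [Nat.card_prod, Nat.card_zmod, Nat.card_zmod]
end

section
/- Let G = C(n; a_1,b_1; a_2,b_2) be a 2-paired circulant with n = lcm(a_1·b_1, a_2·b_2). Suppose that a_1 > 1, a_2 > 1, gcd(a_1, a_2·b_2) = 1, gcd(a_2, a_1·b_1) = 1, and gcd(b_1, b_2) > 1. Then G has a stable set S' of size 3 such that every stable set S of G with S' ⊆ S satisfies |S| < a_1·a_2. -/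
open SimpleGraph Finset

lemma aux_not_mem_pairedD {n a b d : ℕ} (hd1 : 1 ≤ d) (hd2 : d ≤ n - 1) :
    d ∉ pairedD n a b ↔ (¬ a ∣ d ∨ a * b ∣ d) := by
  simp only [pairedD, Finset.mem_filter, Finset.mem_Icc]
  tauto

lemma aux_dvd_iff {n m : ℕ} [NeZero n] [NeZero m] (hm : m ∣ n) (u v : ZMod n) :
    m ∣ (u - v).val ↔ ZMod.castHom hm (ZMod m) u = ZMod.castHom hm (ZMod m) v := by
  rw [← sub_eq_zero, ← map_sub, ZMod.castHom_apply, ← ZMod.natCast_val,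
    ZMod.natCast_eq_zero_iff]

lemma key_lemma (n a1 b1 a2 b2 : ℕ) (hn : 0 < n)
    (ha1 : 1 < a1) (hb1 : 0 < b1) (ha2 : 2 < a2) (hb2 : 0 < b2)
    (h1 : a1 * b1 ∣ n) (h2 : a2 * b2 ∣ n)
    (hlcm : ∀ d : ℕ, a1 * b1 ∣ d → a2 * b2 ∣ d → n ∣ d)
    (hg1 : Nat.gcd a1 (a2 * b2) = 1) (hg2 : Nat.gcd a2 (a1 * b1) = 1)
    (hg3 : 1 < Nat.gcd b1 b2) :
    ∃ S' : Set (ZMod n),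
      (circulant n (pairedD n a1 b1 ∪ pairedD n a2 b2))ᶜ.IsClique S' ∧ S'.ncard = 3 ∧
      ∀ S : Set (ZMod n),
        (circulant n (pairedD n a1 b1 ∪ pairedD n a2 b2))ᶜ.IsClique S → S' ⊆ S →
        S.ncard < a1 * a2 := by
  haveI : NeZero n := ⟨hn.ne'⟩
  set g := Nat.gcd b1 b2 with hgdef
  have hb1g : g ∣ b1 := Nat.gcd_dvd_left _ _
  have hb2g : g ∣ b2 := Nat.gcd_dvd_right _ _
  have hda1 : a1 ∣ n := (dvd_mul_right a1 b1).trans h1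
  have hda2 : a2 ∣ n := (dvd_mul_right a2 b2).trans h2
  have hgb1 : g ∣ a1 * b1 := hb1g.trans (dvd_mul_left b1 a1)
  have hgb2 : g ∣ a2 * b2 := hb2g.trans (dvd_mul_left b2 a2)
  have hdg : g ∣ n := hgb1.trans h1
  haveI : NeZero a1 := ⟨by omega⟩
  haveI : NeZero a2 := ⟨by omega⟩
  haveI : NeZero g := ⟨by omega⟩
  haveI : NeZero (a1 * b1) := ⟨Nat.mul_ne_zero (by omega) (by omega)⟩
  haveI : NeZero (a2 * b2) := ⟨Nat.mul_ne_zero (by omega) (by omega)⟩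
  -- coprimality facts
  have hc12 : Nat.Coprime a1 a2 := Nat.Coprime.coprime_dvd_right (dvd_mul_right a2 b2) hg1
  have hc1g : Nat.Coprime a1 g :=
    Nat.Coprime.coprime_dvd_right (hb2g.trans (dvd_mul_left b2 a2)) hg1
  have hc2g : Nat.Coprime a2 g :=
    Nat.Coprime.coprime_dvd_right (hb1g.trans (dvd_mul_left b1 a1)) hg2
  have hcA : Nat.Coprime (a1 * b1) a2 := Nat.Coprime.symm hg2
  -- construct the witnesses
  obtain ⟨kx, hkx1, hkx2⟩ := Nat.chineseRemainder hcA 0 1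
  obtain ⟨c, hc1, hc2⟩ := Nat.chineseRemainder hc12 1 2
  obtain ⟨ky, hky12, hkyg⟩ := Nat.chineseRemainder (Nat.Coprime.mul hc1g hc2g) c 1
  have hky1 : ky ≡ 1 [MOD a1] := (hky12.of_dvd (dvd_mul_right a1 a2)).trans hc1
  have hky2 : ky ≡ 2 [MOD a2] := (hky12.of_dvd (dvd_mul_left a2 a1)).trans hc2
  set X : ZMod n := (kx : ZMod n) with hX
  set Y : ZMod n := (ky : ZMod n) with hY
  -- evaluation of cast homs
  have ev : ∀ (m : ℕ) (hm : m ∣ n) (k r : ℕ), k ≡ r [MOD m] →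
      ZMod.castHom hm (ZMod m) (k : ZMod n) = (r : ZMod m) := by
    intro m hm k r h
    rw [map_natCast]
    exact (ZMod.natCast_eq_natCast_iff _ _ _).mpr h
  have hXab : ZMod.castHom h1 (ZMod (a1 * b1)) X = 0 := by
    have := ev _ h1 kx 0 hkx1; rwa [Nat.cast_zero] at this
  have hXa1 : ZMod.castHom hda1 (ZMod a1) X = 0 := by
    have := ev _ hda1 kx 0 (Nat.ModEq.of_dvd (dvd_mul_right a1 b1) hkx1)
    rwa [Nat.cast_zero] at this
  have hXa2 : ZMod.castHom hda2 (ZMod a2) X = ((1 : ℕ) : ZMod a2) := ev _ hda2 kx 1 hkx2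
  have hXg : ZMod.castHom hdg (ZMod g) X = 0 := by
    have := ev _ hdg kx 0 (Nat.ModEq.of_dvd hgb1 hkx1); rwa [Nat.cast_zero] at this
  have hYa1 : ZMod.castHom hda1 (ZMod a1) Y = ((1 : ℕ) : ZMod a1) := ev _ hda1 ky 1 hky1
  have hYa2 : ZMod.castHom hda2 (ZMod a2) Y = ((2 : ℕ) : ZMod a2) := ev _ hda2 ky 2 hky2
  have hYg : ZMod.castHom hdg (ZMod g) Y = ((1 : ℕ) : ZMod g) := ev _ hdg ky 1 hkyg
  -- nonzero facts
  have honen : ∀ (m : ℕ), 1 < m → ((1 : ℕ) : ZMod m) ≠ 0 := by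
    intro m hm
    rw [Ne, ZMod.natCast_eq_zero_iff]
    intro h
    have := Nat.le_of_dvd one_pos h
    omega
  have hone1 := honen a1 ha1
  have hone2 := honen a2 (by omega)
  have honeg := honen g hg3
  have htwo2 : ((2 : ℕ) : ZMod a2) ≠ 0 := by
    rw [Ne, ZMod.natCast_eq_zero_iff]
    intro h
    have := Nat.le_of_dvd (by norm_num) h
    omega
  have hone_two : ((1 : ℕ) : ZMod a2) ≠ ((2 : ℕ) : ZMod a2) := by
    rw [Ne, ZMod.natCast_eq_natCast_iff]
    intro h
    have h' := (Nat.modEq_iff_dvd' (by norm_num)).mp h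
    have := Nat.le_of_dvd (by norm_num) h'
    omega
  set D : Finset ℕ := pairedD n a1 b1 ∪ pairedD n a2 b2 with hD
  -- symmetry of divisibility of differences
  have symm_dvd : ∀ (m : ℕ) (hm : m ∣ n) [NeZero m] (u v : ZMod n),
      (m ∣ (u - v).val ↔ m ∣ (v - u).val) := by
    intro m hm _ u v
    rw [aux_dvd_iff hm, aux_dvd_iff hm, eq_comm]
  have hval : ∀ w : ZMod n, w ≠ 0 → (1 ≤ w.val ∧ w.val ≤ n - 1) := by
    intro w hw
    have h1' : w.val ≠ 0 := fun h => hw ((ZMod.val_eq_zero w).mp h)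
    have h2' : w.val < n := ZMod.val_lt w
    omega
  have key1 : ∀ w : ZMod n, w ≠ 0 → (w.val ∉ D ↔
      ((¬ a1 ∣ w.val ∨ a1 * b1 ∣ w.val) ∧ (¬ a2 ∣ w.val ∨ a2 * b2 ∣ w.val))) := by
    intro w hw
    obtain ⟨e1, e2⟩ := hval w hw
    rw [hD, Finset.mem_union, not_or, aux_not_mem_pairedD e1 e2, aux_not_mem_pairedD e1 e2]
  -- characterization of non-adjacency
  have stab : ∀ u v : ZMod n, u ≠ v →
      (¬ (circulant n D).Adj u v ↔
        ((¬ a1 ∣ (u - v).val ∨ a1 * b1 ∣ (u - v).val) ∧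
         (¬ a2 ∣ (u - v).val ∨ a2 * b2 ∣ (u - v).val))) := by
    intro u v huv
    have huv' : u - v ≠ 0 := sub_ne_zero.mpr huv
    have hvu' : v - u ≠ 0 := sub_ne_zero.mpr (Ne.symm huv)
    have cond_symm : ((¬ a1 ∣ (v - u).val ∨ a1 * b1 ∣ (v - u).val) ∧
         (¬ a2 ∣ (v - u).val ∨ a2 * b2 ∣ (v - u).val)) ↔
        ((¬ a1 ∣ (u - v).val ∨ a1 * b1 ∣ (u - v).val) ∧
         (¬ a2 ∣ (u - v).val ∨ a2 * b2 ∣ (u - v).val)) := by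
      rw [symm_dvd a1 hda1 v u, symm_dvd (a1 * b1) h1 v u, symm_dvd a2 hda2 v u,
        symm_dvd (a2 * b2) h2 v u]
    unfold circulant
    rw [SimpleGraph.fromRel_adj]
    constructor
    · intro h
      exact (key1 _ huv').mp (fun hmem => h ⟨huv, Or.inl hmem⟩)
    · rintro hcond ⟨-, hm | hm⟩
      · exact (key1 _ huv').mpr hcond hm
      · exact (key1 _ hvu').mpr (cond_symm.mpr hcond) hm
  -- helpers for (non)divisibility from castHom values
  have nd : ∀ (m : ℕ) (hm : m ∣ n) [NeZero m] (u v : ZMod n),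
      ZMod.castHom hm (ZMod m) u ≠ ZMod.castHom hm (ZMod m) v → ¬ m ∣ (u - v).val := by
    intro m hm _ u v h hd
    exact h ((aux_dvd_iff hm u v).mp hd)
  have pd : ∀ (m : ℕ) (hm : m ∣ n) [NeZero m] (u v : ZMod n),
      ZMod.castHom hm (ZMod m) u = ZMod.castHom hm (ZMod m) v → m ∣ (u - v).val :=
    fun m hm _ u v h => (aux_dvd_iff hm u v).mpr h
  -- distinctness
  have hne0X : (0 : ZMod n) ≠ X := by
    intro h
    have hx := hXa2
    rw [← h, map_zero] at hx
    exact hone2 hx.symm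
  have hne0Y : (0 : ZMod n) ≠ Y := by
    intro h
    have hy := hYa1
    rw [← h, map_zero] at hy
    exact hone1 hy.symm
  have hneXY : X ≠ Y := by
    intro h
    exact honeg (by rw [← hYg, ← h, hXg])
  -- non-adjacency of the three pairs
  have nX0 : ¬ (circulant n D).Adj X 0 := (stab X 0 (Ne.symm hne0X)).mpr
    ⟨Or.inr (pd _ h1 X 0 (by rw [hXab, map_zero])),
     Or.inl (nd _ hda2 X 0 (by rw [hXa2, map_zero]; exact hone2))⟩
  have nY0 : ¬ (circulant n D).Adj Y 0 := (stab Y 0 (Ne.symm hne0Y)).mpr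
    ⟨Or.inl (nd _ hda1 Y 0 (by rw [hYa1, map_zero]; exact hone1)),
     Or.inl (nd _ hda2 Y 0 (by rw [hYa2, map_zero]; exact htwo2))⟩
  have nXY : ¬ (circulant n D).Adj X Y := (stab X Y hneXY).mpr
    ⟨Or.inl (nd _ hda1 X Y (by rw [hXa1, hYa1]; exact Ne.symm hone1)),
     Or.inl (nd _ hda2 X Y (by rw [hXa2, hYa2]; exact hone_two))⟩
  have hnadj_symm : ∀ u v : ZMod n, ¬ (circulant n D).Adj u v → ¬ (circulant n D).Adj v u :=
    fun u v h ha => h ha.symm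
  have hclique : (circulant n D)ᶜ.IsClique ({0, X, Y} : Set (ZMod n)) := by
    intro u hu v hv huv
    rw [SimpleGraph.compl_adj]
    refine ⟨huv, ?_⟩
    simp only [Set.mem_insert_iff, Set.mem_singleton_iff] at hu hv
    rcases hu with rfl | rfl | rfl <;> rcases hv with rfl | rfl | rfl <;>
      first
        | exact absurd rfl huv
        | exact nX0
        | exact nY0
        | exact nXY
        | exact hnadj_symm _ _ nX0
        | exact hnadj_symm _ _ nY0
        | exact hnadj_symm _ _ nXY
  refine ⟨{0, X, Y}, hclique, Set.ncard_eq_three.mpr ⟨0, X, Y, hne0X, hne0Y, hneXY, rfl⟩, ?_⟩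
  intro S hS hsub
  have hXS : X ∈ S := hsub (by simp)
  have hYS : Y ∈ S := hsub (by simp)
  set F : ZMod n → ZMod a1 × ZMod a2 :=
    fun z => (ZMod.castHom hda1 (ZMod a1) z, ZMod.castHom hda2 (ZMod a2) z) with hF
  have hSst : ∀ z w : ZMod n, z ∈ S → w ∈ S → z ≠ w →
      ((¬ a1 ∣ (z - w).val ∨ a1 * b1 ∣ (z - w).val) ∧
       (¬ a2 ∣ (z - w).val ∨ a2 * b2 ∣ (z - w).val)) := by
    intro z w hz hw hzw
    exact (stab z w hzw).mp ((SimpleGraph.compl_adj _ _ _).mp (hS hz hw hzw)).2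
  have hinj : Set.InjOn F S := by
    intro z hz w hw hFeq
    by_contra hzw
    have hcond := hSst z w hz hw hzw
    have hd1 : a1 ∣ (z - w).val := (aux_dvd_iff hda1 z w).mpr (congrArg Prod.fst hFeq)
    have hd2 : a2 ∣ (z - w).val := (aux_dvd_iff hda2 z w).mpr (congrArg Prod.snd hFeq)
    have hA : a1 * b1 ∣ (z - w).val := hcond.1.resolve_left (not_not_intro hd1)
    have hB : a2 * b2 ∣ (z - w).val := hcond.2.resolve_left (not_not_intro hd2)
    have hN : n ∣ (z - w).val := hlcm _ hA hB
    exact hzw (sub_eq_zero.mp ((ZMod.val_eq_zero _).mp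
      (Nat.eq_zero_of_dvd_of_lt hN (ZMod.val_lt _))))
  have hmiss : (ZMod.castHom hda1 (ZMod a1) X, ZMod.castHom hda2 (ZMod a2) Y) ∉ F '' S := by
    rintro ⟨z, hz, hzeq⟩
    have hz1 : ZMod.castHom hda1 (ZMod a1) z = ZMod.castHom hda1 (ZMod a1) X :=
      congrArg Prod.fst hzeq
    have hz2 : ZMod.castHom hda2 (ZMod a2) z = ZMod.castHom hda2 (ZMod a2) Y :=
      congrArg Prod.snd hzeq
    by_cases hzX : z = X
    · rw [hzX, hXa2, hYa2] at hz2
      exact hone_two hz2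
    by_cases hzY : z = Y
    · rw [hzY, hYa1, hXa1] at hz1
      exact hone1 hz1
    have c1 := (hSst z X hz hXS hzX).1.resolve_left
      (not_not_intro ((aux_dvd_iff hda1 z X).mpr hz1))
    have c2 := (hSst z Y hz hYS hzY).2.resolve_left
      (not_not_intro ((aux_dvd_iff hda2 z Y).mpr hz2))
    have d1 : g ∣ (z - X).val := hgb1.trans c1
    have d2 : g ∣ (z - Y).val := hgb2.trans c2
    have e1 := (aux_dvd_iff hdg z X).mp d1
    have e2 := (aux_dvd_iff hdg z Y).mp d2
    rw [hXg] at e1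
    rw [hYg] at e2
    exact honeg (by rw [← e2, e1])
  have himg : F '' S ≠ Set.univ := by
    intro h
    apply hmiss
    rw [h]
    trivial
  have hlt : (F '' S).ncard < (Set.univ : Set (ZMod a1 × ZMod a2)).ncard :=
    Set.ncard_lt_ncard (Set.ssubset_univ_iff.mpr himg) Set.finite_univ
  rw [Set.ncard_image_of_injOn hinj] at hlt
  rwa [Set.ncard_univ, Nat.card_prod, Nat.card_zmod, Nat.card_zmod] at hlt

/-- Under the stated gcd conditions, a 2-paired circulant with
`n = lcm(a₁b₁, a₂b₂)` has a stable set `S'` of size 3 such that every stable set containing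
`S'` has size `< a₁a₂`. -/
theorem stmt_16 (n a1 b1 a2 b2 : ℕ) (hn : 0 < n)
    (ha1 : 1 < a1) (hb1 : 0 < b1) (ha2 : 1 < a2) (hb2 : 0 < b2)
    (h1 : a1 * b1 ∣ n) (h2 : a2 * b2 ∣ n)
    (hlcm : n = Nat.lcm (a1 * b1) (a2 * b2))
    (hg1 : Nat.gcd a1 (a2 * b2) = 1) (hg2 : Nat.gcd a2 (a1 * b1) = 1)
    (hg3 : 1 < Nat.gcd b1 b2) :
    ∃ S' : Set (ZMod n),
      (circulant n (pairedD n a1 b1 ∪ pairedD n a2 b2))ᶜ.IsClique S' ∧ S'.ncard = 3 ∧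
      ∀ S : Set (ZMod n),
        (circulant n (pairedD n a1 b1 ∪ pairedD n a2 b2))ᶜ.IsClique S → S' ⊆ S →
        S.ncard < a1 * a2 := by
  have hld : ∀ d : ℕ, a1 * b1 ∣ d → a2 * b2 ∣ d → n ∣ d := by
    intro d hA hB
    rw [hlcm]
    exact Nat.lcm_dvd hA hB
  rcases Nat.lt_or_ge 2 a2 with h | h
  · exact key_lemma n a1 b1 a2 b2 hn ha1 hb1 h hb2 h1 h2 hld hg1 hg2 hg3
  · have ha2' : a2 = 2 := by omega
    have ha1' : 2 < a1 := by
      by_contra h'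
      have e1 : a1 = 2 := by omega
      have hdd : (2 : ℕ) ∣ Nat.gcd a1 (a2 * b2) := by
        apply Nat.dvd_gcd
        · omega
        · rw [ha2']
          exact dvd_mul_right 2 b2
      rw [hg1] at hdd
      omega
    have hld' : ∀ d : ℕ, a2 * b2 ∣ d → a1 * b1 ∣ d → n ∣ d := fun d hA hB => hld d hB hA
    obtain ⟨S', hS1, hS2, hS3⟩ := key_lemma n a2 b2 a1 b1 hn ha2 hb2 ha1' hb1 h2 h1 hld'
      hg2 hg1 (by rwa [Nat.gcd_comm])
    rw [Finset.union_comm] at hS1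
    refine ⟨S', hS1, hS2, ?_⟩
    intro S hc hsub
    rw [Finset.union_comm (pairedD n a1 b1)] at hc
    have hb := hS3 S hc hsub
    rwa [Nat.mul_comm] at hb
end

section
/- Every 1-paired circulant C(n; a, b) is P_4-free; that is, for all positive integers n, a, b with a·b ∣ n, the circulant C_n(D) with D = { d ∈ {1,…,n−1} : a ∣ d and a·b ∤ d } contains no induced subgraph isomorphic to the path on four vertices. -/
open SimpleGraph Finset

/-- Every 1-paired circulant `C(n; a, b)` is `P₄`-free. -/
theorem stmt_17 (n a b : ℕ) (hn : 0 < n) (ha : 0 < a) (hb : 0 < b) (hab : a * b ∣ n) :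
    IsEmpty (SimpleGraph.pathGraph 4 ↪g circulant n (pairedD n a b)) := by
  haveI : NeZero n := ⟨hn.ne'⟩
  have ha' : a ∣ n := (Dvd.intro b rfl).trans hab
  set g := ZMod.castHom ha' (ZMod a) with hg
  set h := ZMod.castHom hab (ZMod (a * b)) with hh
  have hdvd : ∀ (m : ℕ) (hm : m ∣ n) (x y : ZMod n),
      m ∣ (x - y).val ↔ ZMod.castHom hm (ZMod m) x = ZMod.castHom hm (ZMod m) y := by
    intro m hm x y
    have hval : (((x - y).val : ℕ) : ZMod n) = x - y := ZMod.natCast_rightInverse _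
    have : ((((x - y).val : ℕ)) : ZMod m) = ZMod.castHom hm (ZMod m) (x - y) := by
      conv_rhs => rw [← hval]
      rw [map_natCast]
    rw [← ZMod.natCast_eq_zero_iff, this, map_sub, sub_eq_zero]
  have key : ∀ x y : ZMod n,
      (circulant n (pairedD n a b)).Adj x y ↔ (g x = g y ∧ h x ≠ h y) := by
    have mem : ∀ x y : ZMod n, x ≠ y →
        ((x - y).val ∈ pairedD n a b ↔ (g x = g y ∧ h x ≠ h y)) := by
      intro x y hxy
      have hsub : x - y ≠ 0 := sub_ne_zero.mpr hxy
      have h1 : 1 ≤ (x - y).val := ZMod.val_pos.mpr hsub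
      have h2 : (x - y).val ≤ n - 1 := Nat.le_sub_one_of_lt (ZMod.val_lt _)
      simp only [pairedD, Finset.mem_filter, Finset.mem_Icc, h1, h2, true_and,
        hdvd a ha' x y, hdvd (a * b) hab x y]
      exact Iff.rfl
    intro x y
    constructor
    · rintro ⟨hxy, hD | hD⟩
      · exact (mem x y hxy).1 hD
      · have := (mem y x (Ne.symm hxy)).1 hD
        exact ⟨this.1.symm, fun e => this.2 e.symm⟩
    · rintro ⟨hG, hH⟩
      have hxy : x ≠ y := fun e => hH (by rw [e])
      exact ⟨hxy, Or.inl ((mem x y hxy).2 ⟨hG, hH⟩)⟩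
  constructor
  intro f
  have adj : ∀ i j : Fin 4, (SimpleGraph.pathGraph 4).Adj i j ↔
      (g (f i) = g (f j) ∧ h (f i) ≠ h (f j)) := by
    intro i j; rw [← f.map_adj_iff, key]
  have a01 := (adj 0 1).1 (by rw [SimpleGraph.pathGraph_adj]; decide)
  have a12 := (adj 1 2).1 (by rw [SimpleGraph.pathGraph_adj]; decide)
  have a23 := (adj 2 3).1 (by rw [SimpleGraph.pathGraph_adj]; decide)
  have n02 : ¬ (SimpleGraph.pathGraph 4).Adj 0 2 := by rw [SimpleGraph.pathGraph_adj]; decide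
  have n13 : ¬ (SimpleGraph.pathGraph 4).Adj 1 3 := by rw [SimpleGraph.pathGraph_adj]; decide
  have n03 : ¬ (SimpleGraph.pathGraph 4).Adj 0 3 := by rw [SimpleGraph.pathGraph_adj]; decide
  rw [adj 0 2] at n02
  rw [adj 1 3] at n13
  rw [adj 0 3] at n03
  have e02 : h (f 0) = h (f 2) := by
    by_contra hc; exact n02 ⟨a01.1.trans a12.1, hc⟩
  have e13 : h (f 1) = h (f 3) := by
    by_contra hc; exact n13 ⟨a12.1.trans a23.1, hc⟩
  have e03 : h (f 0) = h (f 3) := by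
    by_contra hc; exact n03 ⟨a01.1.trans (a12.1.trans a23.1), hc⟩
  exact a01.2 (e03.trans e13.symm)
end
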